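/- arXiv:1911.07189 — 4 statements merged into one kernel-verified Lean document; each statement's English description precedes it below -/
import Mathlib

section
/- Let p and q be primes with p > q > 3, let α₁, β₁ be nonzero elements of Z_p, and let α₂, β₂ be nonzero elements of Z_q. Suppose there exist an APS(p,α₁,β₁) and an APS(q,α₂,β₂). Then there exists a PPS(Z_{pq}, {0, q·α₁', −q·α₁', p·α₂', −p·α₂'}, {0, q·β₁', −q·β₁', p·β₂', −p·β₂'}), where α₁', β₁' are integer lifts of α₁, β₁ and α₂', β₂' are integer lifts of α₂, β₂, and q·α₁', q·β₁', p·α₂', p·β₂' are taken as elements of Z_{pq} (these are well defined modulo pq). -/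
open scoped Classical

/-- `IsPPS A₁ A₂ S`: `S` is a partial partitionable set for the subsets `A₁`, `A₂`
of the abelian group `G`: the multiset of the four elements `x, -x, y, -y` over all
pairs `(x,y) ∈ S` covers each element of `G \ A₁` exactly once (and elements of `A₁`
zero times), and the multiset of the four elements `x+y, -(x+y), x-y, -(x-y)` covers
each element of `G \ A₂` exactly once (and elements of `A₂` zero times). -/
def IsPPS {G : Type*} [AddCommGroup G] (A₁ A₂ : Set G) (S : Finset (G × G)) : Prop :=
  (∀ z : G, (S.val.bind fun p => ({p.1, -p.1, p.2, -p.2} : Multiset G)).count z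
      = if z ∈ A₁ then 0 else 1) ∧
  (∀ z : G, (S.val.bind fun p =>
      ({p.1 + p.2, -(p.1 + p.2), p.1 - p.2, -(p.1 - p.2)} : Multiset G)).count z
      = if z ∈ A₂ then 0 else 1)

/-- An almost partitionable set `APS(v, α, β)`. -/
def IsAPS (v : ℕ) (α β : ZMod v) (S : Finset (ZMod v × ZMod v)) : Prop :=
  IsPPS ({0, α, -α} : Set (ZMod v)) ({0, β, -β} : Set (ZMod v)) S

/-- A partitionable set `PS(v)`. -/
def IsPS (v : ℕ) (S : Finset (ZMod v × ZMod v)) : Prop :=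
  IsPPS ({0} : Set (ZMod v)) ({0} : Set (ZMod v)) S

namespace Stmt15Aux

set_option linter.unusedSectionVars false

section groups

variable {G : Type*} [AddCommGroup G] [DecidableEq G]
  {H : Type*} [AddCommGroup H] [DecidableEq H]

def quadE (pr : G × G) : Multiset G := {pr.1, -pr.1, pr.2, -pr.2}
def quadS (pr : G × G) : Multiset G :=
  {pr.1 + pr.2, -(pr.1 + pr.2), pr.1 - pr.2, -(pr.1 - pr.2)}

lemma quadE_map (f : G →+ H) (pr : G × G) :
    quadE (Prod.map f f pr) = (quadE pr).map f := by
  simp [quadE, Prod.map]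

lemma quadS_map (f : G →+ H) (pr : G × G) :
    quadS (Prod.map f f pr) = (quadS pr).map f := by
  simp [quadS, Prod.map]

lemma bind_map_quad (f : G →+ H) (hf : Function.Injective f) (S : Finset (G × G))
    (t : (G × G) → Multiset G) (T : (H × H) → Multiset H)
    (hT : ∀ pr, T (Prod.map f f pr) = (t pr).map f) :
    ((S.map ⟨Prod.map f f, Prod.map_injective.mpr ⟨hf, hf⟩⟩).val.bind T)
      = (S.val.bind t).map f := by
  rw [Finset.map_val, Multiset.bind_map, Multiset.map_bind]
  simp only [Function.Embedding.coeFn_mk, hT]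

lemma count_map_range (f : G →+ H) (hf : Function.Injective f) (s : Multiset G) (g : G) :
    (s.map f).count (f g) = s.count g :=
  Multiset.count_map_eq_count' _ _ hf g

lemma count_map_zero (f : G → H) (s : Multiset G) (z : H) (hz : ∀ g, f g ≠ z) :
    (s.map f).count z = 0 := by
  rw [Multiset.count_eq_zero]
  intro h
  obtain ⟨g, _, hg⟩ := Multiset.mem_map.mp h
  exact hz g hg

lemma count_bind_four (X : Finset G) (a b c d : G → G) (z : G) :
    (X.val.bind fun x => ({a x, b x, c x, d x} : Multiset G)).count z
      = (X.filter fun x => z = a x).card + (X.filter fun x => z = b x).card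
      + (X.filter fun x => z = c x).card + (X.filter fun x => z = d x).card := by
  rw [Multiset.count_bind]
  have key : ∀ x : G, (({a x, b x, c x, d x} : Multiset G)).count z
      = (if z = a x then 1 else 0) + (if z = b x then 1 else 0)
        + (if z = c x then 1 else 0) + (if z = d x then 1 else 0) := by
    intro x
    simp only [Multiset.insert_eq_cons, Multiset.count_cons, Multiset.count_singleton]
    split <;> split <;> split <;> split <;> omega
  calc (Multiset.map (fun x => (({a x, b x, c x, d x} : Multiset G)).count z) X.val).sum
      = ∑ x ∈ X, ((if z = a x then 1 else 0) + (if z = b x then 1 else 0)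
        + (if z = c x then 1 else 0) + (if z = d x then 1 else 0)) := by
        rw [Finset.sum]; exact congrArg _ (Multiset.map_congr rfl (fun x _ => key x))
    _ = _ := by
        rw [Finset.sum_add_distrib, Finset.sum_add_distrib, Finset.sum_add_distrib,
          Finset.card_filter, Finset.card_filter, Finset.card_filter, Finset.card_filter]

lemma filter_count (X : Finset G) (f g : G → G) (h : ∀ x z, z = f x ↔ g z = x) (z : G) :
    (X.filter fun x => z = f x).card = if g z ∈ X then 1 else 0 := by
  have hc : (X.filter fun x => z = f x) = X.filter fun x => x = g z := by
    apply Finset.filter_congr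
    intro x _
    simp only [h x z, eq_comm]
  rw [hc, Finset.card_filter]
  simpa using Finset.sum_ite_eq' X (g z) (fun _ => 1)

lemma mem_ne_zero {S : Finset (G × G)}
    (h : (S.val.bind fun p => ({p.1, -p.1, p.2, -p.2} : Multiset G)).count 0 = 0)
    {x y : G} (hxy : (x, y) ∈ S) : x ≠ 0 ∧ y ≠ 0 := by
  rw [Multiset.count_eq_zero] at h
  constructor <;> rintro rfl <;> apply h <;> rw [Multiset.mem_bind]
  · exact ⟨(0, y), hxy, by simp⟩
  · exact ⟨(x, 0), hxy, by simp⟩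

end groups

section zmod

variable {v : ℕ} [Fact v.Prime]

lemma two_ne_zero' (hv : 3 < v) : (2 : ZMod v) ≠ 0 := by
  have h : ((2 : ℕ) : ZMod v) ≠ 0 := by
    rw [Ne, ZMod.natCast_eq_zero_iff]
    intro h; have := Nat.le_of_dvd (by norm_num) h; omega
  simpa using h

lemma three_ne_zero' (hv3 : 3 < v) : (3 : ZMod v) ≠ 0 := by
  have h : ((3 : ℕ) : ZMod v) ≠ 0 := by
    rw [Ne, ZMod.natCast_eq_zero_iff]
    intro h; have := Nat.le_of_dvd (by norm_num) h; omega
  simpa using h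

lemma ne_neg_self (hv : 3 < v) {α : ZMod v} (hα : α ≠ 0) : α ≠ -α := by
  intro h
  have h2 : (2 : ZMod v) * α = 0 := by linear_combination h
  rcases mul_eq_zero.mp h2 with h' | h'
  · exact two_ne_zero' hv h'
  · exact hα h'

lemma card_three [inst : DecidableEq (ZMod v)] (hv : 3 < v) (α : ZMod v) (hα : α ≠ 0) :
    (Finset.univ.filter (fun z : ZMod v => z ∈ ({0, α, -α} : Set (ZMod v)))).card = 3 := by
  have hne : α ≠ -α := ne_neg_self hv hα
  have hfe : (Finset.univ.filter (fun z : ZMod v => z ∈ ({0, α, -α} : Set (ZMod v))))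
      = ({0, α, -α} : Finset (ZMod v)) := by
    ext z; simp [Set.mem_insert_iff]
  rw [hfe]
  have h0 : (0 : ZMod v) ∉ ({α, -α} : Finset (ZMod v)) := by
    simp only [Finset.mem_insert, Finset.mem_singleton]
    push_neg
    exact ⟨fun h => hα h.symm, fun h => hα (neg_eq_zero.mp h.symm)⟩
  rw [Finset.card_insert_of_notMem h0,
    Finset.card_insert_of_notMem (by simpa using hne)]
  simp

lemma mod4 [inst : DecidableEq (ZMod v)] (hv3 : 3 < v) {α : ZMod v}
    {S : Finset (ZMod v × ZMod v)}
    (h : ∀ z : ZMod v,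
      (S.val.bind fun p => ({p.1, -p.1, p.2, -p.2} : Multiset (ZMod v))).count z
      = if z ∈ ({0, α, -α} : Set (ZMod v)) then 0 else 1)
    (hcard3 : (Finset.univ.filter
      (fun z : ZMod v => z ∈ ({0, α, -α} : Set (ZMod v)))).card = 3) :
    v % 4 = 3 := by
  set M := S.val.bind fun p => ({p.1, -p.1, p.2, -p.2} : Multiset (ZMod v)) with hM
  have hcard : Multiset.card M = 4 * S.card := by
    rw [hM, Multiset.card_bind]
    have key : ∀ x ∈ S.val, (Multiset.card ∘ fun p : ZMod v × ZMod v =>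
        ({p.1, -p.1, p.2, -p.2} : Multiset (ZMod v))) x = (fun _ => 4) x := by
      intro pr _; simp
    rw [Multiset.map_congr rfl key, Multiset.map_const', Multiset.sum_replicate]
    rw [Finset.card_def, smul_eq_mul, Nat.mul_comm]
  have hsum : Multiset.card M = ∑ z : ZMod v, M.count z := by
    rw [← Multiset.toFinset_sum_count_eq]
    apply Finset.sum_subset (Finset.subset_univ _)
    intro x _ hx
    rw [Multiset.count_eq_zero]
    intro hmem
    exact hx (Multiset.mem_toFinset.mpr hmem)
  have hval : ∑ z : ZMod v, M.count z = v - 3 := by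
    have e1 : ∑ z : ZMod v, M.count z
        = ∑ z : ZMod v, (if z ∈ ({0, α, -α} : Set (ZMod v)) then 0 else 1) :=
      Finset.sum_congr rfl (fun z _ => h z)
    have e2 : ∑ z : ZMod v, (if z ∈ ({0, α, -α} : Set (ZMod v)) then 0 else 1)
        = (Finset.univ.filter
            (fun z : ZMod v => ¬ z ∈ ({0, α, -α} : Set (ZMod v)))).card := by
      rw [Finset.card_filter]
      apply Finset.sum_congr rfl
      intro z _
      by_cases hz : z ∈ ({0, α, -α} : Set (ZMod v)) <;> simp [hz]
    have e3 := Finset.card_filter_add_card_filter_not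
      (s := (Finset.univ : Finset (ZMod v)))
      (p := fun z : ZMod v => z ∈ ({0, α, -α} : Set (ZMod v)))
    rw [e1, e2]
    have e4 : (Finset.univ : Finset (ZMod v)).card = v := by
      rw [Finset.card_univ, ZMod.card]
    omega
  have : 4 * S.card = v - 3 := by omega
  omega

lemma qc_neg_one (hv4 : v % 4 = 3) : quadraticChar (ZMod v) (-1) = -1 := by
  have hchar : ringChar (ZMod v) ≠ 2 := by
    rw [ZMod.ringChar_zmod_n]; omega
  rw [quadraticChar_neg_one hchar, ZMod.card, ZMod.χ₄_nat_eq_if_mod_four]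
  have h2 : v % 2 = 1 := by omega
  simp [h2, hv4]

lemma qc_inv {a : ZMod v} (ha : a ≠ 0) :
    quadraticChar (ZMod v) a⁻¹ = quadraticChar (ZMod v) a := by
  have h1 : quadraticChar (ZMod v) a * quadraticChar (ZMod v) a⁻¹ = 1 := by
    rw [← map_mul, mul_inv_cancel₀ ha, map_one]
  rcases quadraticChar_dichotomy ha with h | h <;>
    rcases quadraticChar_dichotomy (inv_ne_zero ha) with h' | h' <;>
    rw [h, h'] <;> rw [h, h'] at h1 <;> omega

lemma qc_sq (a : ZMod v) (ha : a ≠ 0) :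
    quadraticChar (ZMod v) (a * a) = 1 := by
  rw [map_mul]
  rcases quadraticChar_dichotomy ha with h | h <;> rw [h] <;> norm_num

lemma qc_neg (hv4 : v % 4 = 3) (a : ZMod v) :
    quadraticChar (ZMod v) (-a) = -quadraticChar (ZMod v) a := by
  rw [show (-a : ZMod v) = -1 * a by ring, map_mul, qc_neg_one hv4]
  ring

/-- Existence of `l` with prescribed pattern `(qc l, qc ((1-l)(1+l)))`. -/
lemma exists_lambda (hv4 : v % 4 = 3) (hv3 : 3 < v) (ε δ : ℤ)
    (hε : ε = 1 ∨ ε = -1) (hδ : δ = 1 ∨ δ = -1) :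
    ∃ l : ZMod v, l ≠ 0 ∧ l ≠ 1 ∧ l ≠ -1 ∧ quadraticChar (ZMod v) l = ε ∧
      quadraticChar (ZMod v) ((1 - l) * (1 + l)) = δ := by
  have h2 : (2 : ZMod v) ≠ 0 := two_ne_zero' hv3
  have h3 : (3 : ZMod v) ≠ 0 := three_ne_zero' hv3
  have h1 : (1 : ZMod v) ≠ 0 := one_ne_zero
  have hne0 : (2 : ZMod v) ≠ 0 := h2
  have hne1 : (2 : ZMod v) ≠ 1 := by
    intro h; apply h1; linear_combination h
  have hnen1 : (2 : ZMod v) ≠ -1 := by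
    intro h; apply h3; linear_combination h
  have hd0 : (1 - (2 : ZMod v)) * (1 + 2) ≠ 0 := by
    intro h
    rcases mul_eq_zero.mp h with h' | h'
    · exact hne1 (by linear_combination -h')
    · exact hnen1 (by linear_combination h')
  set e := quadraticChar (ZMod v) 2 with he
  set d := quadraticChar (ZMod v) ((1 - (2:ZMod v)) * (1 + 2)) with hd
  have hed : (e = 1 ∨ e = -1) ∧ (d = 1 ∨ d = -1) :=
    ⟨quadraticChar_dichotomy hne0, quadraticChar_dichotomy hd0⟩
  have hneg : quadraticChar (ZMod v) (-2 : ZMod v) = -e := qc_neg hv4 2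
  have hDneg : quadraticChar (ZMod v) ((1 - (-2:ZMod v)) * (1 + -2)) = d := by
    rw [hd]; congr 1; ring
  have hinv0 : (2 : ZMod v)⁻¹ ≠ 0 := inv_ne_zero h2
  have hinv_qc : quadraticChar (ZMod v) (2 : ZMod v)⁻¹ = e := qc_inv h2
  have hDinv : quadraticChar (ZMod v) ((1 - (2:ZMod v)⁻¹) * (1 + (2:ZMod v)⁻¹)) = -d := by
    have key : (1 - (2:ZMod v)⁻¹) * (1 + (2:ZMod v)⁻¹)
        = (-1) * ((1 - (2:ZMod v)) * (1 + 2)) * ((2:ZMod v)⁻¹ * (2:ZMod v)⁻¹) := by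
      field_simp
      ring
    rw [key, map_mul, map_mul, qc_neg_one hv4, qc_sq _ hinv0, ← hd]
    ring
  have hinv1 : (2 : ZMod v)⁻¹ ≠ 1 := by
    intro h
    apply hne1
    have := congrArg (· * (2 : ZMod v)) h
    simpa [inv_mul_cancel₀ h2] using this.symm
  have hinvn1 : (2 : ZMod v)⁻¹ ≠ -1 := by
    intro h
    have := congrArg (· * (2 : ZMod v)) h
    simp [inv_mul_cancel₀ h2] at this
    apply h3
    linear_combination this
  have hninv_qc : quadraticChar (ZMod v) (-(2 : ZMod v)⁻¹) = -e := by
    rw [qc_neg hv4, hinv_qc]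
  have hDninv : quadraticChar (ZMod v) ((1 - (-(2:ZMod v)⁻¹)) * (1 + -(2:ZMod v)⁻¹)) = -d := by
    rw [show (1 - (-(2:ZMod v)⁻¹)) * (1 + -(2:ZMod v)⁻¹)
      = (1 - (2:ZMod v)⁻¹) * (1 + (2:ZMod v)⁻¹) by ring]
    exact hDinv
  have hninv0 : -(2 : ZMod v)⁻¹ ≠ 0 := neg_ne_zero.mpr hinv0
  have hninv1 : -(2 : ZMod v)⁻¹ ≠ 1 := fun h => hinvn1 (by linear_combination -h)
  have hninvn1 : -(2 : ZMod v)⁻¹ ≠ -1 := fun h => hinv1 (by linear_combination -h)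
  have hneg0 : (-2 : ZMod v) ≠ 0 := by
    intro h; exact h2 (by linear_combination -h)
  have hneg1 : (-2 : ZMod v) ≠ 1 := by
    intro h; exact h3 (by linear_combination -h)
  have hnegn1 : (-2 : ZMod v) ≠ -1 := by
    intro h; exact h1 (by linear_combination -h)
  rcases hed.1 with he1 | he1 <;> rcases hed.2 with hd1 | hd1 <;>
    rcases hε with rfl | rfl <;> rcases hδ with rfl | rfl
  · exact ⟨2, hne0, hne1, hnen1, by rw [← he, he1], by rw [← hd, hd1]⟩
  · exact ⟨(2:ZMod v)⁻¹, hinv0, hinv1, hinvn1, by rw [hinv_qc, he1], by rw [hDinv, hd1]⟩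
  · exact ⟨-2, hneg0, hneg1, hnegn1, by rw [hneg, he1], by rw [hDneg, hd1]⟩
  · exact ⟨-(2:ZMod v)⁻¹, hninv0, hninv1, hninvn1, by rw [hninv_qc, he1],
      by rw [hDninv, hd1]⟩
  · exact ⟨(2:ZMod v)⁻¹, hinv0, hinv1, hinvn1, by rw [hinv_qc, he1], by rw [hDinv, hd1]; ring⟩
  · exact ⟨2, hne0, hne1, hnen1, by rw [← he, he1], by rw [← hd, hd1]⟩
  · exact ⟨-(2:ZMod v)⁻¹, hninv0, hninv1, hninvn1, by rw [hninv_qc, he1],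
      by rw [hDninv, hd1]; ring⟩
  · exact ⟨-2, hneg0, hneg1, hnegn1, by rw [hneg, he1], by rw [hDneg, hd1]⟩
  · exact ⟨-2, hneg0, hneg1, hnegn1, by rw [hneg, he1]; ring, by rw [hDneg, hd1]⟩
  · exact ⟨-(2:ZMod v)⁻¹, hninv0, hninv1, hninvn1, by rw [hninv_qc, he1]; ring,
      by rw [hDninv, hd1]⟩
  · exact ⟨2, hne0, hne1, hnen1, by rw [← he, he1], by rw [← hd, hd1]⟩
  · exact ⟨(2:ZMod v)⁻¹, hinv0, hinv1, hinvn1, by rw [hinv_qc, he1], by rw [hDinv, hd1]⟩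
  · exact ⟨-(2:ZMod v)⁻¹, hninv0, hninv1, hninvn1, by rw [hninv_qc, he1]; ring,
      by rw [hDninv, hd1]; ring⟩
  · exact ⟨-2, hneg0, hneg1, hnegn1, by rw [hneg, he1]; ring, by rw [hDneg, hd1]⟩
  · exact ⟨(2:ZMod v)⁻¹, hinv0, hinv1, hinvn1, by rw [hinv_qc, he1], by rw [hDinv, hd1]; ring⟩
  · exact ⟨2, hne0, hne1, hnen1, by rw [← he, he1], by rw [← hd, hd1]⟩

end zmod

end Stmt15Aux
open Stmt15Aux in
set_option maxHeartbeats 2000000 in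
theorem stmt15 (p q : ℕ) (hp : Nat.Prime p) (hq : Nat.Prime q)
    (hq3 : 3 < q) (hqp : q < p)
    (α₁ β₁ : ZMod p) (hα₁ : α₁ ≠ 0) (hβ₁ : β₁ ≠ 0)
    (α₂ β₂ : ZMod q) (hα₂ : α₂ ≠ 0) (hβ₂ : β₂ ≠ 0)
    (h1 : ∃ S : Finset (ZMod p × ZMod p), IsAPS p α₁ β₁ S)
    (h2 : ∃ S : Finset (ZMod q × ZMod q), IsAPS q α₂ β₂ S) :
    ∃ S : Finset (ZMod (p * q) × ZMod (p * q)),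
      IsPPS ({0, (q : ZMod (p * q)) * (α₁.val : ZMod (p * q)),
              -((q : ZMod (p * q)) * (α₁.val : ZMod (p * q))),
              (p : ZMod (p * q)) * (α₂.val : ZMod (p * q)),
              -((p : ZMod (p * q)) * (α₂.val : ZMod (p * q)))} : Set (ZMod (p * q)))
            ({0, (q : ZMod (p * q)) * (β₁.val : ZMod (p * q)),
              -((q : ZMod (p * q)) * (β₁.val : ZMod (p * q))),
              (p : ZMod (p * q)) * (β₂.val : ZMod (p * q)),
              -((p : ZMod (p * q)) * (β₂.val : ZMod (p * q)))} : Set (ZMod (p * q))) S := by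
  classical
  haveI fp : Fact p.Prime := ⟨hp⟩
  haveI fq : Fact q.Prime := ⟨hq⟩
  haveI : NeZero p := ⟨hp.pos.ne'⟩
  haveI : NeZero q := ⟨hq.pos.ne'⟩
  have hp3 : 3 < p := lt_trans hq3 hqp
  obtain ⟨S₁, hS₁⟩ := h1
  obtain ⟨S₂, hS₂⟩ := h2
  have hS₁E : ∀ z : ZMod p, (S₁.val.bind fun pr =>
      ({pr.1, -pr.1, pr.2, -pr.2} : Multiset (ZMod p))).count z
      = if z ∈ ({0, α₁, -α₁} : Set (ZMod p)) then 0 else 1 :=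
    fun z => by convert hS₁.1 z using 2
  have hS₁S : ∀ z : ZMod p, (S₁.val.bind fun pr =>
      ({pr.1 + pr.2, -(pr.1 + pr.2), pr.1 - pr.2, -(pr.1 - pr.2)} : Multiset (ZMod p))).count z
      = if z ∈ ({0, β₁, -β₁} : Set (ZMod p)) then 0 else 1 :=
    fun z => by convert hS₁.2 z using 2
  have hS₂E : ∀ z : ZMod q, (S₂.val.bind fun pr =>
      ({pr.1, -pr.1, pr.2, -pr.2} : Multiset (ZMod q))).count z
      = if z ∈ ({0, α₂, -α₂} : Set (ZMod q)) then 0 else 1 :=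
    fun z => by convert hS₂.1 z using 2
  have hS₂S : ∀ z : ZMod q, (S₂.val.bind fun pr =>
      ({pr.1 + pr.2, -(pr.1 + pr.2), pr.1 - pr.2, -(pr.1 - pr.2)} : Multiset (ZMod q))).count z
      = if z ∈ ({0, β₂, -β₂} : Set (ZMod q)) then 0 else 1 :=
    fun z => by convert hS₂.2 z using 2
  have hp4 : p % 4 = 3 := Stmt15Aux.mod4 hp3 hS₁E (Stmt15Aux.card_three hp3 α₁ hα₁)
  have hq4 : q % 4 = 3 := Stmt15Aux.mod4 hq3 hS₂E (Stmt15Aux.card_three hq3 α₂ hα₂)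
  have hqb : (q : ZMod p) ≠ 0 := by
    rw [Ne, ZMod.natCast_eq_zero_iff]
    intro h; have := Nat.le_of_dvd (by omega) h; omega
  have hpb : (p : ZMod q) ≠ 0 := by
    rw [Ne, ZMod.natCast_eq_zero_iff]
    intro h
    rcases hp.eq_one_or_self_of_dvd q h with h' | h' <;> omega
  obtain ⟨l₁, hl₁0, hl₁1, hl₁n1, hl₁qc, hl₁D⟩ :=
    Stmt15Aux.exists_lambda (v := p) hp4 hp3 1 (-1) (Or.inl rfl) (Or.inr rfl)
  obtain ⟨l₂, hl₂0, hl₂1, hl₂n1, hl₂qc, hl₂D⟩ :=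
    Stmt15Aux.exists_lambda (v := q) hq4 hq3 (-1) 1 (Or.inr rfl) (Or.inl rfl)
  have h1pl₁ : (1 : ZMod p) + l₁ ≠ 0 := fun h => hl₁n1 (by linear_combination h)
  have h1ml₁ : (1 : ZMod p) - l₁ ≠ 0 := fun h => hl₁1 (by linear_combination -h)
  have h1pl₂ : (1 : ZMod q) + l₂ ≠ 0 := fun h => hl₂n1 (by linear_combination h)
  have h1ml₂ : (1 : ZMod q) - l₂ ≠ 0 := fun h => hl₂1 (by linear_combination -h)
  -- abbreviations
  let chi : ZMod p × ZMod q → ℤ :=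
    fun z => quadraticChar (ZMod p) z.1 * quadraticChar (ZMod q) z.2
  have hchimul : ∀ a b : ZMod p × ZMod q, chi (a * b) = chi a * chi b := by
    intro a b
    show quadraticChar (ZMod p) (a.1 * b.1) * quadraticChar (ZMod q) (a.2 * b.2) = _
    rw [map_mul, map_mul]; ring
  have hchineg : ∀ a : ZMod p × ZMod q, chi (-a) = chi a := by
    intro a
    show quadraticChar (ZMod p) (-a.1) * quadraticChar (ZMod q) (-a.2) = _
    rw [qc_neg hp4, qc_neg hq4]; ring
  have hchipm : ∀ z : ZMod p × ZMod q, z.1 ≠ 0 → z.2 ≠ 0 → chi z = 1 ∨ chi z = -1 := by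
    intro z hz1 hz2
    rcases quadraticChar_dichotomy hz1 with h | h <;>
      rcases quadraticChar_dichotomy hz2 with h' | h' <;>
      [left; right; right; left] <;> show _ * _ = _ <;> rw [h, h'] <;> ring
  -- the mixed multiplier and its companions
  let m : ZMod p × ZMod q := (l₁, l₂)
  let mi : ZMod p × ZMod q := (l₁⁻¹, l₂⁻¹)
  let u : ZMod p × ZMod q := (1 + l₁, 1 + l₂)
  let ui : ZMod p × ZMod q := ((1 + l₁)⁻¹, (1 + l₂)⁻¹)
  let w : ZMod p × ZMod q := (1 - l₁, 1 - l₂)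
  let wi : ZMod p × ZMod q := ((1 - l₁)⁻¹, (1 - l₂)⁻¹)
  have hmim : mi * m = 1 := by
    show ((l₁⁻¹, l₂⁻¹) : ZMod p × ZMod q) * (l₁, l₂) = 1
    rw [Prod.mk_mul_mk, inv_mul_cancel₀ hl₁0, inv_mul_cancel₀ hl₂0]; rfl
  have hmmi : m * mi = 1 := by rw [mul_comm]; exact hmim
  have huiu : ui * u = 1 := by
    show (((1 + l₁)⁻¹, (1 + l₂)⁻¹) : ZMod p × ZMod q) * (1 + l₁, 1 + l₂) = 1
    rw [Prod.mk_mul_mk, inv_mul_cancel₀ h1pl₁, inv_mul_cancel₀ h1pl₂]; rfl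
  have huui : u * ui = 1 := by rw [mul_comm]; exact huiu
  have hwiw : wi * w = 1 := by
    show (((1 - l₁)⁻¹, (1 - l₂)⁻¹) : ZMod p × ZMod q) * (1 - l₁, 1 - l₂) = 1
    rw [Prod.mk_mul_mk, inv_mul_cancel₀ h1ml₁, inv_mul_cancel₀ h1ml₂]; rfl
  have hwwi : w * wi = 1 := by rw [mul_comm]; exact hwiw
  have hchimi : chi mi = -1 := by
    show quadraticChar (ZMod p) l₁⁻¹ * quadraticChar (ZMod q) l₂⁻¹ = -1
    rw [qc_inv hl₁0, qc_inv hl₂0, hl₁qc, hl₂qc]; ring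
  have hchiui : chi ui = chi u := by
    show quadraticChar (ZMod p) (1 + l₁)⁻¹ * quadraticChar (ZMod q) (1 + l₂)⁻¹ = _
    rw [qc_inv h1pl₁, qc_inv h1pl₂]
  have hchiwi : chi wi = chi w := by
    show quadraticChar (ZMod p) (1 - l₁)⁻¹ * quadraticChar (ZMod q) (1 - l₂)⁻¹ = _
    rw [qc_inv h1ml₁, qc_inv h1ml₂]
  have hchiuw : chi u * chi w = -1 := by
    show (quadraticChar (ZMod p) (1 + l₁) * quadraticChar (ZMod q) (1 + l₂))
      * (quadraticChar (ZMod p) (1 - l₁) * quadraticChar (ZMod q) (1 - l₂)) = -1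
    have e1 : quadraticChar (ZMod p) (1 - l₁) * quadraticChar (ZMod p) (1 + l₁) = -1 := by
      rw [← map_mul]; exact hl₁D
    have e2 : quadraticChar (ZMod q) (1 - l₂) * quadraticChar (ZMod q) (1 + l₂) = 1 := by
      rw [← map_mul]; exact hl₂D
    linear_combination (quadraticChar (ZMod q) (1 - l₂) * quadraticChar (ZMod q) (1 + l₂)) * e1
      + (-1 : ℤ) * e2
  have hchiu : chi u = 1 ∨ chi u = -1 := hchipm u h1pl₁ h1pl₂
  have hchiwval : chi w = - chi u := by
    rcases hchiu with a | a <;> rcases hchipm w h1ml₁ h1ml₂ with b | b <;>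
      rw [a, b] at hchiuw ⊢ <;> omega
  -- the representative set
  let X : Finset (ZMod p × ZMod q) := Finset.univ.filter
    (fun x => x.1 ≠ 0 ∧ x.2 ≠ 0 ∧ chi x = 1 ∧ 2 * x.1.val < p)
  have hXmem : ∀ z : ZMod p × ZMod q,
      z ∈ X ↔ (z.1 ≠ 0 ∧ z.2 ≠ 0 ∧ chi z = 1 ∧ 2 * z.1.val < p) := by
    intro z; simp [X]
  have hXpair : ∀ z : ZMod p × ZMod q, z.1 ≠ 0 → z.2 ≠ 0 →
      ((if z ∈ X then (1:ℕ) else 0) + (if -z ∈ X then 1 else 0))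
        = if chi z = 1 then 1 else 0 := by
    intro z hz1 hz2
    have hneg1 : (-z).1 = -z.1 := rfl
    have hneg2 : (-z).2 = -z.2 := rfl
    have hchz : chi (-z) = chi z := hchineg z
    have hv : ((-z).1).val = p - z.1.val := by
      rw [hneg1, ZMod.neg_val, if_neg hz1]
    have hlt : z.1.val < p := ZMod.val_lt z.1
    have hne0 : z.1.val ≠ 0 := fun h => hz1 ((ZMod.val_eq_zero z.1).mp h)
    have hodd : p % 2 = 1 := by omega
    by_cases hchi : chi z = 1
    · rw [if_pos hchi]
      by_cases hv2 : 2 * z.1.val < p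
      · rw [if_pos ((hXmem z).mpr ⟨hz1, hz2, hchi, hv2⟩),
          if_neg (fun hmem => by
            obtain ⟨_, _, _, h4⟩ := (hXmem _).mp hmem
            rw [hv] at h4; omega)]
      · rw [if_neg (fun hmem => hv2 ((hXmem _).mp hmem).2.2.2),
          if_pos ((hXmem _).mpr ⟨by rw [hneg1]; exact neg_ne_zero.mpr hz1,
            by rw [hneg2]; exact neg_ne_zero.mpr hz2,
            by rw [hchz]; exact hchi, by rw [hv]; omega⟩)]
    · rw [if_neg hchi,
        if_neg (fun hmem => hchi ((hXmem _).mp hmem).2.2.1),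
        if_neg (fun hmem => hchi (by rw [← hchz]; exact ((hXmem _).mp hmem).2.2.1))]
  -- the mixed component
  let MF : Finset ((ZMod p × ZMod q) × (ZMod p × ZMod q)) := X.map
    ⟨fun x => (x, m * x), fun a b h => congrArg Prod.fst h⟩
  have hS₁count0 : (S₁.val.bind fun pr =>
      ({pr.1, -pr.1, pr.2, -pr.2} : Multiset (ZMod p))).count 0 = 0 := by
    rw [hS₁E 0, if_pos (Set.mem_insert _ _)]
  have hS₂count0 : (S₂.val.bind fun pr =>
      ({pr.1, -pr.1, pr.2, -pr.2} : Multiset (ZMod q))).count 0 = 0 := by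
    rw [hS₂E 0, if_pos (Set.mem_insert _ _)]
  -- homomorphisms into the product
  let f₁ : ZMod p →+ ZMod p × ZMod q := AddMonoidHom.mk' (fun x => ((q : ZMod p) * x, 0))
    (fun a b => by simp [Prod.ext_iff, mul_add])
  have hf₁app : ∀ x : ZMod p, f₁ x = ((q : ZMod p) * x, 0) := fun _ => rfl
  have hf₁ : Function.Injective f₁ := by
    intro a b h
    have h1 := congrArg Prod.fst h
    rw [hf₁app, hf₁app] at h1
    exact mul_left_cancel₀ hqb h1
  let f₂ : ZMod q →+ ZMod p × ZMod q := AddMonoidHom.mk' (fun x => (0, (p : ZMod q) * x))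
    (fun a b => by simp [Prod.ext_iff, mul_add])
  have hf₂app : ∀ x : ZMod q, f₂ x = (0, (p : ZMod q) * x) := fun _ => rfl
  have hf₂ : Function.Injective f₂ := by
    intro a b h
    have h1 := congrArg Prod.snd h
    rw [hf₂app, hf₂app] at h1
    exact mul_left_cancel₀ hpb h1
  let SpF : Finset ((ZMod p × ZMod q) × (ZMod p × ZMod q)) :=
    S₁.map ⟨Prod.map f₁ f₁, Prod.map_injective.mpr ⟨hf₁, hf₁⟩⟩
  let SqF : Finset ((ZMod p × ZMod q) × (ZMod p × ZMod q)) :=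
    S₂.map ⟨Prod.map f₂ f₂, Prod.map_injective.mpr ⟨hf₂, hf₂⟩⟩
  -- counts for the axis components
  have hSpE : ∀ z : ZMod p × ZMod q, (SpF.val.bind quadE).count z
      = if z.2 = 0 then
          (if (q : ZMod p)⁻¹ * z.1 ∈ ({0, α₁, -α₁} : Set (ZMod p)) then 0 else 1)
        else 0 := by
    intro z
    rw [show SpF.val.bind quadE = (S₁.val.bind quadE).map f₁ from
      bind_map_quad f₁ hf₁ S₁ quadE quadE (quadE_map f₁)]
    by_cases hz : z.2 = 0
    · have hz' : z = f₁ ((q : ZMod p)⁻¹ * z.1) := by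
        rw [hf₁app]
        refine Prod.ext_iff.mpr ⟨?_, hz⟩
        show z.1 = (q : ZMod p) * ((q : ZMod p)⁻¹ * z.1)
        rw [← mul_assoc, mul_inv_cancel₀ hqb, one_mul]
      rw [if_pos hz]
      calc ((S₁.val.bind quadE).map f₁).count z
          = ((S₁.val.bind quadE).map f₁).count (f₁ ((q : ZMod p)⁻¹ * z.1)) := by rw [← hz']
        _ = (S₁.val.bind quadE).count ((q : ZMod p)⁻¹ * z.1) := count_map_range f₁ hf₁ _ _
        _ = _ := hS₁E _
    · rw [if_neg hz]
      apply count_map_zero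
      intro g hg
      apply hz
      rw [← hg, hf₁app]
  have hSpS : ∀ z : ZMod p × ZMod q, (SpF.val.bind quadS).count z
      = if z.2 = 0 then
          (if (q : ZMod p)⁻¹ * z.1 ∈ ({0, β₁, -β₁} : Set (ZMod p)) then 0 else 1)
        else 0 := by
    intro z
    rw [show SpF.val.bind quadS = (S₁.val.bind quadS).map f₁ from
      bind_map_quad f₁ hf₁ S₁ quadS quadS (quadS_map f₁)]
    by_cases hz : z.2 = 0
    · have hz' : z = f₁ ((q : ZMod p)⁻¹ * z.1) := by
        rw [hf₁app]
        refine Prod.ext_iff.mpr ⟨?_, hz⟩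
        show z.1 = (q : ZMod p) * ((q : ZMod p)⁻¹ * z.1)
        rw [← mul_assoc, mul_inv_cancel₀ hqb, one_mul]
      rw [if_pos hz]
      calc ((S₁.val.bind quadS).map f₁).count z
          = ((S₁.val.bind quadS).map f₁).count (f₁ ((q : ZMod p)⁻¹ * z.1)) := by rw [← hz']
        _ = (S₁.val.bind quadS).count ((q : ZMod p)⁻¹ * z.1) := count_map_range f₁ hf₁ _ _
        _ = _ := hS₁S _
    · rw [if_neg hz]
      apply count_map_zero
      intro g hg
      apply hz
      rw [← hg, hf₁app]
  have hSqE : ∀ z : ZMod p × ZMod q, (SqF.val.bind quadE).count z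
      = if z.1 = 0 then
          (if (p : ZMod q)⁻¹ * z.2 ∈ ({0, α₂, -α₂} : Set (ZMod q)) then 0 else 1)
        else 0 := by
    intro z
    rw [show SqF.val.bind quadE = (S₂.val.bind quadE).map f₂ from
      bind_map_quad f₂ hf₂ S₂ quadE quadE (quadE_map f₂)]
    by_cases hz : z.1 = 0
    · have hz' : z = f₂ ((p : ZMod q)⁻¹ * z.2) := by
        rw [hf₂app]
        refine Prod.ext_iff.mpr ⟨hz, ?_⟩
        show z.2 = (p : ZMod q) * ((p : ZMod q)⁻¹ * z.2)
        rw [← mul_assoc, mul_inv_cancel₀ hpb, one_mul]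
      rw [if_pos hz]
      calc ((S₂.val.bind quadE).map f₂).count z
          = ((S₂.val.bind quadE).map f₂).count (f₂ ((p : ZMod q)⁻¹ * z.2)) := by rw [← hz']
        _ = (S₂.val.bind quadE).count ((p : ZMod q)⁻¹ * z.2) := count_map_range f₂ hf₂ _ _
        _ = _ := hS₂E _
    · rw [if_neg hz]
      apply count_map_zero
      intro g hg
      apply hz
      rw [← hg, hf₂app]
  have hSqS : ∀ z : ZMod p × ZMod q, (SqF.val.bind quadS).count z
      = if z.1 = 0 then
          (if (p : ZMod q)⁻¹ * z.2 ∈ ({0, β₂, -β₂} : Set (ZMod q)) then 0 else 1)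
        else 0 := by
    intro z
    rw [show SqF.val.bind quadS = (S₂.val.bind quadS).map f₂ from
      bind_map_quad f₂ hf₂ S₂ quadS quadS (quadS_map f₂)]
    by_cases hz : z.1 = 0
    · have hz' : z = f₂ ((p : ZMod q)⁻¹ * z.2) := by
        rw [hf₂app]
        refine Prod.ext_iff.mpr ⟨hz, ?_⟩
        show z.2 = (p : ZMod q) * ((p : ZMod q)⁻¹ * z.2)
        rw [← mul_assoc, mul_inv_cancel₀ hpb, one_mul]
      rw [if_pos hz]
      calc ((S₂.val.bind quadS).map f₂).count z
          = ((S₂.val.bind quadS).map f₂).count (f₂ ((p : ZMod q)⁻¹ * z.2)) := by rw [← hz']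
        _ = (S₂.val.bind quadS).count ((p : ZMod q)⁻¹ * z.2) := count_map_range f₂ hf₂ _ _
        _ = _ := hS₂S _
    · rw [if_neg hz]
      apply count_map_zero
      intro g hg
      apply hz
      rw [← hg, hf₂app]
  -- counts for the mixed component: elements
  have hux : ∀ x : ZMod p × ZMod q, x + m * x = u * x := by
    intro x
    refine Prod.ext_iff.mpr ⟨?_, ?_⟩
    · show x.1 + l₁ * x.1 = (1 + l₁) * x.1; ring
    · show x.2 + l₂ * x.2 = (1 + l₂) * x.2; ring
  have hwx : ∀ x : ZMod p × ZMod q, x - m * x = w * x := by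
    intro x
    refine Prod.ext_iff.mpr ⟨?_, ?_⟩
    · show x.1 - l₁ * x.1 = (1 - l₁) * x.1; ring
    · show x.2 - l₂ * x.2 = (1 - l₂) * x.2; ring
  have hcountME : ∀ z : ZMod p × ZMod q, (MF.val.bind quadE).count z
      = ((if z ∈ X then (1:ℕ) else 0) + (if -z ∈ X then 1 else 0))
        + ((if mi * z ∈ X then 1 else 0) + (if -(mi * z) ∈ X then 1 else 0)) := by
    intro z
    have hb : MF.val.bind quadE
        = X.val.bind (fun x => ({x, -x, m * x, -(m * x)} : Multiset (ZMod p × ZMod q))) := by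
      rw [Finset.map_val, Multiset.bind_map]
      rfl
    rw [hb, count_bind_four X (fun x => x) (fun x => -x) (fun x => m * x)
        (fun x => -(m * x)) z,
      filter_count X (fun x => x) (fun z => z) (fun x z => Iff.rfl),
      filter_count X (fun x => -x) (fun z => -z) (fun x z =>
        ⟨fun h => by subst h; beta_reduce; rw [neg_neg],
         fun h => by subst h; beta_reduce; rw [neg_neg]⟩),
      filter_count X (fun x => m * x) (fun z => mi * z) (fun x z =>
        ⟨fun h => by subst h; beta_reduce; rw [← mul_assoc, hmim, one_mul],
         fun h => by subst h; beta_reduce; rw [← mul_assoc, hmmi, one_mul]⟩),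
      filter_count X (fun x => -(m * x)) (fun z => -(mi * z)) (fun x z =>
        ⟨fun h => by subst h; beta_reduce; rw [mul_neg, neg_neg, ← mul_assoc, hmim, one_mul],
         fun h => by subst h; beta_reduce; rw [mul_neg, neg_neg, ← mul_assoc, hmmi, one_mul]⟩)]
    ring
  have hME : ∀ z : ZMod p × ZMod q, (MF.val.bind quadE).count z
      = if z.1 ≠ 0 ∧ z.2 ≠ 0 then 1 else 0 := by
    intro z
    rw [hcountME z]
    by_cases hz1 : z.1 = 0
    · have e1 : z ∉ X := fun h => ((hXmem z).mp h).1 hz1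
      have e2 : -z ∉ X := fun h => ((hXmem _).mp h).1 (by show -z.1 = 0; rw [hz1, neg_zero])
      have e3 : mi * z ∉ X := fun h =>
        ((hXmem _).mp h).1 (by show l₁⁻¹ * z.1 = 0; rw [hz1, mul_zero])
      have e4 : -(mi * z) ∉ X := fun h =>
        ((hXmem _).mp h).1 (by show -(l₁⁻¹ * z.1) = 0; rw [hz1, mul_zero, neg_zero])
      rw [if_neg e1, if_neg e2, if_neg e3, if_neg e4, if_neg (by tauto)]
    · by_cases hz2 : z.2 = 0
      · have e1 : z ∉ X := fun h => ((hXmem z).mp h).2.1 hz2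
        have e2 : -z ∉ X := fun h =>
          ((hXmem _).mp h).2.1 (by show -z.2 = 0; rw [hz2, neg_zero])
        have e3 : mi * z ∉ X := fun h =>
          ((hXmem _).mp h).2.1 (by show l₂⁻¹ * z.2 = 0; rw [hz2, mul_zero])
        have e4 : -(mi * z) ∉ X := fun h =>
          ((hXmem _).mp h).2.1 (by show -(l₂⁻¹ * z.2) = 0; rw [hz2, mul_zero, neg_zero])
        rw [if_neg e1, if_neg e2, if_neg e3, if_neg e4, if_neg (by tauto)]
      · have hmz1 : (mi * z).1 ≠ 0 := mul_ne_zero (inv_ne_zero hl₁0) hz1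
        have hmz2 : (mi * z).2 ≠ 0 := mul_ne_zero (inv_ne_zero hl₂0) hz2
        rw [hXpair z hz1 hz2, hXpair (mi * z) hmz1 hmz2, if_pos (show ¬z.1 = 0 ∧ ¬z.2 = 0 from ⟨hz1, hz2⟩)]
        have hchim : chi (mi * z) = - chi z := by rw [hchimul, hchimi]; ring
        rcases hchipm z hz1 hz2 with h | h
        · rw [if_pos h, if_neg (by rw [hchim, h]; norm_num)]
        · rw [if_neg (by rw [h]; norm_num), if_pos (by rw [hchim, h]; norm_num)]
  -- counts for the mixed component: sums
  have hcountMS : ∀ z : ZMod p × ZMod q, (MF.val.bind quadS).count z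
      = ((if ui * z ∈ X then (1:ℕ) else 0) + (if -(ui * z) ∈ X then 1 else 0))
        + ((if wi * z ∈ X then 1 else 0) + (if -(wi * z) ∈ X then 1 else 0)) := by
    intro z
    have hb : MF.val.bind quadS
        = X.val.bind (fun x => ({x + m * x, -(x + m * x), x - m * x, -(x - m * x)}
            : Multiset (ZMod p × ZMod q))) := by
      rw [Finset.map_val, Multiset.bind_map]
      rfl
    rw [hb, count_bind_four X (fun x => x + m * x) (fun x => -(x + m * x))
        (fun x => x - m * x) (fun x => -(x - m * x)) z,
      filter_count X (fun x => x + m * x) (fun z => ui * z) (fun x z =>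
        ⟨fun h => by subst h; beta_reduce; rw [hux x, ← mul_assoc, huiu, one_mul],
         fun h => by subst h; beta_reduce; rw [hux, ← mul_assoc, huui, one_mul]⟩),
      filter_count X (fun x => -(x + m * x)) (fun z => -(ui * z)) (fun x z =>
        ⟨fun h => by subst h; beta_reduce; rw [hux x, mul_neg, neg_neg, ← mul_assoc, huiu, one_mul],
         fun h => by subst h; beta_reduce; rw [hux, mul_neg, neg_neg, ← mul_assoc, huui, one_mul]⟩),
      filter_count X (fun x => x - m * x) (fun z => wi * z) (fun x z =>
        ⟨fun h => by subst h; beta_reduce; rw [hwx x, ← mul_assoc, hwiw, one_mul],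
         fun h => by subst h; beta_reduce; rw [hwx, ← mul_assoc, hwwi, one_mul]⟩),
      filter_count X (fun x => -(x - m * x)) (fun z => -(wi * z)) (fun x z =>
        ⟨fun h => by subst h; beta_reduce; rw [hwx x, mul_neg, neg_neg, ← mul_assoc, hwiw, one_mul],
         fun h => by subst h; beta_reduce; rw [hwx, mul_neg, neg_neg, ← mul_assoc, hwwi, one_mul]⟩)]
    ring
  have hMS : ∀ z : ZMod p × ZMod q, (MF.val.bind quadS).count z
      = if z.1 ≠ 0 ∧ z.2 ≠ 0 then 1 else 0 := by
    intro z
    rw [hcountMS z]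
    by_cases hz1 : z.1 = 0
    · have e1 : ui * z ∉ X := fun h =>
        ((hXmem _).mp h).1 (by show (1 + l₁)⁻¹ * z.1 = 0; rw [hz1, mul_zero])
      have e2 : -(ui * z) ∉ X := fun h =>
        ((hXmem _).mp h).1 (by show -((1 + l₁)⁻¹ * z.1) = 0; rw [hz1, mul_zero, neg_zero])
      have e3 : wi * z ∉ X := fun h =>
        ((hXmem _).mp h).1 (by show (1 - l₁)⁻¹ * z.1 = 0; rw [hz1, mul_zero])
      have e4 : -(wi * z) ∉ X := fun h =>
        ((hXmem _).mp h).1 (by show -((1 - l₁)⁻¹ * z.1) = 0; rw [hz1, mul_zero, neg_zero])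
      rw [if_neg e1, if_neg e2, if_neg e3, if_neg e4, if_neg (by tauto)]
    · by_cases hz2 : z.2 = 0
      · have e1 : ui * z ∉ X := fun h =>
          ((hXmem _).mp h).2.1 (by show (1 + l₂)⁻¹ * z.2 = 0; rw [hz2, mul_zero])
        have e2 : -(ui * z) ∉ X := fun h =>
          ((hXmem _).mp h).2.1 (by show -((1 + l₂)⁻¹ * z.2) = 0; rw [hz2, mul_zero, neg_zero])
        have e3 : wi * z ∉ X := fun h =>
          ((hXmem _).mp h).2.1 (by show (1 - l₂)⁻¹ * z.2 = 0; rw [hz2, mul_zero])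
        have e4 : -(wi * z) ∉ X := fun h =>
          ((hXmem _).mp h).2.1 (by show -((1 - l₂)⁻¹ * z.2) = 0; rw [hz2, mul_zero, neg_zero])
        rw [if_neg e1, if_neg e2, if_neg e3, if_neg e4, if_neg (by tauto)]
      · have hu1 : (ui * z).1 ≠ 0 := mul_ne_zero (inv_ne_zero h1pl₁) hz1
        have hu2 : (ui * z).2 ≠ 0 := mul_ne_zero (inv_ne_zero h1pl₂) hz2
        have hw1 : (wi * z).1 ≠ 0 := mul_ne_zero (inv_ne_zero h1ml₁) hz1
        have hw2 : (wi * z).2 ≠ 0 := mul_ne_zero (inv_ne_zero h1ml₂) hz2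
        rw [hXpair (ui * z) hu1 hu2, hXpair (wi * z) hw1 hw2, if_pos (show ¬z.1 = 0 ∧ ¬z.2 = 0 from ⟨hz1, hz2⟩)]
        have eu : chi (ui * z) = chi u * chi z := by rw [hchimul, hchiui]
        have ew : chi (wi * z) = chi w * chi z := by rw [hchimul, hchiwi]
        rcases hchipm z hz1 hz2 with h | h <;> rcases hchiu with h' | h'
        · rw [if_pos (by rw [eu, h, h']; norm_num),
            if_neg (by rw [ew, hchiwval, h, h']; norm_num)]
        · rw [if_neg (by rw [eu, h, h']; norm_num),
            if_pos (by rw [ew, hchiwval, h, h']; norm_num)]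
        · rw [if_neg (by rw [eu, h, h']; norm_num),
            if_pos (by rw [ew, hchiwval, h, h']; norm_num)]
        · rw [if_pos (by rw [eu, h, h']; norm_num),
            if_neg (by rw [ew, hchiwval, h, h']; norm_num)]
  -- membership facts for component entries
  have hSpmem : ∀ a ∈ SpF, a.1.1 ≠ 0 ∧ a.1.2 = 0 := by
    intro a ha
    obtain ⟨⟨x, y⟩, hpr, rfl⟩ := Finset.mem_map.mp ha
    obtain ⟨hx, hy⟩ := mem_ne_zero hS₁count0 hpr
    constructor
    · show (q : ZMod p) * x ≠ 0
      exact mul_ne_zero hqb hx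
    · rfl
  have hSqmem : ∀ a ∈ SqF, a.1.1 = 0 ∧ a.1.2 ≠ 0 := by
    intro a ha
    obtain ⟨⟨x, y⟩, hpr, rfl⟩ := Finset.mem_map.mp ha
    obtain ⟨hx, hy⟩ := mem_ne_zero hS₂count0 hpr
    refine ⟨rfl, ?_⟩
    show (p : ZMod q) * x ≠ 0
    exact mul_ne_zero hpb hx
  have hMmem : ∀ a ∈ MF, a.1.1 ≠ 0 ∧ a.1.2 ≠ 0 := by
    intro a ha
    obtain ⟨x, hx, rfl⟩ := Finset.mem_map.mp ha
    have h := (hXmem x).mp hx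
    exact ⟨h.1, h.2.1⟩
  have hd₁ : Disjoint SpF SqF := Finset.disjoint_left.mpr
    (fun a ha hb => (hSpmem a ha).1 (hSqmem a hb).1)
  have hd₂ : Disjoint (SpF.disjUnion SqF hd₁) MF := Finset.disjoint_left.mpr (by
    intro a ha hm
    rcases Finset.mem_disjUnion.mp ha with h | h
    · exact (hMmem a hm).2 (hSpmem a h).2
    · exact (hMmem a hm).1 (hSqmem a h).1)
  let SH : Finset ((ZMod p × ZMod q) × (ZMod p × ZMod q)) :=
    (SpF.disjUnion SqF hd₁).disjUnion MF hd₂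
  have hSHval : SH.val = SpF.val + SqF.val + MF.val := rfl
  -- total counts in the product group, elements
  have hE : ∀ z : ZMod p × ZMod q, (SH.val.bind quadE).count z
      = if (z = 0 ∨ z = ((q : ZMod p) * α₁, 0) ∨ z = -((q : ZMod p) * α₁, 0)
          ∨ z = (0, (p : ZMod q) * α₂) ∨ z = -(0, (p : ZMod q) * α₂)) then 0 else 1 := by
    intro z
    rw [hSHval, Multiset.add_bind, Multiset.add_bind, Multiset.count_add,
      Multiset.count_add, hSpE z, hSqE z, hME z]
    by_cases hz1 : z.1 = 0 <;> by_cases hz2 : z.2 = 0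
    · have hz0 : z = 0 := Prod.ext_iff.mpr ⟨hz1, hz2⟩
      rw [if_pos hz2, if_pos hz1,
        if_neg (show ¬(z.1 ≠ 0 ∧ z.2 ≠ 0) from fun hc => hc.1 hz1),
        if_pos (show (q : ZMod p)⁻¹ * z.1 ∈ ({0, α₁, -α₁} : Set (ZMod p)) by
          rw [hz1, mul_zero]; exact Set.mem_insert _ _),
        if_pos (show (p : ZMod q)⁻¹ * z.2 ∈ ({0, α₂, -α₂} : Set (ZMod q)) by
          rw [hz2, mul_zero]; exact Set.mem_insert _ _),
        if_pos (Or.inl hz0)]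
    · -- z.1 = 0, z.2 ≠ 0 : only the SqF part contributes
      rw [if_neg hz2, if_pos hz1,
        if_neg (show ¬(z.1 ≠ 0 ∧ z.2 ≠ 0) from fun hc => hc.1 hz1), zero_add, add_zero]
      have hiff : ((p : ZMod q)⁻¹ * z.2 ∈ ({0, α₂, -α₂} : Set (ZMod q)))
          ↔ (z = 0 ∨ z = ((q : ZMod p) * α₁, 0) ∨ z = -((q : ZMod p) * α₁, 0)
            ∨ z = (0, (p : ZMod q) * α₂) ∨ z = -(0, (p : ZMod q) * α₂)) := by
        simp only [Set.mem_insert_iff, Set.mem_singleton_iff]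
        constructor
        · rintro (h | h | h)
          · exact absurd ((mul_eq_zero.mp h).resolve_left (inv_ne_zero hpb)) hz2
          · refine Or.inr (Or.inr (Or.inr (Or.inl (Prod.ext_iff.mpr ⟨hz1, ?_⟩))))
            rw [← h, ← mul_assoc, mul_inv_cancel₀ hpb, one_mul]
          · refine Or.inr (Or.inr (Or.inr (Or.inr (Prod.ext_iff.mpr
              ⟨by rw [hz1]; exact neg_zero.symm, ?_⟩))))
            show z.2 = -((p : ZMod q) * α₂)
            have hzz : (p : ZMod q) * ((p : ZMod q)⁻¹ * z.2) = z.2 := by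
              rw [← mul_assoc, mul_inv_cancel₀ hpb, one_mul]
            rw [← hzz, h, mul_neg]
        · rintro (h | h | h | h | h)
          · exact absurd (by rw [h]; rfl) hz2
          · exact absurd (by rw [h]) hz2
          · exact absurd (by rw [h]; exact neg_zero) hz2
          · right; left
            rw [h]
            show (p : ZMod q)⁻¹ * ((p : ZMod q) * α₂) = α₂
            rw [← mul_assoc, inv_mul_cancel₀ hpb, one_mul]
          · right; right
            rw [h]
            show (p : ZMod q)⁻¹ * -((p : ZMod q) * α₂) = -α₂
            rw [mul_neg, ← mul_assoc, inv_mul_cancel₀ hpb, one_mul]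
      exact if_congr hiff rfl rfl
    · -- z.1 ≠ 0, z.2 = 0 : only the SpF part contributes
      rw [if_pos hz2, if_neg hz1,
        if_neg (show ¬(z.1 ≠ 0 ∧ z.2 ≠ 0) from fun hc => hc.2 hz2), add_zero, add_zero]
      have hiff : ((q : ZMod p)⁻¹ * z.1 ∈ ({0, α₁, -α₁} : Set (ZMod p)))
          ↔ (z = 0 ∨ z = ((q : ZMod p) * α₁, 0) ∨ z = -((q : ZMod p) * α₁, 0)
            ∨ z = (0, (p : ZMod q) * α₂) ∨ z = -(0, (p : ZMod q) * α₂)) := by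
        simp only [Set.mem_insert_iff, Set.mem_singleton_iff]
        constructor
        · rintro (h | h | h)
          · exact absurd ((mul_eq_zero.mp h).resolve_left (inv_ne_zero hqb)) hz1
          · refine Or.inr (Or.inl (Prod.ext_iff.mpr ⟨?_, hz2⟩))
            rw [← h, ← mul_assoc, mul_inv_cancel₀ hqb, one_mul]
          · refine Or.inr (Or.inr (Or.inl (Prod.ext_iff.mpr
              ⟨?_, by rw [hz2]; exact neg_zero.symm⟩)))
            show z.1 = -((q : ZMod p) * α₁)
            have hzz : (q : ZMod p) * ((q : ZMod p)⁻¹ * z.1) = z.1 := by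
              rw [← mul_assoc, mul_inv_cancel₀ hqb, one_mul]
            rw [← hzz, h, mul_neg]
        · rintro (h | h | h | h | h)
          · exact absurd (by rw [h]; rfl) hz1
          · right; left
            rw [h]
            show (q : ZMod p)⁻¹ * ((q : ZMod p) * α₁) = α₁
            rw [← mul_assoc, inv_mul_cancel₀ hqb, one_mul]
          · right; right
            rw [h]
            show (q : ZMod p)⁻¹ * (-((q : ZMod p) * α₁)) = -α₁
            rw [mul_neg, ← mul_assoc, inv_mul_cancel₀ hqb, one_mul]
          · exact absurd (by rw [h]) hz1
          · exact absurd (by rw [h]; exact neg_zero) hz1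
      exact if_congr hiff rfl rfl
    · -- both nonzero : only the mixed part contributes
      have hbig : ¬(z = 0 ∨ z = ((q : ZMod p) * α₁, 0) ∨ z = -((q : ZMod p) * α₁, 0)
          ∨ z = (0, (p : ZMod q) * α₂) ∨ z = -(0, (p : ZMod q) * α₂)) := by
        rintro (h | h | h | h | h)
        · exact hz1 (by rw [h]; rfl)
        · exact hz2 (by rw [h])
        · exact hz2 (by rw [h]; exact neg_zero)
        · exact hz1 (by rw [h])
        · exact hz1 (by rw [h]; exact neg_zero)
      rw [if_neg hz2, if_neg hz1, if_pos (show ¬z.1 = 0 ∧ ¬z.2 = 0 from ⟨hz1, hz2⟩),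
        if_neg hbig]
  -- total counts in the product group, sums
  have hS : ∀ z : ZMod p × ZMod q, (SH.val.bind quadS).count z
      = if (z = 0 ∨ z = ((q : ZMod p) * β₁, 0) ∨ z = -((q : ZMod p) * β₁, 0)
          ∨ z = (0, (p : ZMod q) * β₂) ∨ z = -(0, (p : ZMod q) * β₂)) then 0 else 1 := by
    intro z
    rw [hSHval, Multiset.add_bind, Multiset.add_bind, Multiset.count_add,
      Multiset.count_add, hSpS z, hSqS z, hMS z]
    by_cases hz1 : z.1 = 0 <;> by_cases hz2 : z.2 = 0
    · have hz0 : z = 0 := Prod.ext_iff.mpr ⟨hz1, hz2⟩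
      rw [if_pos hz2, if_pos hz1,
        if_neg (show ¬(z.1 ≠ 0 ∧ z.2 ≠ 0) from fun hc => hc.1 hz1),
        if_pos (show (q : ZMod p)⁻¹ * z.1 ∈ ({0, β₁, -β₁} : Set (ZMod p)) by
          rw [hz1, mul_zero]; exact Set.mem_insert _ _),
        if_pos (show (p : ZMod q)⁻¹ * z.2 ∈ ({0, β₂, -β₂} : Set (ZMod q)) by
          rw [hz2, mul_zero]; exact Set.mem_insert _ _),
        if_pos (Or.inl hz0)]
    · rw [if_neg hz2, if_pos hz1,
        if_neg (show ¬(z.1 ≠ 0 ∧ z.2 ≠ 0) from fun hc => hc.1 hz1), zero_add, add_zero]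
      have hiff : ((p : ZMod q)⁻¹ * z.2 ∈ ({0, β₂, -β₂} : Set (ZMod q)))
          ↔ (z = 0 ∨ z = ((q : ZMod p) * β₁, 0) ∨ z = -((q : ZMod p) * β₁, 0)
            ∨ z = (0, (p : ZMod q) * β₂) ∨ z = -(0, (p : ZMod q) * β₂)) := by
        simp only [Set.mem_insert_iff, Set.mem_singleton_iff]
        constructor
        · rintro (h | h | h)
          · exact absurd ((mul_eq_zero.mp h).resolve_left (inv_ne_zero hpb)) hz2
          · refine Or.inr (Or.inr (Or.inr (Or.inl (Prod.ext_iff.mpr ⟨hz1, ?_⟩))))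
            rw [← h, ← mul_assoc, mul_inv_cancel₀ hpb, one_mul]
          · refine Or.inr (Or.inr (Or.inr (Or.inr (Prod.ext_iff.mpr
              ⟨by rw [hz1]; exact neg_zero.symm, ?_⟩))))
            show z.2 = -((p : ZMod q) * β₂)
            have hzz : (p : ZMod q) * ((p : ZMod q)⁻¹ * z.2) = z.2 := by
              rw [← mul_assoc, mul_inv_cancel₀ hpb, one_mul]
            rw [← hzz, h, mul_neg]
        · rintro (h | h | h | h | h)
          · exact absurd (by rw [h]; rfl) hz2
          · exact absurd (by rw [h]) hz2
          · exact absurd (by rw [h]; exact neg_zero) hz2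
          · right; left
            rw [h]
            show (p : ZMod q)⁻¹ * ((p : ZMod q) * β₂) = β₂
            rw [← mul_assoc, inv_mul_cancel₀ hpb, one_mul]
          · right; right
            rw [h]
            show (p : ZMod q)⁻¹ * -((p : ZMod q) * β₂) = -β₂
            rw [mul_neg, ← mul_assoc, inv_mul_cancel₀ hpb, one_mul]
      exact if_congr hiff rfl rfl
    · rw [if_pos hz2, if_neg hz1,
        if_neg (show ¬(z.1 ≠ 0 ∧ z.2 ≠ 0) from fun hc => hc.2 hz2), add_zero, add_zero]
      have hiff : ((q : ZMod p)⁻¹ * z.1 ∈ ({0, β₁, -β₁} : Set (ZMod p)))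
          ↔ (z = 0 ∨ z = ((q : ZMod p) * β₁, 0) ∨ z = -((q : ZMod p) * β₁, 0)
            ∨ z = (0, (p : ZMod q) * β₂) ∨ z = -(0, (p : ZMod q) * β₂)) := by
        simp only [Set.mem_insert_iff, Set.mem_singleton_iff]
        constructor
        · rintro (h | h | h)
          · exact absurd ((mul_eq_zero.mp h).resolve_left (inv_ne_zero hqb)) hz1
          · refine Or.inr (Or.inl (Prod.ext_iff.mpr ⟨?_, hz2⟩))
            rw [← h, ← mul_assoc, mul_inv_cancel₀ hqb, one_mul]
          · refine Or.inr (Or.inr (Or.inl (Prod.ext_iff.mpr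
              ⟨?_, by rw [hz2]; exact neg_zero.symm⟩)))
            show z.1 = -((q : ZMod p) * β₁)
            have hzz : (q : ZMod p) * ((q : ZMod p)⁻¹ * z.1) = z.1 := by
              rw [← mul_assoc, mul_inv_cancel₀ hqb, one_mul]
            rw [← hzz, h, mul_neg]
        · rintro (h | h | h | h | h)
          · exact absurd (by rw [h]; rfl) hz1
          · right; left
            rw [h]
            show (q : ZMod p)⁻¹ * ((q : ZMod p) * β₁) = β₁
            rw [← mul_assoc, inv_mul_cancel₀ hqb, one_mul]
          · right; right
            rw [h]
            show (q : ZMod p)⁻¹ * (-((q : ZMod p) * β₁)) = -β₁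
            rw [mul_neg, ← mul_assoc, inv_mul_cancel₀ hqb, one_mul]
          · exact absurd (by rw [h]) hz1
          · exact absurd (by rw [h]; exact neg_zero) hz1
      exact if_congr hiff rfl rfl
    · have hbig : ¬(z = 0 ∨ z = ((q : ZMod p) * β₁, 0) ∨ z = -((q : ZMod p) * β₁, 0)
          ∨ z = (0, (p : ZMod q) * β₂) ∨ z = -(0, (p : ZMod q) * β₂)) := by
        rintro (h | h | h | h | h)
        · exact hz1 (by rw [h]; rfl)
        · exact hz2 (by rw [h])
        · exact hz2 (by rw [h]; exact neg_zero)
        · exact hz1 (by rw [h])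
        · exact hz1 (by rw [h]; exact neg_zero)
      rw [if_neg hz2, if_neg hz1, if_pos (show ¬z.1 = 0 ∧ ¬z.2 = 0 from ⟨hz1, hz2⟩),
        if_neg hbig]
  -- transport along the Chinese Remainder isomorphism
  have hcop : Nat.Coprime p q := (Nat.coprime_primes hp hq).mpr (by omega)
  let e : ZMod (p * q) ≃+* ZMod p × ZMod q := ZMod.chineseRemainder hcop
  let ψ : (ZMod p × ZMod q) →+ ZMod (p * q) :=
    AddMonoidHom.mk' (fun x => e.symm x) (fun a b => map_add e.symm a b)
  have hψapp : ∀ x : ZMod p × ZMod q, ψ x = e.symm x := fun _ => rfl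
  have hψ : Function.Injective ψ := fun a b h => e.symm.injective h
  have hcast : ∀ (n : ℕ), e (n : ZMod (p * q)) = ((n : ZMod p), (n : ZMod q)) := by
    intro n
    rw [map_natCast]
    exact Prod.ext_iff.mpr ⟨Prod.fst_natCast n, Prod.snd_natCast n⟩
  have htqα : e ((q : ZMod (p * q)) * (α₁.val : ZMod (p * q))) = ((q : ZMod p) * α₁, 0) := by
    rw [map_mul, hcast q, hcast α₁.val, Prod.mk_mul_mk, ZMod.natCast_self,
      zero_mul, ZMod.natCast_rightInverse α₁]
  have htpα : e ((p : ZMod (p * q)) * (α₂.val : ZMod (p * q))) = (0, (p : ZMod q) * α₂) := by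
    rw [map_mul, hcast p, hcast α₂.val, Prod.mk_mul_mk, ZMod.natCast_self,
      zero_mul, ZMod.natCast_rightInverse α₂]
  have htqβ : e ((q : ZMod (p * q)) * (β₁.val : ZMod (p * q))) = ((q : ZMod p) * β₁, 0) := by
    rw [map_mul, hcast q, hcast β₁.val, Prod.mk_mul_mk, ZMod.natCast_self,
      zero_mul, ZMod.natCast_rightInverse β₁]
  have htpβ : e ((p : ZMod (p * q)) * (β₂.val : ZMod (p * q))) = (0, (p : ZMod q) * β₂) := by
    rw [map_mul, hcast p, hcast β₂.val, Prod.mk_mul_mk, ZMod.natCast_self,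
      zero_mul, ZMod.natCast_rightInverse β₂]
  refine ⟨SH.map ⟨Prod.map ψ ψ, Prod.map_injective.mpr ⟨hψ, hψ⟩⟩, fun z => ?_, fun z => ?_⟩
  · have hkey : ∀ (t : ZMod (p * q)) (y : ZMod p × ZMod q), e t = y → ((e z = y) ↔ z = t) := by
      intro t y ht
      constructor
      · intro h
        exact e.injective (by rw [h, ← ht])
      · intro h
        rw [h]; exact ht
    have key : ((SH.map ⟨Prod.map ψ ψ, Prod.map_injective.mpr ⟨hψ, hψ⟩⟩).val.bind quadE).count z
        = if z ∈ ({0, (q : ZMod (p * q)) * (α₁.val : ZMod (p * q)),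
              -((q : ZMod (p * q)) * (α₁.val : ZMod (p * q))),
              (p : ZMod (p * q)) * (α₂.val : ZMod (p * q)),
              -((p : ZMod (p * q)) * (α₂.val : ZMod (p * q)))} : Set (ZMod (p * q)))
          then 0 else 1 := by
      rw [bind_map_quad ψ hψ SH quadE quadE (quadE_map ψ)]
      have hz : z = ψ (e z) := (e.symm_apply_apply z).symm
      calc ((SH.val.bind quadE).map ψ).count z
          = ((SH.val.bind quadE).map ψ).count (ψ (e z)) := by rw [← hz]
        _ = (SH.val.bind quadE).count (e z) := count_map_range ψ hψ _ _
        _ = _ := by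
            rw [hE (e z)]
            refine if_congr ?_ rfl rfl
            simp only [Set.mem_insert_iff, Set.mem_singleton_iff]
            rw [hkey 0 0 (map_zero e), hkey _ _ htqα, hkey _ _ (by rw [map_neg, htqα]),
              hkey _ _ htpα, hkey _ _ (by rw [map_neg, htpα])]
    convert key using 2
    rfl
  · have hkey : ∀ (t : ZMod (p * q)) (y : ZMod p × ZMod q), e t = y → ((e z = y) ↔ z = t) := by
      intro t y ht
      constructor
      · intro h
        exact e.injective (by rw [h, ← ht])
      · intro h
        rw [h]; exact ht
    have key : ((SH.map ⟨Prod.map ψ ψ, Prod.map_injective.mpr ⟨hψ, hψ⟩⟩).val.bind quadS).count z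
        = if z ∈ ({0, (q : ZMod (p * q)) * (β₁.val : ZMod (p * q)),
              -((q : ZMod (p * q)) * (β₁.val : ZMod (p * q))),
              (p : ZMod (p * q)) * (β₂.val : ZMod (p * q)),
              -((p : ZMod (p * q)) * (β₂.val : ZMod (p * q)))} : Set (ZMod (p * q)))
          then 0 else 1 := by
      rw [bind_map_quad ψ hψ SH quadS quadS (quadS_map ψ)]
      have hz : z = ψ (e z) := (e.symm_apply_apply z).symm
      calc ((SH.val.bind quadS).map ψ).count z
          = ((SH.val.bind quadS).map ψ).count (ψ (e z)) := by rw [← hz]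
        _ = (SH.val.bind quadS).count (e z) := count_map_range ψ hψ _ _
        _ = _ := by
            rw [hS (e z)]
            refine if_congr ?_ rfl rfl
            simp only [Set.mem_insert_iff, Set.mem_singleton_iff]
            rw [hkey 0 0 (map_zero e), hkey _ _ htqβ, hkey _ _ (by rw [map_neg, htqβ]),
              hkey _ _ htpβ, hkey _ _ (by rw [map_neg, htpβ])]
    convert key using 2
    rfl
end

section
/- Let p ≡ 7 (mod 8) be a prime, let √2 denote a square root of 2 in Z_{p²}, and set θ = 1 + √2. If the image of θ generates the quotient of the unit group U(p²) of Z_{p²} by {1,−1} (equivalently, every unit of Z_{p²} equals ±θ^i for some i), then there exists a PPS(Z_{p²}, {0, 1, −1, p, −p}, {0, θ−1, −(θ−1), p(θ−1), −p(θ−1)}). -/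
open scoped Classical

lemma zpow_two_cases {G : Type*} [CommGroup G] (ε : G) (hε2 : ε ^ 2 = 1) (k : ℤ) :
    ε ^ k = 1 ∨ ε ^ k = ε := by
  rcases Int.even_or_odd k with ⟨t, rfl⟩ | ⟨t, rfl⟩
  · left
    have : ε ^ (t + t) = (ε ^ (2:ℤ)) ^ t := by
      rw [← zpow_mul]; ring_nf
    rw [this]
    have h2 : ε ^ (2:ℤ) = 1 := by rw [show (2:ℤ) = ((2:ℕ):ℤ) by norm_num, zpow_natCast, hε2]
    rw [h2, one_zpow]
  · right
    have : ε ^ (2*t + 1) = (ε ^ (2:ℤ)) ^ t * ε := by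
      rw [← zpow_mul, ← zpow_add_one]
    rw [this]
    have h2 : ε ^ (2:ℤ) = 1 := by rw [show (2:ℤ) = ((2:ℕ):ℤ) by norm_num, zpow_natCast, hε2]
    rw [h2, one_zpow, one_mul]

lemma quot_key {G : Type*} [CommGroup G] [Finite G] (ε u : G) (hε : ε ≠ 1) (hε2 : ε ^ 2 = 1)
    (hgen : ∀ x : G, ∃ i : ℕ, x = u ^ i ∨ x = ε * u ^ i) (a b : ℕ) :
    (u ^ a = u ^ b ∨ u ^ a = ε * u ^ b) ↔ a ≡ b [MOD Nat.card G / 2] := by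
  classical
  have hmemH : ∀ z : G, z ∈ Subgroup.zpowers ε → z = 1 ∨ z = ε := by
    rintro z ⟨k, rfl⟩
    exact zpow_two_cases ε hε2 k
  have hordε : orderOf ε = 2 := orderOf_eq_prime hε2 hε
  have hcardH : Nat.card (Subgroup.zpowers ε) = 2 := by rw [Nat.card_zpowers, hordε]
  have hcardQ : Nat.card (G ⧸ Subgroup.zpowers ε) = Nat.card G / 2 := by
    have := Subgroup.card_eq_card_quotient_mul_card_subgroup (Subgroup.zpowers ε)
    rw [hcardH] at this
    omega
  have hπε : QuotientGroup.mk' (Subgroup.zpowers ε) ε = 1 := by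
    rw [QuotientGroup.mk'_apply, QuotientGroup.eq_one_iff]
    exact Subgroup.mem_zpowers ε
  set π := QuotientGroup.mk' (Subgroup.zpowers ε) with hπ
  have hQgen : ∀ q : G ⧸ Subgroup.zpowers ε, q ∈ Subgroup.zpowers (π u) := by
    intro q
    obtain ⟨x, rfl⟩ := QuotientGroup.mk'_surjective (Subgroup.zpowers ε) q
    obtain ⟨i, rfl | rfl⟩ := hgen x
    · exact ⟨(i : ℤ), by show π u ^ (i:ℤ) = _; rw [zpow_natCast, ← map_pow]⟩
    · exact ⟨(i : ℤ), by show π u ^ (i:ℤ) = _; rw [zpow_natCast, ← map_pow, map_mul, hπε, one_mul]⟩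
  have hord : orderOf (π u) = Nat.card G / 2 := by
    rw [orderOf_eq_card_of_forall_mem_zpowers hQgen, hcardQ]
  constructor
  · rintro (h | h)
    · have : (π u) ^ a = (π u) ^ b := by rw [← map_pow, ← map_pow, h]
      rwa [pow_eq_pow_iff_modEq, hord] at this
    · have : (π u) ^ a = (π u) ^ b := by
        rw [← map_pow, ← map_pow, h, map_mul, hπε, one_mul]
      rwa [pow_eq_pow_iff_modEq, hord] at this
  · intro hab
    have h1 : (π u) ^ a = (π u) ^ b := by rw [pow_eq_pow_iff_modEq, hord]; exact hab
    rw [← map_pow, ← map_pow, QuotientGroup.mk'_eq_mk'] at h1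
    obtain ⟨z, hz, hz2⟩ := h1
    rcases hmemH z hz with h | h
    · left; rw [← hz2, h, mul_one]
    · right
      rw [← hz2, h, mul_comm ε (u ^ a * ε), mul_assoc, ← pow_two, hε2, mul_one]

lemma units_pm {M : Type*} [Monoid M] [HasDistribNeg M] (u : Mˣ) (a b : ℕ) :
    ((u:M)^a = (u:M)^b ∨ (u:M)^a = -((u:M)^b)) ↔ (u^a = u^b ∨ u^a = (-1) * u^b) := by
  simp [Units.ext_iff]


lemma count4 {α : Type*} [inst : DecidableEq α] (z a b c d : α) :
    Multiset.count z ({a, b, c, d} : Multiset α) =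
      ((if z = a then 1 else 0) + (if z = b then 1 else 0))
      + ((if z = c then 1 else 0) + (if z = d then 1 else 0)) := by
  simp only [Multiset.insert_eq_cons, Multiset.count_cons, Multiset.count_singleton]
  ring

lemma perm4 {α : Type*} [DecidableEq α] (a b c d : α) :
    ({c, d, b, a} : Multiset α) = {a, b, c, d} := by
  refine Multiset.ext.2 (fun x => ?_)
  rw [count4, count4]
  ring

lemma count_bind_map {α β γ : Type*} [inst : DecidableEq γ] (s : Finset α) (f : α → β)
    (g : β → Multiset γ) (z : γ) :
    Multiset.count z ((Multiset.map f s.val).bind g) = ∑ i ∈ s, Multiset.count z (g (f i)) := by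
  rw [Multiset.count_bind, Multiset.map_map]
  rfl

set_option maxHeartbeats 3000000 in
theorem stmt16 (p : ℕ) (hp : Nat.Prime p) (hp8 : p % 8 = 7)
    (r : ZMod (p ^ 2)) (hr : r ^ 2 = 2)
    (hgen : ∀ x : ZMod (p ^ 2), IsUnit x →
      ∃ i : ℕ, x = (1 + r) ^ i ∨ x = -((1 + r) ^ i)) :
    ∃ S : Finset (ZMod (p ^ 2) × ZMod (p ^ 2)),
      IsPPS ({0, 1, -1, (p : ZMod (p ^ 2)), -(p : ZMod (p ^ 2))} : Set (ZMod (p ^ 2)))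
            ({0, (1 + r) - 1, -((1 + r) - 1), (p : ZMod (p ^ 2)) * ((1 + r) - 1),
              -((p : ZMod (p ^ 2)) * ((1 + r) - 1))} : Set (ZMod (p ^ 2))) S := by

  haveI : NeZero (p^2) := ⟨pow_ne_zero 2 hp.ne_zero⟩
  haveI : Fact (Nat.Prime p) := ⟨hp⟩
  obtain ⟨k, hk⟩ : ∃ k, p = 8*k+7 := ⟨p/8, by omega⟩
  -- cardinalities
  have hcard : Nat.card (ZMod (p^2))ˣ = 2 * ((8*k+7)*(4*k+3)) := by
    rw [Nat.card_eq_fintype_card, ZMod.card_units_eq_totient,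
      Nat.totient_prime_pow hp (by norm_num)]
    subst hk
    have h1 : 8*k+7-1 = 8*k+6 := by omega
    norm_num [pow_one, h1]
    ring
  have hcard' : Nat.card (ZMod p)ˣ = 2 * (4*k+3) := by
    rw [Nat.card_eq_fintype_card, ZMod.card_units_eq_totient, Nat.totient_prime hp]
    omega
  -- neg one ≠ one
  haveI : Fact (2 < p^2) := ⟨by nlinarith [hp.two_le]⟩
  haveI : Fact (1 < p^2) := ⟨by nlinarith [hp.two_le]⟩
  haveI : Fact (2 < p) := ⟨by omega⟩
  have hne1 : (-1 : ZMod (p^2)) ≠ 1 := ZMod.neg_one_ne_one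
  have hne1' : (-1 : ZMod p) ≠ 1 := ZMod.neg_one_ne_one
  -- cast hom
  have hdvd : p ∣ p^2 := dvd_pow_self p (by norm_num)
  set ψ := ZMod.castHom hdvd (ZMod p) with hψ
  have hψval : ∀ z : ZMod (p^2), ψ z = ((z.val : ℕ) : ZMod p) := by
    intro z
    conv_lhs => rw [← ZMod.natCast_rightInverse z]
    rw [map_natCast]
  have hψzero : ∀ z : ZMod (p^2), ψ z = 0 ↔ p ∣ z.val := by
    intro z
    rw [hψval, ZMod.natCast_eq_zero_iff]
  have hpmul0 : ∀ z : ZMod (p^2), (p : ZMod (p^2)) * z = 0 ↔ ψ z = 0 := by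
    intro z
    rw [hψzero]
    conv_lhs => rw [← ZMod.natCast_rightInverse z]
    rw [show ((p:ZMod (p^2)) * (z.val : ℕ) = ((p * z.val : ℕ) : ZMod (p^2))) by push_cast; ring,
      ZMod.natCast_eq_zero_iff]
    constructor
    · rintro ⟨c, hc⟩
      exact ⟨c, Nat.eq_of_mul_eq_mul_left hp.pos (by rw [hc]; ring)⟩
    · rintro ⟨c, hc⟩
      exact ⟨c, by rw [hc]; ring⟩
  have hpmul : ∀ x y : ZMod (p^2), (p : ZMod (p^2)) * x = (p : ZMod (p^2)) * y ↔ ψ x = ψ y := by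
    intro x y
    rw [← sub_eq_zero, ← mul_sub, hpmul0, map_sub, sub_eq_zero]
  -- nonunits
  have hNU : ∀ x : ZMod (p^2), ¬ IsUnit x → ψ x = 0 := by
    intro x hx
    rw [hψzero]
    by_contra hdv
    apply hx
    have hcop : Nat.Coprime x.val p := (Nat.coprime_comm.mp ((hp.coprime_iff_not_dvd).2 hdv))
    have := (ZMod.isUnit_iff_coprime x.val (p^2)).2 (hcop.pow_right 2)
    rwa [ZMod.natCast_rightInverse x] at this
  have hU : ∀ x : ZMod (p^2), IsUnit x → ψ x ≠ 0 := by
    intro x hx h0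
    have : IsUnit (ψ x) := hx.map ψ
    rw [h0] at this
    exact not_isUnit_zero this
  have hlift : ∀ y : ZMod p, y ≠ 0 → ∃ x : ZMod (p^2), IsUnit x ∧ ψ x = y := by
    intro y hy
    refine ⟨((y.val : ℕ) : ZMod (p^2)), ?_, ?_⟩
    · by_contra h
      have := hNU _ h
      rw [map_natCast, ZMod.natCast_rightInverse y] at this
      exact hy this
    · rw [map_natCast, ZMod.natCast_rightInverse y]
  have h2p : Nat.Coprime 2 p := (Nat.coprime_primes Nat.prime_two hp).2 (by omega)
  have h2u : IsUnit (2 : ZMod (p^2)) := by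
    have := (ZMod.isUnit_iff_coprime 2 (p^2)).2 (h2p.pow_right 2)
    simpa using this
  have hru : IsUnit r := isUnit_of_mul_isUnit_left (show IsUnit (r*r) by rwa [← pow_two, hr])
  -- θ is a unit
  have hθmul : (1+r) * (r-1) = 1 := by
    have : (1+r)*(r-1) = r^2 - 1 := by ring
    rw [this, hr]; norm_num
  have hθu : IsUnit (1 + r) := IsUnit.of_mul_eq_one _ hθmul
  set θ : ZMod (p^2) := 1 + r with hθdef
  set u : (ZMod (p^2))ˣ := hθu.unit with hudef
  have hu : (u : ZMod (p^2)) = θ := hθu.unit_spec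
  have hgenU : ∀ x : (ZMod (p^2))ˣ, ∃ i : ℕ, x = u ^ i ∨ x = (-1) * u ^ i := by
    intro x
    obtain ⟨i, hi | hi⟩ := hgen x x.isUnit
    · exact ⟨i, Or.inl (Units.ext (by rw [Units.val_pow_eq_pow_val, hu, ← hi]))⟩
    · refine ⟨i, Or.inr (Units.ext ?_)⟩
      rw [Units.val_mul, Units.val_pow_eq_pow_val, hu, Units.val_neg, Units.val_one]
      rw [hi]; ring
  set m : ℕ := (8*k+7)*(4*k+3) with hmdef
  have hm2 : Nat.card (ZMod (p^2))ˣ / 2 = m := by rw [hcard]; omega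
  have hKU := quot_key (-1 : (ZMod (p^2))ˣ) u
    (fun h => hne1 (by simpa using congrArg Units.val h)) (by rw [neg_one_sq]) hgenU
  have lemZ : ∀ a b : ℕ, (θ^a = θ^b ∨ θ^a = -θ^b) ↔ a ≡ b [MOD m] := by
    intro a b
    rw [← hu, units_pm u a b, hKU, hm2]
  -- mod p units
  set θ' : ZMod p := ψ θ with hθ'def
  have hθ'u : IsUnit θ' := hθu.map ψ
  set u' : (ZMod p)ˣ := hθ'u.unit with hu'def
  have hu' : (u' : ZMod p) = θ' := hθ'u.unit_spec
  have hgenU' : ∀ x : (ZMod p)ˣ, ∃ i : ℕ, x = u' ^ i ∨ x = (-1) * u' ^ i := by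
    intro x
    obtain ⟨w, hw, hwx⟩ := hlift (x : ZMod p) (Units.ne_zero x)
    obtain ⟨i, hi | hi⟩ := hgen w hw
    · refine ⟨i, Or.inl (Units.ext ?_)⟩
      rw [Units.val_pow_eq_pow_val, hu', hθ'def, ← map_pow, ← hwx, hi]
    · refine ⟨i, Or.inr (Units.ext ?_)⟩
      rw [Units.val_mul, Units.val_pow_eq_pow_val, hu', Units.val_neg, Units.val_one, hθ'def,
        ← map_pow, ← hwx, hi, map_neg]
      ring
  set n : ℕ := 4*k+3 with hndef
  have hn2 : Nat.card (ZMod p)ˣ / 2 = n := by rw [hcard']; omega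
  have hKU' := quot_key (-1 : (ZMod p)ˣ) u'
    (fun h => hne1' (by simpa using congrArg Units.val h)) (by rw [neg_one_sq]) hgenU'
  have lemZ' : ∀ a b : ℕ, (θ'^a = θ'^b ∨ θ'^a = -θ'^b) ↔ a ≡ b [MOD n] := by
    intro a b
    rw [← hu', units_pm u' a b, hKU', hn2]
  have lemP : ∀ a b : ℕ, ((p:ZMod (p^2))*θ^a = (p:ZMod (p^2))*θ^b ∨
      (p:ZMod (p^2))*θ^a = -((p:ZMod (p^2))*θ^b)) ↔ a ≡ b [MOD n] := by
    intro a b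
    rw [← lemZ' a b, hpmul, mul_comm ((p:ZMod (p^2))) (θ^b), ← neg_mul,
      mul_comm (-(θ^b)) ((p:ZMod (p^2))), hpmul]
    rw [map_pow, map_pow, map_neg, map_pow]
  -- basic nonequalities
  have h2ne : (2 : ZMod (p^2)) ≠ 0 := fun h => not_isUnit_zero (h ▸ h2u)
  have h2u' : IsUnit (2 : ZMod p) := by
    have := (ZMod.isUnit_iff_coprime 2 p).2 h2p
    simpa using this
  have h2ne' : (2 : ZMod p) ≠ 0 := fun h => not_isUnit_zero (h ▸ h2u')
  have hθpow : ∀ a : ℕ, IsUnit (θ^a) := fun a => hθu.pow a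
  have hθ'pow : ∀ a : ℕ, IsUnit (θ'^a) := fun a => hθ'u.pow a
  have hnegself : ∀ a : ℕ, θ^a ≠ -θ^a := by
    intro a h
    have h2 : (2:ZMod (p^2)) * θ^a = 0 * θ^a := by rw [zero_mul]; linear_combination h
    exact h2ne ((hθpow a).mul_right_cancel h2)
  have hnegself' : ∀ a : ℕ, θ'^a ≠ -θ'^a := by
    intro a h
    have h2 : (2:ZMod p) * θ'^a = 0 * θ'^a := by rw [zero_mul]; linear_combination h
    exact h2ne' ((hθ'pow a).mul_right_cancel h2)
  have hpnu : ∀ x : ZMod (p^2), ¬ IsUnit ((p:ZMod (p^2)) * x) := by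
    intro x h
    apply hU _ h
    rw [map_mul, map_natCast, ZMod.natCast_self, zero_mul]
  have hpθne0 : ∀ a : ℕ, (p:ZMod (p^2)) * θ^a ≠ 0 := by
    intro a h
    have h1 : (p:ZMod (p^2)) * θ^a = (p:ZMod (p^2)) * 0 := by rw [mul_zero, h]
    have h2 := (hpmul _ _).1 h1
    rw [map_zero, map_pow] at h2
    exact not_isUnit_zero (h2 ▸ (hθ'pow a))
  have hpnegself : ∀ a : ℕ, (p:ZMod (p^2))*θ^a ≠ -((p:ZMod (p^2))*θ^a) := by
    intro a h
    rw [show -((p:ZMod (p^2))*θ^a) = (p:ZMod (p^2)) * (-θ^a) by ring] at h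
    have h2 := (hpmul _ _).1 h
    rw [map_neg, map_pow] at h2
    exact hnegself' a h2
  -- classification
  have hm_pos : 0 < m := by rw [hmdef]; positivity
  have hn_pos : 0 < n := by rw [hndef]; omega
  have classify : ∀ z : ZMod (p^2), z = 0 ∨ (∃ j, j < m ∧ (z = θ^j ∨ z = -θ^j)) ∨
      (∃ j, j < n ∧ (z = (p:ZMod (p^2))*θ^j ∨ z = -((p:ZMod (p^2))*θ^j))) := by
    intro z
    by_cases hz : IsUnit z
    · right; left
      obtain ⟨i, hi⟩ := hgen z hz
      have hred := (lemZ i (i % m)).2 ((Nat.mod_modEq i m).symm)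
      refine ⟨i % m, Nat.mod_lt _ hm_pos, ?_⟩
      rcases hi with h1|h1 <;> rcases hred with h2|h2
      · left; rw [h1, h2]
      · right; rw [h1, h2]
      · right; rw [h1, h2]
      · left; rw [h1, h2, neg_neg]
    · have hdvd2 : p ∣ z.val := by rw [← hψzero]; exact hNU z hz
      have hzw : z = (p:ZMod (p^2)) * ((z.val / p : ℕ) : ZMod (p^2)) := by
        conv_lhs => rw [← ZMod.natCast_rightInverse z]
        rw [show (p:ZMod (p^2)) * ((z.val / p : ℕ) : ZMod (p^2))
            = (((p * (z.val / p) : ℕ)) : ZMod (p^2)) by push_cast; ring,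
          Nat.mul_div_cancel' hdvd2]
      set w : ZMod (p^2) := ((z.val / p : ℕ) : ZMod (p^2)) with hwdef
      by_cases hw : ψ w = 0
      · left
        have h1 : (p:ZMod (p^2))*w = (p:ZMod (p^2))*0 := (hpmul w 0).2 (by rw [map_zero, hw])
        rw [hzw, h1, mul_zero]
      · right; right
        obtain ⟨x, hxu, hxw⟩ := hlift (ψ w) hw
        obtain ⟨i, hi⟩ := hgen x hxu
        have hpw : (p:ZMod (p^2))*w = (p:ZMod (p^2))*θ^i ∨
            (p:ZMod (p^2))*w = -((p:ZMod (p^2))*θ^i) := by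
          rcases hi with h|h
          · left
            rw [hpmul, ← hxw, h, map_pow]
          · right
            rw [show -((p:ZMod (p^2))*θ^i) = (p:ZMod (p^2)) * (-θ^i) by ring, hpmul,
              ← hxw, h, map_neg, map_pow]
        have hred := (lemP i (i % n)).2 ((Nat.mod_modEq i n).symm)
        refine ⟨i % n, Nat.mod_lt _ hn_pos, ?_⟩
        rcases hpw with h1|h1 <;> rcases hred with h2|h2
        · left; rw [hzw, h1, h2]
        · right; rw [hzw, h1, h2]
        · right; rw [hzw, h1, h2]
        · left; rw [hzw, h1, h2, neg_neg]
  -- helper equalities and construction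
  have hθr : θ - 1 = r := by rw [hθdef]; ring
  have instEq : ∀ (i1 : DecidableEq (ZMod (p^2))) (z : ZMod (p^2)) (M : Multiset (ZMod (p^2))),
      @Multiset.count _ i1 z M = Multiset.count z M := by
    intro i1 z M
    congr!
  have eqZ : ∀ a b : ℕ, a < m → b < m → (θ^a = θ^b ↔ a = b) := by
    intro a b ha hb
    constructor
    · intro h
      have h2 := (lemZ a b).1 (Or.inl h)
      rwa [Nat.ModEq, Nat.mod_eq_of_lt ha, Nat.mod_eq_of_lt hb] at h2
    · rintro rfl; rfl
  have neZ : ∀ a b : ℕ, a < m → b < m → θ^a ≠ -θ^b := by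
    intro a b ha hb h
    have h2 := (lemZ a b).1 (Or.inr h)
    rw [Nat.ModEq, Nat.mod_eq_of_lt ha, Nat.mod_eq_of_lt hb] at h2
    subst h2
    exact hnegself a h
  have eqP : ∀ a b : ℕ, a < n → b < n →
      ((p:ZMod (p^2))*θ^a = (p:ZMod (p^2))*θ^b ↔ a = b) := by
    intro a b ha hb
    constructor
    · intro h
      have h2 := (lemP a b).1 (Or.inl h)
      rwa [Nat.ModEq, Nat.mod_eq_of_lt ha, Nat.mod_eq_of_lt hb] at h2
    · rintro rfl; rfl
  have neP : ∀ a b : ℕ, a < n → b < n →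
      (p:ZMod (p^2))*θ^a ≠ -((p:ZMod (p^2))*θ^b) := by
    intro a b ha hb h
    have h2 := (lemP a b).1 (Or.inr h)
    rw [Nat.ModEq, Nat.mod_eq_of_lt ha, Nat.mod_eq_of_lt hb] at h2
    subst h2
    exact hpnegself a h
  set K : ℕ := 16*k^2+26*k+10 with hKdef
  set K' : ℕ := 2*k+1 with hK'def
  have hKm : m = 2*K+1 := by rw [hmdef, hndef, hKdef]; ring
  have hKn : n = 2*K'+1 := by omega
  -- the main counting lemma
  have cnt1 : ∀ z : ZMod (p^2),
      ((∑ i ∈ Finset.range K, @Multiset.count (ZMod (p^2)) (fun a b => Classical.propDecidable (a = b)) z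
          ({θ^(2*i+1), -θ^(2*i+1), θ^(2*i+2), -θ^(2*i+2)} : Multiset (ZMod (p^2))))
        + ∑ i ∈ Finset.range K', @Multiset.count (ZMod (p^2)) (fun a b => Classical.propDecidable (a = b)) z
          ({(p:ZMod (p^2))*θ^(2*i+1), -((p:ZMod (p^2))*θ^(2*i+1)), (p:ZMod (p^2))*θ^(2*i+2),
            -((p:ZMod (p^2))*θ^(2*i+2))} : Multiset (ZMod (p^2))))
      = @ite ℕ (z ∈ ({0, 1, -1, (p : ZMod (p ^ 2)), -(p : ZMod (p ^ 2))} : Set (ZMod (p ^ 2))))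
        (Classical.propDecidable _) 0 1 := by
    intro z
    rcases classify z with rfl | ⟨j, hj, hzj⟩ | ⟨j, hj, hzj⟩
    · -- z = 0
      rw [if_pos (by simp)]
      refine Nat.add_eq_zero.mpr ⟨Finset.sum_eq_zero fun i _ => ?_, Finset.sum_eq_zero fun i _ => ?_⟩
      · beta_reduce
        rw [count4 (inst := fun a b => Classical.propDecidable (a = b)), if_neg (fun h => (hθpow (2*i+1)).ne_zero h.symm),
          if_neg (fun h => (hθpow (2*i+1)).ne_zero (neg_eq_zero.1 h.symm)),
          if_neg (fun h => (hθpow (2*i+2)).ne_zero h.symm),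
          if_neg (fun h => (hθpow (2*i+2)).ne_zero (neg_eq_zero.1 h.symm))]
        rfl
      · beta_reduce
        rw [count4 (inst := fun a b => Classical.propDecidable (a = b)), if_neg (fun h => hpθne0 (2*i+1) h.symm),
          if_neg (fun h => hpθne0 (2*i+1) (neg_eq_zero.1 h.symm)),
          if_neg (fun h => hpθne0 (2*i+2) h.symm),
          if_neg (fun h => hpθne0 (2*i+2) (neg_eq_zero.1 h.symm))]
        rfl
    · -- z = ±θ^j, a unit
      rcases hzj with rfl | rfl
      · -- z = θ^j
        have hs2 : (∑ i ∈ Finset.range K', @Multiset.count (ZMod (p^2)) (fun a b => Classical.propDecidable (a = b)) (θ^j)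
            ({(p:ZMod (p^2))*θ^(2*i+1), -((p:ZMod (p^2))*θ^(2*i+1)), (p:ZMod (p^2))*θ^(2*i+2),
              -((p:ZMod (p^2))*θ^(2*i+2))} : Multiset (ZMod (p^2)))) = 0 := by
          refine Finset.sum_eq_zero fun i _ => ?_
          beta_reduce
          rw [count4 (inst := fun a b => Classical.propDecidable (a = b)),
            if_neg (fun h => hpnu (θ^(2*i+1)) (by rw [← h]; exact hθpow j)),
            if_neg (fun h => hpnu (-(θ^(2*i+1))) (by rw [mul_neg, ← h]; exact hθpow j)),
            if_neg (fun h => hpnu (θ^(2*i+2)) (by rw [← h]; exact hθpow j)),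
            if_neg (fun h => hpnu (-(θ^(2*i+2))) (by rw [mul_neg, ← h]; exact hθpow j))]
          rfl
        rcases Nat.eq_zero_or_pos j with rfl | hjpos
        · rw [if_pos (by rw [pow_zero]; simp), hs2, Nat.add_zero]
          refine Finset.sum_eq_zero fun i hi => ?_
          have hi' : i < K := Finset.mem_range.1 hi
          beta_reduce
          rw [count4 (inst := fun a b => Classical.propDecidable (a = b)),
            if_neg (fun h => by have := (eqZ 0 (2*i+1) hm_pos (by omega)).1 h; omega),
            if_neg (fun h => neZ 0 (2*i+1) hm_pos (by omega) h),
            if_neg (fun h => by have := (eqZ 0 (2*i+2) hm_pos (by omega)).1 h; omega),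
            if_neg (fun h => neZ 0 (2*i+2) hm_pos (by omega) h)]
          rfl
        · have hnm : θ^j ∉ ({0, 1, -1, (p : ZMod (p ^ 2)), -(p : ZMod (p ^ 2))}
              : Set (ZMod (p ^ 2))) := by
            intro hmem
            simp only [Set.mem_insert_iff, Set.mem_singleton_iff] at hmem
            rcases hmem with h|h|h|h|h
            · exact (hθpow j).ne_zero h
            · have := (eqZ j 0 hj hm_pos).1 (by rw [pow_zero]; exact h)
              omega
            · exact neZ j 0 hj hm_pos (by rw [pow_zero]; exact h) 
            · exact hpnu 1 (by rw [mul_one, ← h]; exact hθpow j)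
            · exact hpnu (-1) (by rw [mul_neg_one, ← h]; exact hθpow j)
          rw [if_neg hnm, hs2, Nat.add_zero]
          refine (Finset.sum_eq_single ((j-1)/2) ?_ ?_).trans ?_
          · intro b hb hbne
            have hb' : b < K := Finset.mem_range.1 hb
            beta_reduce
            rw [count4 (inst := fun a b => Classical.propDecidable (a = b)),
              if_neg (fun h => by have := (eqZ j (2*b+1) hj (by omega)).1 h; omega),
              if_neg (fun h => neZ j (2*b+1) hj (by omega) h),
              if_neg (fun h => by have := (eqZ j (2*b+2) hj (by omega)).1 h; omega),
              if_neg (fun h => neZ j (2*b+2) hj (by omega) h)]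
            rfl
          · intro habs
            exact absurd (Finset.mem_range.2 (by omega)) habs
          · beta_reduce
            rcases (show j = 2*((j-1)/2)+1 ∨ j = 2*((j-1)/2)+2 by omega) with h0 | h0
            · rw [count4 (inst := fun a b => Classical.propDecidable (a = b)), if_pos (by rw [← h0]),
                if_neg (fun h => neZ j (2*((j-1)/2)+1) hj (by omega) h),
                if_neg (fun h => by have := (eqZ j (2*((j-1)/2)+2) hj (by omega)).1 h; omega),
                if_neg (fun h => neZ j (2*((j-1)/2)+2) hj (by omega) h)]
            · rw [count4 (inst := fun a b => Classical.propDecidable (a = b)),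
                if_neg (fun h => by have := (eqZ j (2*((j-1)/2)+1) hj (by omega)).1 h; omega),
                if_neg (fun h => neZ j (2*((j-1)/2)+1) hj (by omega) h),
                if_pos (by rw [← h0]),
                if_neg (fun h => neZ j (2*((j-1)/2)+2) hj (by omega) h)]
      · -- z = -θ^j
        have hs2 : (∑ i ∈ Finset.range K', @Multiset.count (ZMod (p^2)) (fun a b => Classical.propDecidable (a = b)) (-θ^j)
            ({(p:ZMod (p^2))*θ^(2*i+1), -((p:ZMod (p^2))*θ^(2*i+1)), (p:ZMod (p^2))*θ^(2*i+2),
              -((p:ZMod (p^2))*θ^(2*i+2))} : Multiset (ZMod (p^2)))) = 0 := by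
          refine Finset.sum_eq_zero fun i _ => ?_
          beta_reduce
          rw [count4 (inst := fun a b => Classical.propDecidable (a = b)),
            if_neg (fun h => hpnu (θ^(2*i+1)) (by rw [← h]; exact (hθpow j).neg)),
            if_neg (fun h => hpnu (θ^(2*i+1)) (by
              have h2 : (p:ZMod (p^2))*θ^(2*i+1) = θ^j := by
                have := congrArg Neg.neg h
                rwa [neg_neg, neg_neg, eq_comm] at this
              rw [h2]; exact hθpow j)),
            if_neg (fun h => hpnu (θ^(2*i+2)) (by rw [← h]; exact (hθpow j).neg)),
            if_neg (fun h => hpnu (θ^(2*i+2)) (by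
              have h2 : (p:ZMod (p^2))*θ^(2*i+2) = θ^j := by
                have := congrArg Neg.neg h
                rwa [neg_neg, neg_neg, eq_comm] at this
              rw [h2]; exact hθpow j))]
          rfl
        rcases Nat.eq_zero_or_pos j with rfl | hjpos
        · rw [if_pos (by rw [pow_zero]; simp), hs2, Nat.add_zero]
          refine Finset.sum_eq_zero fun i hi => ?_
          have hi' : i < K := Finset.mem_range.1 hi
          beta_reduce
          rw [count4 (inst := fun a b => Classical.propDecidable (a = b)),
            if_neg (fun h => neZ (2*i+1) 0 (by omega) hm_pos h.symm),
            if_neg (fun h => by have := (eqZ 0 (2*i+1) hm_pos (by omega)).1 (neg_inj.1 h); omega),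
            if_neg (fun h => neZ (2*i+2) 0 (by omega) hm_pos h.symm),
            if_neg (fun h => by have := (eqZ 0 (2*i+2) hm_pos (by omega)).1 (neg_inj.1 h); omega)]
          rfl
        · have hnm : -θ^j ∉ ({0, 1, -1, (p : ZMod (p ^ 2)), -(p : ZMod (p ^ 2))}
              : Set (ZMod (p ^ 2))) := by
            intro hmem
            simp only [Set.mem_insert_iff, Set.mem_singleton_iff] at hmem
            rcases hmem with h|h|h|h|h
            · exact (hθpow j).ne_zero (neg_eq_zero.1 h)
            · exact neZ j 0 hj hm_pos (by rw [pow_zero]; exact neg_eq_iff_eq_neg.1 h)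
            · have := (eqZ j 0 hj hm_pos).1 (by rw [pow_zero]; exact neg_inj.1 h)
              omega
            · exact hpnu 1 (by rw [mul_one, ← h]; exact (hθpow j).neg)
            · exact hpnu 1 (by rw [mul_one, ← neg_inj.1 h]; exact hθpow j)
          rw [if_neg hnm, hs2, Nat.add_zero]
          refine (Finset.sum_eq_single ((j-1)/2) ?_ ?_).trans ?_
          · intro b hb hbne
            have hb' : b < K := Finset.mem_range.1 hb
            beta_reduce
            rw [count4 (inst := fun a b => Classical.propDecidable (a = b)),
              if_neg (fun h => neZ (2*b+1) j (by omega) hj h.symm),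
              if_neg (fun h => by have := (eqZ j (2*b+1) hj (by omega)).1 (neg_inj.1 h); omega),
              if_neg (fun h => neZ (2*b+2) j (by omega) hj h.symm),
              if_neg (fun h => by have := (eqZ j (2*b+2) hj (by omega)).1 (neg_inj.1 h); omega)]
            rfl
          · intro habs
            exact absurd (Finset.mem_range.2 (by omega)) habs
          · beta_reduce
            rcases (show j = 2*((j-1)/2)+1 ∨ j = 2*((j-1)/2)+2 by omega) with h0 | h0
            · rw [count4 (inst := fun a b => Classical.propDecidable (a = b)),
                if_neg (fun h => neZ (2*((j-1)/2)+1) j (by omega) hj h.symm),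
                if_pos (by rw [← h0]),
                if_neg (fun h => neZ (2*((j-1)/2)+2) j (by omega) hj h.symm),
                if_neg (fun h => by
                  have := (eqZ j (2*((j-1)/2)+2) hj (by omega)).1 (neg_inj.1 h); omega)]
            · rw [count4 (inst := fun a b => Classical.propDecidable (a = b)),
                if_neg (fun h => neZ (2*((j-1)/2)+1) j (by omega) hj h.symm),
                if_neg (fun h => by
                  have := (eqZ j (2*((j-1)/2)+1) hj (by omega)).1 (neg_inj.1 h); omega),
                if_neg (fun h => neZ (2*((j-1)/2)+2) j (by omega) hj h.symm),
                if_pos (by rw [← h0])]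
    · -- z = ±p θ^j
      rcases hzj with rfl | rfl
      · -- z = p θ^j
        have hs1 : (∑ i ∈ Finset.range K, @Multiset.count (ZMod (p^2)) (fun a b => Classical.propDecidable (a = b)) ((p:ZMod (p^2))*θ^j)
            ({θ^(2*i+1), -θ^(2*i+1), θ^(2*i+2), -θ^(2*i+2)} : Multiset (ZMod (p^2)))) = 0 := by
          refine Finset.sum_eq_zero fun i _ => ?_
          beta_reduce
          rw [count4 (inst := fun a b => Classical.propDecidable (a = b)),
            if_neg (fun h => hpnu (θ^j) (by rw [h]; exact hθpow (2*i+1))),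
            if_neg (fun h => hpnu (θ^j) (by rw [h]; exact (hθpow (2*i+1)).neg)),
            if_neg (fun h => hpnu (θ^j) (by rw [h]; exact hθpow (2*i+2))),
            if_neg (fun h => hpnu (θ^j) (by rw [h]; exact (hθpow (2*i+2)).neg))]
          rfl
        rcases Nat.eq_zero_or_pos j with rfl | hjpos
        · rw [if_pos (by rw [pow_zero, mul_one]; simp), hs1]
          rw [Nat.zero_add]
          refine Finset.sum_eq_zero fun i hi => ?_
          have hi' : i < K' := Finset.mem_range.1 hi
          beta_reduce
          rw [count4 (inst := fun a b => Classical.propDecidable (a = b)),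
            if_neg (fun h => by have := (eqP 0 (2*i+1) hn_pos (by omega)).1 h; omega),
            if_neg (fun h => neP 0 (2*i+1) hn_pos (by omega) h),
            if_neg (fun h => by have := (eqP 0 (2*i+2) hn_pos (by omega)).1 h; omega),
            if_neg (fun h => neP 0 (2*i+2) hn_pos (by omega) h)]
          rfl
        · have hnm : (p:ZMod (p^2))*θ^j ∉ ({0, 1, -1, (p : ZMod (p ^ 2)), -(p : ZMod (p ^ 2))}
              : Set (ZMod (p ^ 2))) := by
            intro hmem
            simp only [Set.mem_insert_iff, Set.mem_singleton_iff] at hmem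
            rcases hmem with h|h|h|h|h
            · exact hpθne0 j h
            · exact hpnu (θ^j) (by rw [h]; exact isUnit_one)
            · exact hpnu (θ^j) (by rw [h]; exact isUnit_one.neg)
            · have := (eqP j 0 hj hn_pos).1 (by rw [pow_zero, mul_one]; exact h)
              omega
            · exact neP j 0 hj hn_pos (by rw [pow_zero, mul_one]; exact h)
          rw [if_neg hnm, hs1, Nat.zero_add]
          refine (Finset.sum_eq_single ((j-1)/2) ?_ ?_).trans ?_
          · intro b hb hbne
            have hb' : b < K' := Finset.mem_range.1 hb
            beta_reduce
            rw [count4 (inst := fun a b => Classical.propDecidable (a = b)),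
              if_neg (fun h => by have := (eqP j (2*b+1) hj (by omega)).1 h; omega),
              if_neg (fun h => neP j (2*b+1) hj (by omega) h),
              if_neg (fun h => by have := (eqP j (2*b+2) hj (by omega)).1 h; omega),
              if_neg (fun h => neP j (2*b+2) hj (by omega) h)]
            rfl
          · intro habs
            exact absurd (Finset.mem_range.2 (by omega)) habs
          · beta_reduce
            rcases (show j = 2*((j-1)/2)+1 ∨ j = 2*((j-1)/2)+2 by omega) with h0 | h0
            · rw [count4 (inst := fun a b => Classical.propDecidable (a = b)), if_pos (by rw [← h0]),
                if_neg (fun h => neP j (2*((j-1)/2)+1) hj (by omega) h),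
                if_neg (fun h => by have := (eqP j (2*((j-1)/2)+2) hj (by omega)).1 h; omega),
                if_neg (fun h => neP j (2*((j-1)/2)+2) hj (by omega) h)]
            · rw [count4 (inst := fun a b => Classical.propDecidable (a = b)),
                if_neg (fun h => by have := (eqP j (2*((j-1)/2)+1) hj (by omega)).1 h; omega),
                if_neg (fun h => neP j (2*((j-1)/2)+1) hj (by omega) h),
                if_pos (by rw [← h0]),
                if_neg (fun h => neP j (2*((j-1)/2)+2) hj (by omega) h)]
      · -- z = -(p θ^j)
        have hs1 : (∑ i ∈ Finset.range K, @Multiset.count (ZMod (p^2)) (fun a b => Classical.propDecidable (a = b)) (-((p:ZMod (p^2))*θ^j))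
            ({θ^(2*i+1), -θ^(2*i+1), θ^(2*i+2), -θ^(2*i+2)} : Multiset (ZMod (p^2)))) = 0 := by
          refine Finset.sum_eq_zero fun i _ => ?_
          beta_reduce
          rw [count4 (inst := fun a b => Classical.propDecidable (a = b)),
            if_neg (fun h => hpnu (-(θ^j)) (by rw [mul_neg, h]; exact hθpow (2*i+1))),
            if_neg (fun h => hpnu (θ^j) (by rw [neg_inj.1 h]; exact hθpow (2*i+1))),
            if_neg (fun h => hpnu (-(θ^j)) (by rw [mul_neg, h]; exact hθpow (2*i+2))),
            if_neg (fun h => hpnu (θ^j) (by rw [neg_inj.1 h]; exact hθpow (2*i+2)))]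
          rfl
        rcases Nat.eq_zero_or_pos j with rfl | hjpos
        · rw [if_pos (by rw [pow_zero, mul_one]; simp), hs1, Nat.zero_add]
          refine Finset.sum_eq_zero fun i hi => ?_
          have hi' : i < K' := Finset.mem_range.1 hi
          beta_reduce
          rw [count4 (inst := fun a b => Classical.propDecidable (a = b)),
            if_neg (fun h => neP (2*i+1) 0 (by omega) hn_pos h.symm),
            if_neg (fun h => by have := (eqP 0 (2*i+1) hn_pos (by omega)).1 (neg_inj.1 h); omega),
            if_neg (fun h => neP (2*i+2) 0 (by omega) hn_pos h.symm),
            if_neg (fun h => by have := (eqP 0 (2*i+2) hn_pos (by omega)).1 (neg_inj.1 h); omega)]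
          rfl
        · have hnm : -((p:ZMod (p^2))*θ^j) ∉ ({0, 1, -1, (p : ZMod (p ^ 2)), -(p : ZMod (p ^ 2))}
              : Set (ZMod (p ^ 2))) := by
            intro hmem
            simp only [Set.mem_insert_iff, Set.mem_singleton_iff] at hmem
            rcases hmem with h|h|h|h|h
            · exact hpθne0 j (neg_eq_zero.1 h)
            · exact hpnu (-(θ^j)) (by rw [mul_neg, h]; exact isUnit_one)
            · exact hpnu (θ^j) (by rw [neg_inj.1 h]; exact isUnit_one)
            · exact neP j 0 hj hn_pos (by rw [pow_zero, mul_one]; exact neg_eq_iff_eq_neg.1 h)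
            · have := (eqP j 0 hj hn_pos).1 (by rw [pow_zero, mul_one]; exact neg_inj.1 h)
              omega
          rw [if_neg hnm, hs1, Nat.zero_add]
          refine (Finset.sum_eq_single ((j-1)/2) ?_ ?_).trans ?_
          · intro b hb hbne
            have hb' : b < K' := Finset.mem_range.1 hb
            beta_reduce
            rw [count4 (inst := fun a b => Classical.propDecidable (a = b)),
              if_neg (fun h => neP (2*b+1) j (by omega) hj h.symm),
              if_neg (fun h => by have := (eqP j (2*b+1) hj (by omega)).1 (neg_inj.1 h); omega),
              if_neg (fun h => neP (2*b+2) j (by omega) hj h.symm),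
              if_neg (fun h => by have := (eqP j (2*b+2) hj (by omega)).1 (neg_inj.1 h); omega)]
            rfl
          · intro habs
            exact absurd (Finset.mem_range.2 (by omega)) habs
          · beta_reduce
            rcases (show j = 2*((j-1)/2)+1 ∨ j = 2*((j-1)/2)+2 by omega) with h0 | h0
            · rw [count4 (inst := fun a b => Classical.propDecidable (a = b)),
                if_neg (fun h => neP (2*((j-1)/2)+1) j (by omega) hj h.symm),
                if_pos (by rw [← h0]),
                if_neg (fun h => neP (2*((j-1)/2)+2) j (by omega) hj h.symm),
                if_neg (fun h => by
                  have := (eqP j (2*((j-1)/2)+2) hj (by omega)).1 (neg_inj.1 h); omega)]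
            · rw [count4 (inst := fun a b => Classical.propDecidable (a = b)),
                if_neg (fun h => neP (2*((j-1)/2)+1) j (by omega) hj h.symm),
                if_neg (fun h => by
                  have := (eqP j (2*((j-1)/2)+1) hj (by omega)).1 (neg_inj.1 h); omega),
                if_neg (fun h => neP (2*((j-1)/2)+2) j (by omega) hj h.symm),
                if_pos (by rw [← h0])]
  -- construct S
  have hinj1 : Set.InjOn (fun i : ℕ => (θ^(2*i+1), θ^(2*i+2))) ↑(Finset.range K) := by
    intro a ha b hb hab
    simp only [Finset.coe_range, Set.mem_Iio] at ha hb
    have h1 := congrArg Prod.fst hab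
    simp only at h1
    have := (eqZ (2*a+1) (2*b+1) (by omega) (by omega)).1 h1
    omega
  have hinj2 : Set.InjOn
      (fun i : ℕ => ((p:ZMod (p^2))*θ^(2*i+1), (p:ZMod (p^2))*θ^(2*i+2)))
      ↑(Finset.range K') := by
    intro a ha b hb hab
    simp only [Finset.coe_range, Set.mem_Iio] at ha hb
    have h1 := congrArg Prod.fst hab
    simp only at h1
    have := (eqP (2*a+1) (2*b+1) (by omega) (by omega)).1 h1
    omega
  set S1 : Finset (ZMod (p^2) × ZMod (p^2)) :=
    (Finset.range K).image (fun i : ℕ => (θ^(2*i+1), θ^(2*i+2))) with hS1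
  set S2 : Finset (ZMod (p^2) × ZMod (p^2)) :=
    (Finset.range K').image
      (fun i : ℕ => ((p:ZMod (p^2))*θ^(2*i+1), (p:ZMod (p^2))*θ^(2*i+2))) with hS2
  have hdisjS : Disjoint S1 S2 := by
    rw [Finset.disjoint_left]
    intro q hq1 hq2
    rw [hS1, Finset.mem_image] at hq1
    rw [hS2, Finset.mem_image] at hq2
    obtain ⟨i, _, hi⟩ := hq1
    obtain ⟨i', _, hi'⟩ := hq2
    have h1 := congrArg Prod.fst (hi.trans hi'.symm)
    simp only at h1
    exact hpnu (θ^(2*i'+1)) (by rw [← h1]; exact hθpow (2*i+1))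
  have hval : (S1.disjUnion S2 hdisjS).val
      = Multiset.map (fun i : ℕ => (θ^(2*i+1), θ^(2*i+2))) (Finset.range K).val
        + Multiset.map (fun i : ℕ => ((p:ZMod (p^2))*θ^(2*i+1), (p:ZMod (p^2))*θ^(2*i+2)))
            (Finset.range K').val := by
    show S1.val + S2.val = _
    rw [hS1, hS2, Finset.image_val_of_injOn hinj1, Finset.image_val_of_injOn hinj2]
  have hcond1 : ∀ z : ZMod (p^2),
      @Multiset.count (ZMod (p^2)) (fun a b => Classical.propDecidable (a = b)) z ((S1.disjUnion S2 hdisjS).val.bind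
        fun q => ({q.1, -q.1, q.2, -q.2} : Multiset (ZMod (p^2))))
      = @ite ℕ (z ∈ ({0, 1, -1, (p : ZMod (p ^ 2)), -(p : ZMod (p ^ 2))} : Set (ZMod (p ^ 2))))
        (Classical.propDecidable _) 0 1 := by
    intro z
    rw [hval, Multiset.add_bind, @Multiset.count_add (ZMod (p^2)) (fun a b => Classical.propDecidable (a = b)) z _ _, count_bind_map (inst := fun a b => Classical.propDecidable (a = b)), count_bind_map (inst := fun a b => Classical.propDecidable (a = b))]
    exact cnt1 z
  refine ⟨S1.disjUnion S2 hdisjS, ?_, ?_⟩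
  · intro z
    exact hcond1 z
  · intro z
    have hpairs : ∀ q ∈ (S1.disjUnion S2 hdisjS).val, q.2 = θ * q.1 := by
      intro q hq
      have hq' : q ∈ S1 ∨ q ∈ S2 := by
        rw [← Finset.mem_disjUnion (h := hdisjS)]
        exact hq
      rcases hq' with hq1 | hq1
      · rw [hS1, Finset.mem_image] at hq1
        obtain ⟨i, _, rfl⟩ := hq1
        show θ^(2*i+2) = θ * θ^(2*i+1)
        exact pow_succ' θ (2*i+1)
      · rw [hS2, Finset.mem_image] at hq1
        obtain ⟨i, _, rfl⟩ := hq1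
        show (p:ZMod (p^2))*θ^(2*i+2) = θ * ((p:ZMod (p^2))*θ^(2*i+1))
        rw [show θ^(2*i+2) = θ*θ^(2*i+1) from pow_succ' θ (2*i+1)]
        ring
    have pairmultiset : ∀ x : ZMod (p^2),
        ({x + θ*x, -(x + θ*x), x - θ*x, -(x - θ*x)} : Multiset (ZMod (p^2)))
          = Multiset.map (fun t => r * t) ({x, -x, θ*x, -(θ*x)} : Multiset (ZMod (p^2))) := by
      intro x
      have e1 : x + θ*x = r*(θ*x) := by rw [hθdef]; linear_combination (-x) * hr
      have e2 : x - θ*x = r*(-x) := by rw [hθdef]; ring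
      have emap : Multiset.map (fun t => r * t) ({x, -x, θ*x, -(θ*x)} : Multiset (ZMod (p^2)))
          = ({r*x, r*(-x), r*(θ*x), r*(-(θ*x))} : Multiset (ZMod (p^2))) := by
        simp only [Multiset.insert_eq_cons, Multiset.map_cons, Multiset.map_singleton]
      rw [e1, e2, show -(r*(θ*x)) = r*(-(θ*x)) by ring, show -(r*(-x)) = r*x by ring, emap]
      exact perm4 (r*x) (r*(-x)) (r*(θ*x)) (r*(-(θ*x)))
    have hbindmap : ((S1.disjUnion S2 hdisjS).val.bind
          fun q => ({q.1 + q.2, -(q.1 + q.2), q.1 - q.2, -(q.1 - q.2)} : Multiset (ZMod (p^2))))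
        = Multiset.map (fun t => r * t) ((S1.disjUnion S2 hdisjS).val.bind
            fun q => ({q.1, -q.1, q.2, -q.2} : Multiset (ZMod (p^2)))) := by
      rw [Multiset.map_bind]
      refine Multiset.bind_congr fun q hq => ?_
      rw [hpairs q hq]
      exact pairmultiset q.1
    obtain ⟨ru, hruv⟩ := id hru
    have hrinj : Function.Injective (fun t : ZMod (p^2) => r * t) :=
      fun a b h => hru.mul_left_cancel h
    have hzw : r * ((↑ru⁻¹ : ZMod (p^2)) * z) = z := by
      rw [← mul_assoc, ← hruv, Units.mul_inv, one_mul]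
    have hc := @Multiset.count_map_eq_count' (ZMod (p^2)) (ZMod (p^2))
      (fun a b => Classical.propDecidable (a = b)) (fun a b => Classical.propDecidable (a = b))
      (fun t : ZMod (p^2) => r * t)
      ((S1.disjUnion S2 hdisjS).val.bind
        fun q => ({q.1, -q.1, q.2, -q.2} : Multiset (ZMod (p^2)))) hrinj
      ((↑ru⁻¹ : ZMod (p^2)) * z)
    rw [hbindmap]
    rw [← hzw]
    rw [hc]
    rw [hcond1 ((↑ru⁻¹ : ZMod (p^2)) * z)]
    refine @if_congr ℕ _ _ (Classical.propDecidable _) (Classical.propDecidable _) _ _ _ _ ?_ rfl rfl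
    rw [hθr]
    simp only [Set.mem_insert_iff, Set.mem_singleton_iff]
    constructor
    · rintro (h|h|h|h|h)
      · left; rw [h, mul_zero]
      · right; left; rw [h, mul_one]
      · right; right; left; rw [h]; ring
      · right; right; right; left; rw [h]; ring
      · right; right; right; right; rw [h]; ring
    · rintro (h|h|h|h|h)
      · left; exact hru.mul_left_cancel (by rw [h, mul_zero])
      · right; left; exact hru.mul_left_cancel (by rw [h, mul_one])
      · right; right; left; exact hru.mul_left_cancel (by rw [h]; ring)
      · right; right; right; left; exact hru.mul_left_cancel (by rw [h]; ring)
      · right; right; right; right; exact hru.mul_left_cancel (by rw [h]; ring)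
end

section
/- Let p ≡ 7 (mod 8) be a prime, let √2 denote a square root of 2 in Z_{p²}, and suppose the image of θ = 1 + √2 generates the quotient of the unit group U(p²) of Z_{p²} by {1,−1}. Then for α, β ∈ Z_{p²} not divisible by p, a PPS(Z_{p²}, {0, α, −α, pα, −pα}, {0, β, −β, pβ, −pβ}) exists if and only if 2α² − β² = 0 in Z_{p²}. -/
open scoped Classical

open scoped Classical

namespace PPSaux

variable {p : ℕ}

/-- reduction map -/
noncomputable def π {p : ℕ} : ZMod (p^2) →+* ZMod p := ZMod.castHom (dvd_pow_self p two_ne_zero) (ZMod p)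

lemma p7 (hp : p.Prime) (hp8 : p % 8 = 7) : 7 ≤ p := by
  rcases Nat.lt_or_ge p 7 with h | h
  · interval_cases p <;> omega
  · exact h

lemma pi_apply (x : ZMod (p^2)) [NeZero p] : π x = (x.val : ZMod p) := by
  rw [π, ZMod.castHom_apply, ← ZMod.natCast_val]

lemma pi_eq_zero_iff (hp : p.Prime) (x : ZMod (p^2)) : π x = 0 ↔ p ∣ x.val := by
  haveI : NeZero p := ⟨hp.ne_zero⟩
  rw [pi_apply, ZMod.natCast_eq_zero_iff]

lemma pval (hp : p.Prime) : ((p : ZMod (p^2))).val = p := by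
  haveI : NeZero (p^2) := ⟨pow_ne_zero 2 hp.ne_zero⟩
  refine ZMod.val_cast_of_lt ?_
  have := hp.two_le; nlinarith

lemma dvd_iff_pi (hp : p.Prime) (x : ZMod (p^2)) : (p : ZMod (p^2)) ∣ x ↔ π x = 0 := by
  haveI : NeZero p := ⟨hp.ne_zero⟩
  haveI : NeZero (p^2) := ⟨pow_ne_zero 2 hp.ne_zero⟩
  rw [pi_eq_zero_iff hp]
  constructor
  · rintro ⟨y, rfl⟩
    rw [ZMod.val_mul, pval hp]
    exact (Nat.dvd_mod_iff (dvd_pow_self p two_ne_zero)).mpr ⟨y.val, rfl⟩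
  · rintro ⟨m, hm⟩
    refine ⟨(m : ZMod (p^2)), ?_⟩
    have hx : ((x.val : ℕ) : ZMod (p^2)) = x := by rw [ZMod.natCast_val, ZMod.cast_id]
    rw [← hx, hm]; push_cast; ring

lemma pmul_eq_zero_iff (hp : p.Prime) (x : ZMod (p^2)) :
    (p : ZMod (p^2)) * x = 0 ↔ π x = 0 := by
  haveI : NeZero p := ⟨hp.ne_zero⟩
  haveI : NeZero (p^2) := ⟨pow_ne_zero 2 hp.ne_zero⟩
  rw [pi_eq_zero_iff hp]
  constructor
  · intro h
    have hx : ((x.val : ℕ) : ZMod (p^2)) = x := by rw [ZMod.natCast_val, ZMod.cast_id]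
    rw [← hx, ← Nat.cast_mul, ZMod.natCast_eq_zero_iff] at h
    rcases h with ⟨c, hc⟩
    refine ⟨c, Nat.eq_of_mul_eq_mul_left hp.pos ?_⟩
    rw [hc]; ring
  · rintro ⟨m, hm⟩
    have hx : ((x.val : ℕ) : ZMod (p^2)) = x := by rw [ZMod.natCast_val, ZMod.cast_id]
    rw [← hx, hm]; push_cast
    rw [← mul_assoc, ← Nat.cast_mul, ← pow_two, ZMod.natCast_self]; ring

lemma pmul_eq_iff (hp : p.Prime) (x y : ZMod (p^2)) :
    (p : ZMod (p^2)) * x = (p : ZMod (p^2)) * y ↔ π x = π y := by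
  rw [← sub_eq_zero, ← mul_sub, pmul_eq_zero_iff hp, map_sub, sub_eq_zero]

lemma isUnit_iff_pi (hp : p.Prime) (x : ZMod (p^2)) : IsUnit x ↔ π x ≠ 0 := by
  haveI : Fact p.Prime := ⟨hp⟩
  haveI : NeZero p := ⟨hp.ne_zero⟩
  haveI : NeZero (p^2) := ⟨pow_ne_zero 2 hp.ne_zero⟩
  constructor
  · intro h h0
    exact (h.map π).ne_zero h0
  · intro h
    have h : ¬ p ∣ x.val := fun hd => h ((pi_eq_zero_iff hp x).mpr hd)
    have hx : ((x.val : ℕ) : ZMod (p^2)) = x := by rw [ZMod.natCast_val, ZMod.cast_id]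
    rw [← hx, ZMod.isUnit_iff_coprime]
    exact Nat.Coprime.pow_right 2 ((hp.coprime_iff_not_dvd).mpr h).symm

lemma isUnit_iff_not_dvd (hp : p.Prime) (x : ZMod (p^2)) :
    IsUnit x ↔ ¬ (p : ZMod (p^2)) ∣ x := by
  rw [isUnit_iff_pi hp, dvd_iff_pi hp]

lemma p_not_dvd_two (hp : p.Prime) (hp8 : p % 8 = 7) : ¬ (p : ZMod (p^2)) ∣ 2 := by
  rw [dvd_iff_pi hp]
  intro h
  have h2 : π (2 : ZMod (p^2)) = ((2:ℕ) : ZMod p) := by push_cast; exact map_ofNat _ 2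
  rw [h2] at h
  haveI : NeZero p := ⟨hp.ne_zero⟩
  rw [ZMod.natCast_eq_zero_iff] at h
  have := Nat.le_of_dvd (by norm_num) h
  have := p7 hp hp8
  omega

lemma two_isUnit (hp : p.Prime) (hp8 : p % 8 = 7) : IsUnit (2 : ZMod (p^2)) :=
  (isUnit_iff_not_dvd hp 2).mpr (p_not_dvd_two hp hp8)

lemma mul_eq_zero_cases (hp : p.Prime) {a b : ZMod (p^2)} (h : a * b = 0) :
    a = 0 ∨ b = 0 ∨ ((p : ZMod (p^2)) ∣ a ∧ (p : ZMod (p^2)) ∣ b) := by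
  by_cases ha : (p : ZMod (p^2)) ∣ a
  · by_cases hb : (p : ZMod (p^2)) ∣ b
    · exact Or.inr (Or.inr ⟨ha, hb⟩)
    · have hu := (isUnit_iff_not_dvd hp b).mpr hb
      left
      obtain ⟨c, hc⟩ := hu.exists_right_inv
      calc a = a * (b * c) := by rw [hc, mul_one]
        _ = 0 := by rw [← mul_assoc, h, zero_mul]
  · have hu := (isUnit_iff_not_dvd hp a).mpr ha
    right; left
    obtain ⟨c, hc⟩ := hu.exists_left_inv
    calc b = c * a * b := by rw [hc, one_mul]
      _ = 0 := by rw [mul_assoc, h, mul_zero]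

lemma sq_eq_one (hp : p.Prime) (hp8 : p % 8 = 7) {x : ZMod (p^2)} (h : x * x = 1) :
    x = 1 ∨ x = -1 := by
  have h0 : (x - 1) * (x + 1) = 0 := by linear_combination h
  rcases mul_eq_zero_cases hp h0 with h1 | h1 | ⟨h1, h2⟩
  · exact Or.inl (sub_eq_zero.mp h1)
  · exact Or.inr (eq_neg_of_add_eq_zero_left h1)
  · exfalso
    apply p_not_dvd_two hp hp8
    have := dvd_sub h2 h1
    have e : (x+1) - (x-1) = 2 := by ring
    rwa [e] at this

lemma neg_one_ne_one (hp : p.Prime) (hp8 : p % 8 = 7) : (-1 : ZMod (p^2)) ≠ 1 := by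
  intro h
  apply p_not_dvd_two hp hp8
  have : (2 : ZMod (p^2)) = 0 := by linear_combination -h
  rw [this]
  exact dvd_zero _

end PPSaux


namespace PPSaux

section generic
variable {R : Type*} [CommRing R] [Fintype R] [DecidableEq R] {θ : R} {n : ℕ}

omit [Fintype R] [DecidableEq R] in
lemma gen_red (hθk : θ^n = 1 ∨ θ^n = -1) (hn : 0 < n) (m : ℕ) :
    θ^m = θ^(m % n) ∨ θ^m = -θ^(m % n) := by
  have hsplit : θ^m = (θ^n)^(m/n) * θ^(m%n) := by
    rw [← pow_mul, ← pow_add, Nat.div_add_mod]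
  rcases hθk with h | h
  · left; rw [hsplit, h, one_pow, one_mul]
  · rcases Nat.even_or_odd (m / n) with he | ho
    · left; rw [hsplit, h, he.neg_one_pow, one_mul]
    · right; rw [hsplit, h, ho.neg_one_pow, neg_one_mul]

lemma gen_nosmall (hcard : Fintype.card Rˣ = 2*n)
    (hgen' : ∀ x : R, IsUnit x → ∃ i : ℕ, x = θ^i ∨ x = -θ^i)
    {k : ℕ} (hk0 : 0 < k) (hkn : k < n) (hθk : θ^k = 1 ∨ θ^k = -1) : False := by
  classical
  set T : Finset R := ((Finset.range k).image fun i => θ^i) ∪ ((Finset.range k).image fun i => -θ^i) with hT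
  have hmem : ∀ u : Rˣ, (u : R) ∈ T := by
    intro u
    obtain ⟨i, hi⟩ := hgen' u u.isUnit
    have hmk : i % k < k := Nat.mod_lt _ hk0
    have h2 : (u:R) = θ^(i%k) ∨ (u:R) = -θ^(i%k) := by
      rcases hi with h|h <;> rcases gen_red hθk hk0 i with h2|h2
      · left; rw [h, h2]
      · right; rw [h, h2]
      · right; rw [h, h2]
      · left; rw [h, h2, neg_neg]
    rcases h2 with h|h
    · exact Finset.mem_union_left _ (Finset.mem_image.mpr ⟨i%k, Finset.mem_range.mpr hmk, h.symm⟩)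
    · exact Finset.mem_union_right _ (Finset.mem_image.mpr ⟨i%k, Finset.mem_range.mpr hmk, h.symm⟩)
  have hinj : Set.InjOn (fun u : Rˣ => (u:R)) (Finset.univ : Finset Rˣ) :=
    fun a _ b _ h => Units.ext h
  have hle := Finset.card_le_card_of_injOn _ (fun u _ => hmem u) hinj
  rw [Finset.card_univ, hcard] at hle
  have h1 : T.card ≤ 2*k := by
    calc T.card ≤ ((Finset.range k).image fun i => θ^i).card
        + ((Finset.range k).image fun i => -θ^i).card := Finset.card_union_le _ _
      _ ≤ k + k := Nat.add_le_add
          ((Finset.card_image_le).trans_eq (Finset.card_range k))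
          ((Finset.card_image_le).trans_eq (Finset.card_range k))
      _ = 2*k := by ring
  omega

lemma gen_npos (hcard : Fintype.card Rˣ = 2*n) : 0 < n := by
  have : 0 < Fintype.card Rˣ := Fintype.card_pos
  omega

lemma gen_rep (hcard : Fintype.card Rˣ = 2*n)
    (hpow : θ^n = 1 ∨ θ^n = -1)
    (hgen' : ∀ x : R, IsUnit x → ∃ i : ℕ, x = θ^i ∨ x = -θ^i) :
    ∀ x : R, IsUnit x → ∃ s : ℕ, s < n ∧ (x = θ^s ∨ x = -θ^s) := by
  have hn := gen_npos hcard
  intro x hx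
  obtain ⟨i, hi⟩ := hgen' x hx
  refine ⟨i % n, Nat.mod_lt _ hn, ?_⟩
  rcases hi with h|h <;> rcases gen_red hpow hn i with h2|h2
  · left; rw [h, h2]
  · right; rw [h, h2]
  · right; rw [h, h2]
  · left; rw [h, h2, neg_neg]

lemma gen_inj (hcard : Fintype.card Rˣ = 2*n)
    (hgen' : ∀ x : R, IsUnit x → ∃ i : ℕ, x = θ^i ∨ x = -θ^i)
    (hθ : IsUnit θ)
    {i j : ℕ} (hi : i < n) (hj : j < n) (h : θ^i = θ^j) : i = j := by
  have key : ∀ a c : ℕ, a + c < n → θ^a = θ^(a+c) → c = 0 := by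
    intro a c hacn hac
    by_contra hc0
    have h1 : θ^a * 1 = θ^a * θ^c := by rw [mul_one, ← pow_add]; exact hac
    have h2 : (1:R) = θ^c := (hθ.pow a).mul_left_cancel h1
    exact gen_nosmall hcard hgen' (Nat.pos_of_ne_zero hc0) (by omega) (Or.inl h2.symm)
  rcases le_or_gt i j with hle | hlt
  · obtain ⟨c, rfl⟩ := Nat.exists_eq_add_of_le hle
    have := key i c hj h
    omega
  · obtain ⟨c, rfl⟩ := Nat.exists_eq_add_of_le hlt.le
    have := key j c hi h.symm
    omega

lemma gen_ne_neg (hcard : Fintype.card Rˣ = 2*n)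
    (hgen' : ∀ x : R, IsUnit x → ∃ i : ℕ, x = θ^i ∨ x = -θ^i)
    (hne : (-1:R) ≠ 1) (hθ : IsUnit θ)
    {i j : ℕ} (hi : i < n) (hj : j < n) (h : θ^i = -θ^j) : False := by
  have key : ∀ a c : ℕ, a + c < n → θ^a = -θ^(a+c) → False := by
    intro a c hacn hac
    have h1 : θ^a * 1 = θ^a * (-θ^c) := by
      rw [mul_one, mul_neg, ← pow_add]; exact hac
    have h2 : (1:R) = -θ^c := (hθ.pow a).mul_left_cancel h1
    rcases Nat.eq_zero_or_pos c with rfl | hc0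
    · rw [pow_zero] at h2
      exact hne (by linear_combination -h2)
    · exact gen_nosmall hcard hgen' hc0 (by omega) (Or.inr (by linear_combination h2))
  rcases le_or_gt i j with hle | hlt
  · obtain ⟨c, rfl⟩ := Nat.exists_eq_add_of_le hle
    exact key i c hj h
  · obtain ⟨c, rfl⟩ := Nat.exists_eq_add_of_le hlt.le
    exact key j c hi (by linear_combination h)
end generic
end PPSaux

namespace PPSaux

variable {p : ℕ}

/-- `N = p(p-1)/2`, the order of `U(p²)/{±1}`. -/
def Nn (p : ℕ) : ℕ := p * ((p-1)/2)
/-- `M = (p-1)/2`, the order of `U(p)/{±1}`. -/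
def Mm (p : ℕ) : ℕ := (p-1)/2

lemma theta_isUnit {r : ZMod (p^2)} (hr : r^2 = 2) : IsUnit (1+r) :=
  IsUnit.of_mul_eq_one (r - 1) (by linear_combination hr)

lemma card2 [NeZero (p^2)] (hp : p.Prime) (hp8 : p % 8 = 7) :
    Fintype.card (ZMod (p^2))ˣ = 2 * Nn p := by
  haveI : NeZero (p^2) := ⟨pow_ne_zero 2 hp.ne_zero⟩
  rw [ZMod.card_units_eq_totient, Nat.totient_prime_pow hp (by norm_num)]
  have h7 := p7 hp hp8
  have h1 : p - 1 = 2 * ((p-1)/2) := by omega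
  rw [Nn]
  calc p ^ (2-1) * (p-1) = p * (2 * ((p-1)/2)) := by rw [← h1]; ring
    _ = 2 * (p * ((p-1)/2)) := by ring

lemma pow2 (hp : p.Prime) (hp8 : p % 8 = 7) {r : ZMod (p^2)} (hr : r^2 = 2) :
    (1+r)^(Nn p) = 1 ∨ (1+r)^(Nn p) = -1 := by
  haveI : NeZero (p^2) := ⟨pow_ne_zero 2 hp.ne_zero⟩
  have hθ := theta_isUnit hr
  have hu : hθ.unit ^ (Fintype.card (ZMod (p^2))ˣ) = 1 := pow_card_eq_one
  rw [card2 hp hp8] at hu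
  have h2N : (1+r)^(2 * Nn p) = 1 := by
    calc (1+r)^(2 * Nn p) = ((hθ.unit : ZMod (p^2)))^(2 * Nn p) := by rw [hθ.unit_spec]
      _ = ((hθ.unit ^ (2 * Nn p) : (ZMod (p^2))ˣ) : ZMod (p^2)) := by rw [Units.val_pow_eq_pow_val]
      _ = 1 := by rw [hu, Units.val_one]
  apply sq_eq_one hp hp8
  rw [← pow_add, ← two_mul]
  exact h2N

lemma rep2 (hp : p.Prime) (hp8 : p % 8 = 7) {r : ZMod (p^2)} (hr : r^2 = 2)
    (hgen : ∀ x : ZMod (p^2), IsUnit x → ∃ i : ℕ, x = (1+r)^i ∨ x = -((1+r)^i)) :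
    ∀ x : ZMod (p^2), IsUnit x → ∃ s : ℕ, s < Nn p ∧ (x = (1+r)^s ∨ x = -((1+r)^s)) := by
  haveI : NeZero (p^2) := ⟨pow_ne_zero 2 hp.ne_zero⟩
  exact gen_rep (card2 hp hp8) (pow2 hp hp8 hr) hgen

lemma inj2 (hp : p.Prime) (hp8 : p % 8 = 7) {r : ZMod (p^2)} (hr : r^2 = 2)
    (hgen : ∀ x : ZMod (p^2), IsUnit x → ∃ i : ℕ, x = (1+r)^i ∨ x = -((1+r)^i))
    {i j : ℕ} (hi : i < Nn p) (hj : j < Nn p) (h : (1+r)^i = (1+r)^j) : i = j := by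
  haveI : NeZero (p^2) := ⟨pow_ne_zero 2 hp.ne_zero⟩
  exact gen_inj (card2 hp hp8) hgen (theta_isUnit hr) hi hj h

lemma nneg2 (hp : p.Prime) (hp8 : p % 8 = 7) {r : ZMod (p^2)} (hr : r^2 = 2)
    (hgen : ∀ x : ZMod (p^2), IsUnit x → ∃ i : ℕ, x = (1+r)^i ∨ x = -((1+r)^i))
    {i j : ℕ} (hi : i < Nn p) (hj : j < Nn p) (h : (1+r)^i = -((1+r)^j)) : False := by
  haveI : NeZero (p^2) := ⟨pow_ne_zero 2 hp.ne_zero⟩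
  exact gen_ne_neg (card2 hp hp8) hgen (neg_one_ne_one hp hp8) (theta_isUnit hr) hi hj h

-- mod p facts
lemma cardp [NeZero p] (hp : p.Prime) (hp8 : p % 8 = 7) :
    Fintype.card (ZMod p)ˣ = 2 * Mm p := by
  haveI : Fact p.Prime := ⟨hp⟩
  rw [ZMod.card_units]
  have := p7 hp hp8
  rw [Mm]; omega

lemma genp (hp : p.Prime) {r : ZMod (p^2)} (hr : r^2 = 2)
    (hgen : ∀ x : ZMod (p^2), IsUnit x → ∃ i : ℕ, x = (1+r)^i ∨ x = -((1+r)^i)) :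
    ∀ y : ZMod p, IsUnit y → ∃ i : ℕ, y = (π (1+r))^i ∨ y = -((π (1+r))^i) := by
  haveI : Fact p.Prime := ⟨hp⟩
  haveI : NeZero (p^2) := ⟨pow_ne_zero 2 hp.ne_zero⟩
  intro y hy
  have hy0 : y ≠ 0 := hy.ne_zero
  have hvp : y.val < p := ZMod.val_lt y
  have hv0 : y.val ≠ 0 := fun h => hy0 ((ZMod.val_eq_zero y).mp h)
  have hnd : ¬ p ∣ y.val := fun h => hv0 (Nat.eq_zero_of_dvd_of_lt h hvp)
  have hx : IsUnit ((y.val : ℕ) : ZMod (p^2)) := by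
    rw [ZMod.isUnit_iff_coprime]
    exact Nat.Coprime.pow_right 2 ((hp.coprime_iff_not_dvd).mpr hnd).symm
  obtain ⟨i, hi⟩ := hgen _ hx
  have hπx : π ((y.val : ℕ) : ZMod (p^2)) = y := by
    rw [map_natCast, ZMod.natCast_val, ZMod.cast_id]
  refine ⟨i, ?_⟩
  rcases hi with h | h
  · left; rw [← hπx, h, map_pow]
  · right; rw [← hπx, h, map_neg, map_pow]

lemma thetab_ne_zero (hp : p.Prime) {r : ZMod (p^2)} (hr : r^2 = 2) :
    (π (1+r) : ZMod p) ≠ 0 := by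
  haveI : Fact p.Prime := ⟨hp⟩
  exact ((theta_isUnit hr).map π).ne_zero

lemma powp (hp : p.Prime) (hp8 : p % 8 = 7) {r : ZMod (p^2)} (hr : r^2 = 2) :
    (π (1+r) : ZMod p)^(Mm p) = 1 ∨ (π (1+r) : ZMod p)^(Mm p) = -1 := by
  haveI : Fact p.Prime := ⟨hp⟩
  have h1 : (π (1+r) : ZMod p)^(p-1) = 1 :=
    ZMod.pow_card_sub_one_eq_one (thetab_ne_zero hp hr)
  have h2 : p - 1 = Mm p + Mm p := by have := p7 hp hp8; rw [Mm]; omega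
  rw [← mul_self_eq_one_iff, ← pow_add, ← h2]
  exact h1

lemma neg_one_ne_one_p (hp : p.Prime) (hp8 : p % 8 = 7) : (-1 : ZMod p) ≠ 1 := by
  haveI : Fact p.Prime := ⟨hp⟩
  haveI : Fact (2 < p) := ⟨by have := p7 hp hp8; omega⟩
  exact ZMod.neg_one_ne_one

lemma repp (hp : p.Prime) (hp8 : p % 8 = 7) {r : ZMod (p^2)} (hr : r^2 = 2)
    (hgen : ∀ x : ZMod (p^2), IsUnit x → ∃ i : ℕ, x = (1+r)^i ∨ x = -((1+r)^i)) :
    ∀ y : ZMod p, IsUnit y → ∃ s : ℕ, s < Mm p ∧ (y = (π (1+r))^s ∨ y = -((π (1+r))^s)) := by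
  haveI : NeZero p := ⟨hp.ne_zero⟩
  exact gen_rep (cardp hp hp8) (powp hp hp8 hr) (genp hp hr hgen)

lemma injp (hp : p.Prime) (hp8 : p % 8 = 7) {r : ZMod (p^2)} (hr : r^2 = 2)
    (hgen : ∀ x : ZMod (p^2), IsUnit x → ∃ i : ℕ, x = (1+r)^i ∨ x = -((1+r)^i))
    {i j : ℕ} (hi : i < Mm p) (hj : j < Mm p)
    (h : (π (1+r) : ZMod p)^i = (π (1+r))^j) : i = j := by
  haveI : NeZero p := ⟨hp.ne_zero⟩
  exact gen_inj (cardp hp hp8) (genp hp hr hgen) ((theta_isUnit hr).map π) hi hj h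

lemma nnegp (hp : p.Prime) (hp8 : p % 8 = 7) {r : ZMod (p^2)} (hr : r^2 = 2)
    (hgen : ∀ x : ZMod (p^2), IsUnit x → ∃ i : ℕ, x = (1+r)^i ∨ x = -((1+r)^i))
    {i j : ℕ} (hi : i < Mm p) (hj : j < Mm p)
    (h : (π (1+r) : ZMod p)^i = -((π (1+r))^j)) : False := by
  haveI : NeZero p := ⟨hp.ne_zero⟩
  exact gen_ne_neg (cardp hp hp8) (genp hp hr hgen) (neg_one_ne_one_p hp hp8)
    ((theta_isUnit hr).map π) hi hj h

end PPSaux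

namespace PPSaux

variable {p : ℕ}

lemma flip_term {X : Type*} [AddGroup X] [DecidableEq X] (w a : X) :
    ((if w = a then 1 else 0) + (if w = -a then 1 else 0) : ℕ)
    = (if -w = a then 1 else 0) + (if -w = -a then 1 else 0) := by
  rw [add_comm]
  congr 1
  · apply if_congr _ rfl rfl
    constructor
    · intro h; rw [h, neg_neg]
    · intro h; rw [← h, neg_neg]
  · apply if_congr _ rfl rfl
    exact ⟨fun h => by rw [h], fun h => neg_inj.mp h⟩

lemma unit_term_isUnit {r : ZMod (p^2)} (hr : r^2 = 2)
    {γ : ZMod (p^2)} (hγ : IsUnit γ) (t : ℕ) :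
    IsUnit (γ * (1+r)^t) := hγ.mul ((theta_isUnit hr).pow t)

lemma unit_eq_iff (hp : p.Prime) (hp8 : p % 8 = 7) {r : ZMod (p^2)} (hr : r^2 = 2)
    (hgen : ∀ x : ZMod (p^2), IsUnit x → ∃ i : ℕ, x = (1+r)^i ∨ x = -((1+r)^i))
    {γ : ZMod (p^2)} (hγ : IsUnit γ) {t s : ℕ}
    (ht : t < Nn p) (hs : s < Nn p) :
    (γ * (1+r)^t = γ * (1+r)^s ↔ t = s) := by
  constructor
  · intro h
    exact inj2 hp hp8 hr hgen ht hs (hγ.mul_left_cancel h)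
  · rintro rfl; rfl

lemma unit_ne_neg (hp : p.Prime) (hp8 : p % 8 = 7) {r : ZMod (p^2)} (hr : r^2 = 2)
    (hgen : ∀ x : ZMod (p^2), IsUnit x → ∃ i : ℕ, x = (1+r)^i ∨ x = -((1+r)^i))
    {γ : ZMod (p^2)} (hγ : IsUnit γ) {t s : ℕ}
    (ht : t < Nn p) (hs : s < Nn p) :
    γ * (1+r)^t ≠ -(γ * (1+r)^s) := by
  intro h
  have h2 : γ * (1+r)^t = γ * (-((1+r)^s)) := by rw [h]; ring
  exact nneg2 hp hp8 hr hgen ht hs (hγ.mul_left_cancel h2)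

lemma pi_unit_term {r γ : ZMod (p^2)} (t : ℕ) :
    π (γ * (1+r)^t) = π γ * (π (1+r))^t := by rw [map_mul, map_pow]

lemma pi_gamma_ne (hp : p.Prime) {γ : ZMod (p^2)} (hγ : IsUnit γ) : (π γ : ZMod p) ≠ 0 := by
  haveI : Fact p.Prime := ⟨hp⟩
  exact (hγ.map π).ne_zero

lemma punit_eq_iff (hp : p.Prime) (hp8 : p % 8 = 7) {r : ZMod (p^2)} (hr : r^2 = 2)
    (hgen : ∀ x : ZMod (p^2), IsUnit x → ∃ i : ℕ, x = (1+r)^i ∨ x = -((1+r)^i))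
    {γ : ZMod (p^2)} (hγ : IsUnit γ) {t s : ℕ}
    (ht : t < Mm p) (hs : s < Mm p) :
    ((p : ZMod (p^2)) * (γ * (1+r)^t) = (p : ZMod (p^2)) * (γ * (1+r)^s) ↔ t = s) := by
  haveI : Fact p.Prime := ⟨hp⟩
  rw [pmul_eq_iff hp, pi_unit_term, pi_unit_term]
  constructor
  · intro h
    exact injp hp hp8 hr hgen ht hs (mul_left_cancel₀ (pi_gamma_ne hp hγ) h)
  · rintro rfl; rfl

lemma punit_ne_neg (hp : p.Prime) (hp8 : p % 8 = 7) {r : ZMod (p^2)} (hr : r^2 = 2)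
    (hgen : ∀ x : ZMod (p^2), IsUnit x → ∃ i : ℕ, x = (1+r)^i ∨ x = -((1+r)^i))
    {γ : ZMod (p^2)} (hγ : IsUnit γ) {t s : ℕ}
    (ht : t < Mm p) (hs : s < Mm p) :
    (p : ZMod (p^2)) * (γ * (1+r)^t) ≠ -((p : ZMod (p^2)) * (γ * (1+r)^s)) := by
  haveI : Fact p.Prime := ⟨hp⟩
  intro h
  have h2 : (p : ZMod (p^2)) * (γ * (1+r)^t) = (p : ZMod (p^2)) * (-(γ * (1+r)^s)) := by
    rw [h]; ring
  rw [pmul_eq_iff hp, pi_unit_term, map_neg, pi_unit_term] at h2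
  rw [← mul_neg] at h2
  exact nnegp hp hp8 hr hgen ht hs (mul_left_cancel₀ (pi_gamma_ne hp hγ) h2)

lemma punit_ne_zero (hp : p.Prime) {r : ZMod (p^2)} (hr : r^2 = 2)
    {γ : ZMod (p^2)} (hγ : IsUnit γ) (t : ℕ) :
    (p : ZMod (p^2)) * (γ * (1+r)^t) ≠ 0 := by
  intro h
  rw [pmul_eq_zero_iff hp] at h
  exact (isUnit_iff_pi hp _).mp (unit_term_isUnit hr hγ t) h

lemma punit_not_isUnit (hp : p.Prime) {r γ : ZMod (p^2)} (t : ℕ) :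
    ¬ IsUnit ((p : ZMod (p^2)) * (γ * (1+r)^t)) := by
  rw [isUnit_iff_not_dvd hp]
  intro h
  exact h (Dvd.intro _ rfl)

/-- The key counting identity. -/
lemma core (hp : p.Prime) (hp8 : p % 8 = 7) {r : ZMod (p^2)} (hr : r^2 = 2)
    (hgen : ∀ x : ZMod (p^2), IsUnit x → ∃ i : ℕ, x = (1+r)^i ∨ x = -((1+r)^i))
    {γ : ZMod (p^2)} (hγ : IsUnit γ) (z : ZMod (p^2)) :
    ((∑ s ∈ Finset.range (Nn p - 1),
        ((if z = γ * (1+r)^(s+1) then 1 else 0)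
          + (if z = -(γ * (1+r)^(s+1)) then 1 else 0)))
      + (∑ s ∈ Finset.range (Mm p - 1),
        ((if z = (p : ZMod (p^2)) * (γ * (1+r)^(s+1)) then 1 else 0)
          + (if z = -((p : ZMod (p^2)) * (γ * (1+r)^(s+1))) then 1 else 0))) : ℕ)
    = if z ∈ ({0, γ, -γ, (p : ZMod (p^2)) * γ, -((p : ZMod (p^2)) * γ)} : Set (ZMod (p^2)))
      then 0 else 1 := by
  haveI : Fact p.Prime := ⟨hp⟩
  haveI : NeZero (p^2) := ⟨pow_ne_zero 2 hp.ne_zero⟩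
  haveI : Fact (1 < p^2) := ⟨by have := p7 hp hp8; nlinarith⟩
  have hθ := theta_isUnit hr
  have hNpos : 0 < Nn p := by
    have h7 := p7 hp hp8; unfold Nn
    have h2 : 0 < (p-1)/2 := by omega
    positivity
  have hMpos : 0 < Mm p := by
    have := p7 hp hp8; unfold Mm; omega
  have hmem : ∀ w : ZMod (p^2),
      w ∈ ({0, γ, -γ, (p : ZMod (p^2)) * γ, -((p : ZMod (p^2)) * γ)} : Set (ZMod (p^2)))
      ↔ (w = 0 ∨ w = γ ∨ w = -γ ∨ w = (p : ZMod (p^2)) * γ ∨ w = -((p : ZMod (p^2)) * γ)) := by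
    intro w; simp [Set.mem_insert_iff]
  have hγ0 : γ = γ * (1+r)^0 := by rw [pow_zero, mul_one]
  set L : ZMod (p^2) → ℕ := fun w =>
    ((∑ s ∈ Finset.range (Nn p - 1),
        ((if w = γ * (1+r)^(s+1) then 1 else 0)
          + (if w = -(γ * (1+r)^(s+1)) then 1 else 0)))
      + (∑ s ∈ Finset.range (Mm p - 1),
        ((if w = (p : ZMod (p^2)) * (γ * (1+r)^(s+1)) then 1 else 0)
          + (if w = -((p : ZMod (p^2)) * (γ * (1+r)^(s+1))) then 1 else 0))) : ℕ) with hL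
  set Rq : ZMod (p^2) → ℕ := fun w =>
    if w ∈ ({0, γ, -γ, (p : ZMod (p^2)) * γ, -((p : ZMod (p^2)) * γ)} : Set (ZMod (p^2)))
      then 0 else 1 with hR
  show L z = Rq z
  have hLneg : ∀ w, L (-w) = L w := by
    intro w
    rw [hL]
    simp only
    congr 1
    · apply Finset.sum_congr rfl
      intro s _
      rw [flip_term (-w), neg_neg]
    · apply Finset.sum_congr rfl
      intro s _
      rw [flip_term (-w), neg_neg]
  have hRneg : ∀ w, Rq (-w) = Rq w := by
    intro w
    rw [hR]
    simp only
    apply if_congr _ rfl rfl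
    rw [hmem, hmem]
    have hiff : ∀ a : ZMod (p^2), -w = a ↔ w = -a := by
      intro a
      constructor
      · intro h; rw [← h, neg_neg]
      · intro h; rw [h, neg_neg]
    rw [hiff, hiff, hiff, hiff, hiff, neg_zero, neg_neg, neg_neg]
    tauto
  have claim0 : L 0 = Rq 0 := by
    rw [hL, hR]
    simp only
    rw [if_pos (Set.mem_insert 0 _)]
    have h1 : (∑ s ∈ Finset.range (Nn p - 1),
        ((if (0 : ZMod (p^2)) = γ * (1+r)^(s+1) then 1 else 0)
          + (if (0 : ZMod (p^2)) = -(γ * (1+r)^(s+1)) then 1 else 0)) : ℕ) = 0 := by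
      apply Finset.sum_eq_zero
      intro s _
      have e1 : (0 : ZMod (p^2)) ≠ γ * (1+r)^(s+1) :=
        fun h => (unit_term_isUnit hr hγ (s+1)).ne_zero h.symm
      have e2 : (0 : ZMod (p^2)) ≠ -(γ * (1+r)^(s+1)) := by
        intro h
        exact (unit_term_isUnit hr hγ (s+1)).ne_zero (by rw [← neg_eq_zero, ← h])
      rw [if_neg e1, if_neg e2]
      rfl
    have h2 : (∑ s ∈ Finset.range (Mm p - 1),
        ((if (0 : ZMod (p^2)) = (p : ZMod (p^2)) * (γ * (1+r)^(s+1)) then 1 else 0)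
          + (if (0 : ZMod (p^2)) = -((p : ZMod (p^2)) * (γ * (1+r)^(s+1))) then 1 else 0)) : ℕ) = 0 := by
      apply Finset.sum_eq_zero
      intro s _
      have e1 : (0 : ZMod (p^2)) ≠ (p : ZMod (p^2)) * (γ * (1+r)^(s+1)) :=
        fun h => punit_ne_zero hp hr hγ (s+1) h.symm
      have e2 : (0 : ZMod (p^2)) ≠ -((p : ZMod (p^2)) * (γ * (1+r)^(s+1))) := by
        intro h
        exact punit_ne_zero hp hr hγ (s+1) (by rw [← neg_eq_zero, ← h])
      rw [if_neg e1, if_neg e2]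
      rfl
    rw [h1, h2]
  have claimU : ∀ t, t < Nn p → L (γ * (1+r)^t) = Rq (γ * (1+r)^t) := by
    intro t ht
    have hzu : IsUnit (γ * (1+r)^t) := unit_term_isUnit hr hγ t
    have hsum2 : (∑ s ∈ Finset.range (Mm p - 1),
        ((if γ * (1+r)^t = (p : ZMod (p^2)) * (γ * (1+r)^(s+1)) then 1 else 0)
          + (if γ * (1+r)^t = -((p : ZMod (p^2)) * (γ * (1+r)^(s+1))) then 1 else 0)) : ℕ) = 0 := by
      apply Finset.sum_eq_zero
      intro s _
      have e1 : γ * (1+r)^t ≠ (p : ZMod (p^2)) * (γ * (1+r)^(s+1)) := by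
        intro h; rw [h] at hzu; exact punit_not_isUnit hp (s+1) hzu
      have e2 : γ * (1+r)^t ≠ -((p : ZMod (p^2)) * (γ * (1+r)^(s+1))) := by
        intro h
        apply punit_not_isUnit hp (γ := γ) (r := r) (s+1)
        rw [← neg_neg ((p : ZMod (p^2)) * (γ * (1+r)^(s+1))), ← h]
        exact hzu.neg
      rw [if_neg e1, if_neg e2]
      rfl
    have hterm : ∀ s ∈ Finset.range (Nn p - 1),
        ((if γ * (1+r)^t = γ * (1+r)^(s+1) then 1 else 0)
          + (if γ * (1+r)^t = -(γ * (1+r)^(s+1)) then 1 else 0) : ℕ)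
        = if s = t - 1 ∧ 1 ≤ t then 1 else 0 := by
      intro s hs
      rw [Finset.mem_range] at hs
      have hs1 : s + 1 < Nn p := by omega
      rw [if_neg (unit_ne_neg hp hp8 hr hgen hγ ht hs1), add_zero]
      apply if_congr _ rfl rfl
      rw [unit_eq_iff hp hp8 hr hgen hγ ht hs1]
      omega
    rw [hL, hR]
    simp only
    rw [hsum2, add_zero, Finset.sum_congr rfl hterm]
    rcases Nat.eq_zero_or_pos t with rfl | htpos
    · rw [if_pos]
      · apply Finset.sum_eq_zero; intro s _; rw [if_neg]; omega
      · rw [hmem, pow_zero, mul_one]; tauto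
    · rw [if_neg]
      · have h1 : ∀ s ∈ Finset.range (Nn p - 1), (if s = t - 1 ∧ 1 ≤ t then 1 else 0 : ℕ)
            = if s = t - 1 then 1 else 0 := by
          intro s _
          apply if_congr _ rfl rfl
          omega
        rw [Finset.sum_congr rfl h1,
          Finset.sum_ite_eq' (Finset.range (Nn p - 1)) (t-1) (fun _ => 1),
          if_pos (Finset.mem_range.mpr (by omega))]
      · rw [hmem]
        push_neg
        refine ⟨hzu.ne_zero, ?_, ?_, ?_, ?_⟩
        · nth_rewrite 2 [hγ0]
          rw [Ne, unit_eq_iff hp hp8 hr hgen hγ ht hNpos]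
          omega
        · nth_rewrite 2 [hγ0]
          exact unit_ne_neg hp hp8 hr hgen hγ ht hNpos
        · intro h; rw [h] at hzu
          apply punit_not_isUnit hp (γ := γ) (r := r) 0
          rwa [← hγ0]
        · intro h
          apply punit_not_isUnit hp (γ := γ) (r := r) 0
          rw [← hγ0]
          have h' : (p : ZMod (p^2)) * γ = -(γ * (1+r)^t) := by rw [h, neg_neg]
          rw [h']
          exact hzu.neg
  have claimP : ∀ t, t < Mm p →
      L ((p : ZMod (p^2)) * (γ * (1+r)^t)) = Rq ((p : ZMod (p^2)) * (γ * (1+r)^t)) := by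
    intro t ht
    have hznu : ¬ IsUnit ((p : ZMod (p^2)) * (γ * (1+r)^t)) := punit_not_isUnit hp t
    have hsum1 : (∑ s ∈ Finset.range (Nn p - 1),
        ((if (p : ZMod (p^2)) * (γ * (1+r)^t) = γ * (1+r)^(s+1) then 1 else 0)
          + (if (p : ZMod (p^2)) * (γ * (1+r)^t) = -(γ * (1+r)^(s+1)) then 1 else 0)) : ℕ) = 0 := by
      apply Finset.sum_eq_zero
      intro s _
      have e1 : (p : ZMod (p^2)) * (γ * (1+r)^t) ≠ γ * (1+r)^(s+1) := by
        intro h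
        apply hznu
        rw [h]
        exact unit_term_isUnit hr hγ (s+1)
      have e2 : (p : ZMod (p^2)) * (γ * (1+r)^t) ≠ -(γ * (1+r)^(s+1)) := by
        intro h
        apply hznu
        rw [h]
        exact (unit_term_isUnit hr hγ (s+1)).neg
      rw [if_neg e1, if_neg e2]
      rfl
    have hterm : ∀ s ∈ Finset.range (Mm p - 1),
        ((if (p : ZMod (p^2)) * (γ * (1+r)^t) = (p : ZMod (p^2)) * (γ * (1+r)^(s+1)) then 1 else 0)
          + (if (p : ZMod (p^2)) * (γ * (1+r)^t) = -((p : ZMod (p^2)) * (γ * (1+r)^(s+1))) then 1 else 0) : ℕ)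
        = if s = t - 1 ∧ 1 ≤ t then 1 else 0 := by
      intro s hs
      rw [Finset.mem_range] at hs
      have hs1 : s + 1 < Mm p := by omega
      rw [if_neg (punit_ne_neg hp hp8 hr hgen hγ ht hs1), add_zero]
      apply if_congr _ rfl rfl
      rw [punit_eq_iff hp hp8 hr hgen hγ ht hs1]
      omega
    rw [hL, hR]
    simp only
    rw [hsum1, zero_add, Finset.sum_congr rfl hterm]
    rcases Nat.eq_zero_or_pos t with rfl | htpos
    · rw [if_pos]
      · apply Finset.sum_eq_zero; intro s _; rw [if_neg]; omega
      · rw [hmem, pow_zero, mul_one]; tauto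
    · rw [if_neg]
      · have h1 : ∀ s ∈ Finset.range (Mm p - 1), (if s = t - 1 ∧ 1 ≤ t then 1 else 0 : ℕ)
            = if s = t - 1 then 1 else 0 := by
          intro s _
          apply if_congr _ rfl rfl
          omega
        rw [Finset.sum_congr rfl h1,
          Finset.sum_ite_eq' (Finset.range (Mm p - 1)) (t-1) (fun _ => 1),
          if_pos (Finset.mem_range.mpr (by omega))]
      · rw [hmem]
        push_neg
        refine ⟨punit_ne_zero hp hr hγ t, ?_, ?_, ?_, ?_⟩
        · intro h; rw [h] at hznu; exact hznu hγ
        · intro h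
          apply hznu
          rw [h]
          exact hγ.neg
        · nth_rewrite 2 [hγ0]
          rw [Ne, punit_eq_iff hp hp8 hr hgen hγ ht hMpos]
          omega
        · nth_rewrite 2 [hγ0]
          exact punit_ne_neg hp hp8 hr hgen hγ ht hMpos
  by_cases hz0 : z = 0
  · rw [hz0]; exact claim0
  by_cases hzu : IsUnit z
  · obtain ⟨t, ht, hcase⟩ := rep2 hp hp8 hr hgen (z * ((hγ.unit⁻¹ : (ZMod (p^2))ˣ) : ZMod (p^2)))
      (hzu.mul (Units.isUnit _))
    have hzz : z = (z * ((hγ.unit⁻¹ : (ZMod (p^2))ˣ) : ZMod (p^2))) * γ := by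
      rw [mul_assoc]
      nth_rewrite 2 [← hγ.unit_spec]
      rw [Units.inv_mul, mul_one]
    rcases hcase with h | h
    · have hz : z = γ * (1+r)^t := by rw [hzz, h]; ring
      rw [hz]; exact claimU t ht
    · have hneg : -z = γ * (1+r)^t := by rw [hzz, h]; ring
      calc L z = L (-(-z)) := by rw [neg_neg]
        _ = L (-z) := hLneg _
        _ = Rq (-z) := by rw [hneg]; exact claimU t ht
        _ = Rq (-(-z)) := (hRneg _).symm
        _ = Rq z := by rw [neg_neg]
  · obtain ⟨c, hc⟩ : (p : ZMod (p^2)) ∣ z := by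
      by_contra h
      exact hzu ((isUnit_iff_not_dvd hp z).mpr h)
    have hπc : (π c : ZMod p) ≠ 0 := by
      intro h
      apply hz0
      rw [hc, pmul_eq_zero_iff hp, h]
    have hπγ : (π γ : ZMod p) ≠ 0 := pi_gamma_ne hp hγ
    obtain ⟨t, ht, hcase⟩ := repp hp hp8 hr hgen (π c * (π γ)⁻¹)
      ((isUnit_iff_ne_zero.mpr hπc).mul (isUnit_iff_ne_zero.mpr (inv_ne_zero hπγ)))
    have hcc : π c = (π c * (π γ)⁻¹) * π γ := by
      field_simp
    rcases hcase with h | h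
    · have hzres : z = (p : ZMod (p^2)) * (γ * (1+r)^t) := by
        rw [hc, pmul_eq_iff hp, pi_unit_term]
        rw [hcc, h]; ring
      rw [hzres]; exact claimP t ht
    · have hzres : -z = (p : ZMod (p^2)) * (γ * (1+r)^t) := by
        have h' : -z = (p : ZMod (p^2)) * (-c) := by rw [hc]; ring
        rw [h', pmul_eq_iff hp, pi_unit_term, map_neg]
        rw [hcc, h]; ring
      calc L z = L (-(-z)) := by rw [neg_neg]
        _ = L (-z) := hLneg _
        _ = Rq (-z) := by rw [hzres]; exact claimP t ht
        _ = Rq (-(-z)) := (hRneg _).symm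
        _ = Rq z := by rw [neg_neg]
end PPSaux

namespace PPSaux

variable {p : ℕ}

lemma count_four {X : Type*} [DecidableEq X] (z a b c d : X) :
    Multiset.count z ({a, b, c, d} : Multiset X)
    = (if z = a then 1 else 0) + (if z = b then 1 else 0)
      + (if z = c then 1 else 0) + (if z = d then 1 else 0) := by
  simp only [Multiset.insert_eq_cons, Multiset.count_cons, Multiset.count_singleton]
  ring

lemma sum_pair_reindex {Mo : Type*} [AddCommMonoid Mo] (g : ℕ → Mo) (K : ℕ) :
    ∑ i ∈ Finset.range K, (g (2*i+1) + g (2*i+2)) = ∑ s ∈ Finset.range (2*K), g (s+1) := by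
  induction K with
  | zero => simp
  | succ K ih =>
    rw [Finset.sum_range_succ, ih]
    have e : 2*(K+1) = (2*K)+1+1 := by ring
    rw [e, Finset.sum_range_succ, Finset.sum_range_succ]
    have e1 : 2*K+1+1 = 2*K+2 := by ring
    rw [e1, add_assoc]

lemma r_isUnit (hp : p.Prime) (hp8 : p % 8 = 7) {r : ZMod (p^2)} (hr : r^2 = 2) :
    IsUnit r := by
  obtain ⟨c, hc⟩ := (two_isUnit hp hp8).exists_right_inv
  exact IsUnit.of_mul_eq_one (r * c) (by rw [← mul_assoc, ← pow_two, hr, hc])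

lemma Nodd (hp : p.Prime) (hp8 : p % 8 = 7) : Nn p % 2 = 1 := by
  have h7 := p7 hp hp8
  have h1 : Odd p := by rw [Nat.odd_iff]; omega
  have h2 : Odd ((p-1)/2) := by rw [Nat.odd_iff]; omega
  have h3 := h1.mul h2
  rw [Nat.odd_iff] at h3
  exact h3

lemma Nbig (hp : p.Prime) (hp8 : p % 8 = 7) : 21 ≤ Nn p := by
  have h7 := p7 hp hp8
  have h1 : 3 ≤ (p-1)/2 := by omega
  calc 21 = 7 * 3 := rfl
    _ ≤ p * ((p-1)/2) := Nat.mul_le_mul h7 h1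

lemma Modd (hp : p.Prime) (hp8 : p % 8 = 7) : Mm p % 2 = 1 := by
  have := p7 hp hp8
  rw [Mm]; omega

/-- The backward construction. -/
lemma backward (hp : p.Prime) (hp8 : p % 8 = 7) {r : ZMod (p^2)} (hr : r^2 = 2)
    (hgen : ∀ x : ZMod (p^2), IsUnit x → ∃ i : ℕ, x = (1+r)^i ∨ x = -((1+r)^i))
    {α : ZMod (p^2)} (hα : IsUnit α) :
    ∃ S : Finset (ZMod (p^2) × ZMod (p^2)),
      IsPPS ({0, α, -α, (p : ZMod (p^2)) * α, -((p : ZMod (p^2)) * α)} : Set (ZMod (p^2)))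
            ({0, r*α, -(r*α), (p : ZMod (p^2)) * (r*α), -((p : ZMod (p^2)) * (r*α))} :
              Set (ZMod (p^2))) S := by
  haveI : Fact p.Prime := ⟨hp⟩
  have h7 := p7 hp hp8
  have hNodd := Nodd hp hp8
  have hModd := Modd hp hp8
  have hNbig := Nbig hp hp8
  have hMpos : 0 < Mm p := by rw [Mm]; omega
  have hNpos : 0 < Nn p := by omega
  have hrα : IsUnit (r * α) := (r_isUnit hp hp8 hr).mul hα
  set K := (Nn p - 1) / 2 with hK
  set L := (Mm p - 1) / 2 with hL
  have h2K : 2 * K = Nn p - 1 := by omega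
  have h2L : 2 * L = Mm p - 1 := by omega
  set F : ℕ → ZMod (p^2) × ZMod (p^2) :=
    fun i => (α * (1+r)^(2*i+1), α * (1+r)^(2*i+2)) with hF
  set G : ℕ → ZMod (p^2) × ZMod (p^2) :=
    fun j => ((p : ZMod (p^2)) * (α * (1+r)^(2*j+1)),
              (p : ZMod (p^2)) * (α * (1+r)^(2*j+2))) with hG
  set m : Multiset (ZMod (p^2) × ZMod (p^2)) :=
    (Multiset.range K).map F + (Multiset.range L).map G with hm
  have hexp : ∀ i, i < K → 2*i+1 < Nn p ∧ 2*i+2 < Nn p := by intro i hi; omega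
  have hexpM : ∀ j, j < L → 2*j+1 < Mm p ∧ 2*j+2 < Mm p := by intro j hj; omega
  have hnodup : m.Nodup := by
    rw [hm, Multiset.nodup_add]
    refine ⟨?_, ?_, ?_⟩
    · apply Multiset.Nodup.map_on _ (Multiset.nodup_range K)
      intro i hi i' hi' hFe
      rw [Multiset.mem_range] at hi hi'
      have h1 : α * (1+r)^(2*i+1) = α * (1+r)^(2*i'+1) := congrArg Prod.fst hFe
      have := (unit_eq_iff hp hp8 hr hgen hα (hexp i hi).1 (hexp i' hi').1).mp h1
      omega
    · apply Multiset.Nodup.map_on _ (Multiset.nodup_range L)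
      intro j hj j' hj' hGe
      rw [Multiset.mem_range] at hj hj'
      have h1 : (p : ZMod (p^2)) * (α * (1+r)^(2*j+1))
          = (p : ZMod (p^2)) * (α * (1+r)^(2*j'+1)) := congrArg Prod.fst hGe
      have := (punit_eq_iff hp hp8 hr hgen hα (hexpM j hj).1 (hexpM j' hj').1).mp h1
      omega
    · rw [Multiset.disjoint_left]
      intro a haF haG
      rw [Multiset.mem_map] at haF haG
      obtain ⟨i, hi, hFi⟩ := haF
      obtain ⟨j, hj, hGj⟩ := haG
      have h1 : α * (1+r)^(2*i+1) = (p : ZMod (p^2)) * (α * (1+r)^(2*j+1)) := by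
        rw [← hGj] at hFi
        exact congrArg Prod.fst hFi
      have h2 := unit_term_isUnit hr hα (2*i+1)
      rw [h1] at h2
      exact punit_not_isUnit hp (2*j+1) h2
  refine ⟨⟨m, hnodup⟩, ?_, ?_⟩
  · -- first condition
    intro z
    have main : (m.bind fun q => ({q.1, -q.1, q.2, -q.2} : Multiset (ZMod (p^2)))).count z
        = if z ∈ ({0, α, -α, (p : ZMod (p^2)) * α, -((p : ZMod (p^2)) * α)} : Set (ZMod (p^2)))
          then 0 else 1 := by
      rw [hm, Multiset.add_bind, Multiset.count_add, Multiset.bind_map, Multiset.bind_map,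
        Multiset.count_bind, Multiset.count_bind]
      have c1 : ∀ i : ℕ, Multiset.count z
          ((fun q : ZMod (p^2) × ZMod (p^2) => ({q.1, -q.1, q.2, -q.2} : Multiset (ZMod (p^2)))) (F i))
          = (((if z = α * (1+r)^(2*i+1) then 1 else 0) + (if z = -(α * (1+r)^(2*i+1)) then 1 else 0))
            + ((if z = α * (1+r)^(2*i+2) then 1 else 0) + (if z = -(α * (1+r)^(2*i+2)) then 1 else 0))) := by
        intro i
        simp only [hF]
        rw [count_four]
        ring
      have c2 : ∀ j : ℕ, Multiset.count z
          ((fun q : ZMod (p^2) × ZMod (p^2) => ({q.1, -q.1, q.2, -q.2} : Multiset (ZMod (p^2)))) (G j))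
          = (((if z = (p : ZMod (p^2)) * (α * (1+r)^(2*j+1)) then 1 else 0)
              + (if z = -((p : ZMod (p^2)) * (α * (1+r)^(2*j+1))) then 1 else 0))
            + ((if z = (p : ZMod (p^2)) * (α * (1+r)^(2*j+2)) then 1 else 0)
              + (if z = -((p : ZMod (p^2)) * (α * (1+r)^(2*j+2))) then 1 else 0))) := by
        intro j
        simp only [hG]
        rw [count_four]
        ring
      rw [Multiset.map_congr rfl (fun i _ => c1 i), Multiset.map_congr rfl (fun j _ => c2 j)]
      have key1 : ((Multiset.range K).map fun i =>
          (((if z = α * (1+r)^(2*i+1) then 1 else 0) + (if z = -(α * (1+r)^(2*i+1)) then 1 else 0))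
            + ((if z = α * (1+r)^(2*i+2) then 1 else 0) + (if z = -(α * (1+r)^(2*i+2)) then 1 else 0)))).sum
          = ∑ s ∈ Finset.range (Nn p - 1),
            ((if z = α * (1+r)^(s+1) then 1 else 0) + (if z = -(α * (1+r)^(s+1)) then 1 else 0)) := by
        show (∑ i ∈ Finset.range K, _) = _
        rw [sum_pair_reindex (fun s => ((if z = α * (1+r)^s then 1 else 0)
          + (if z = -(α * (1+r)^s) then 1 else 0))) K, h2K]
      have key2 : ((Multiset.range L).map fun j =>
          (((if z = (p : ZMod (p^2)) * (α * (1+r)^(2*j+1)) then 1 else 0)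
              + (if z = -((p : ZMod (p^2)) * (α * (1+r)^(2*j+1))) then 1 else 0))
            + ((if z = (p : ZMod (p^2)) * (α * (1+r)^(2*j+2)) then 1 else 0)
              + (if z = -((p : ZMod (p^2)) * (α * (1+r)^(2*j+2))) then 1 else 0)))).sum
          = ∑ s ∈ Finset.range (Mm p - 1),
            ((if z = (p : ZMod (p^2)) * (α * (1+r)^(s+1)) then 1 else 0)
              + (if z = -((p : ZMod (p^2)) * (α * (1+r)^(s+1))) then 1 else 0)) := by
        show (∑ j ∈ Finset.range L, _) = _
        rw [sum_pair_reindex (fun s => ((if z = (p : ZMod (p^2)) * (α * (1+r)^s) then 1 else 0)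
          + (if z = -((p : ZMod (p^2)) * (α * (1+r)^s)) then 1 else 0))) L, h2L]
      rw [key1, key2]
      exact core hp hp8 hr hgen hα z
    convert main using 2
  · -- second condition
    intro z
    have main : (m.bind fun q => ({q.1 + q.2, -(q.1 + q.2), q.1 - q.2, -(q.1 - q.2)} :
        Multiset (ZMod (p^2)))).count z
        = if z ∈ ({0, r*α, -(r*α), (p : ZMod (p^2)) * (r*α), -((p : ZMod (p^2)) * (r*α))} :
            Set (ZMod (p^2))) then 0 else 1 := by
      rw [hm, Multiset.add_bind, Multiset.count_add, Multiset.bind_map, Multiset.bind_map,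
        Multiset.count_bind, Multiset.count_bind]
      have c1 : ∀ i : ℕ, Multiset.count z
          ((fun q : ZMod (p^2) × ZMod (p^2) =>
            ({q.1 + q.2, -(q.1 + q.2), q.1 - q.2, -(q.1 - q.2)} : Multiset (ZMod (p^2)))) (F i))
          = ((((if z = (r*α) * (1+r)^(2*i+1) then 1 else 0) + (if z = -((r*α) * (1+r)^(2*i+1)) then 1 else 0))
            + ((if z = (r*α) * (1+r)^(2*i+2) then 1 else 0) + (if z = -((r*α) * (1+r)^(2*i+2)) then 1 else 0)))) := by
        intro i
        simp only [hF]
        have ex : α * (1+r)^(2*i+1) + α * (1+r)^(2*i+2) = (r*α) * (1+r)^(2*i+2) := by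
          linear_combination (-(α * (1+r)^(2*i+1))) * hr
        have ey : α * (1+r)^(2*i+1) - α * (1+r)^(2*i+2) = -((r*α) * (1+r)^(2*i+1)) := by
          ring
        rw [ex, ey, neg_neg, count_four]
        ring
      have c2 : ∀ j : ℕ, Multiset.count z
          ((fun q : ZMod (p^2) × ZMod (p^2) =>
            ({q.1 + q.2, -(q.1 + q.2), q.1 - q.2, -(q.1 - q.2)} : Multiset (ZMod (p^2)))) (G j))
          = (((if z = (p : ZMod (p^2)) * ((r*α) * (1+r)^(2*j+1)) then 1 else 0)
              + (if z = -((p : ZMod (p^2)) * ((r*α) * (1+r)^(2*j+1))) then 1 else 0))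
            + ((if z = (p : ZMod (p^2)) * ((r*α) * (1+r)^(2*j+2)) then 1 else 0)
              + (if z = -((p : ZMod (p^2)) * ((r*α) * (1+r)^(2*j+2))) then 1 else 0))) := by
        intro j
        simp only [hG]
        have ex : (p : ZMod (p^2)) * (α * (1+r)^(2*j+1)) + (p : ZMod (p^2)) * (α * (1+r)^(2*j+2))
            = (p : ZMod (p^2)) * ((r*α) * (1+r)^(2*j+2)) := by
          linear_combination (-((p : ZMod (p^2)) * α * (1+r)^(2*j+1))) * hr
        have ey : (p : ZMod (p^2)) * (α * (1+r)^(2*j+1)) - (p : ZMod (p^2)) * (α * (1+r)^(2*j+2))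
            = -((p : ZMod (p^2)) * ((r*α) * (1+r)^(2*j+1))) := by
          ring
        rw [ex, ey, neg_neg, count_four]
        ring
      rw [Multiset.map_congr rfl (fun i _ => c1 i), Multiset.map_congr rfl (fun j _ => c2 j)]
      have key1 : ((Multiset.range K).map fun i =>
          (((if z = (r*α) * (1+r)^(2*i+1) then 1 else 0) + (if z = -((r*α) * (1+r)^(2*i+1)) then 1 else 0))
            + ((if z = (r*α) * (1+r)^(2*i+2) then 1 else 0) + (if z = -((r*α) * (1+r)^(2*i+2)) then 1 else 0)))).sum
          = ∑ s ∈ Finset.range (Nn p - 1),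
            ((if z = (r*α) * (1+r)^(s+1) then 1 else 0) + (if z = -((r*α) * (1+r)^(s+1)) then 1 else 0)) := by
        show (∑ i ∈ Finset.range K, _) = _
        rw [sum_pair_reindex (fun s => ((if z = (r*α) * (1+r)^s then 1 else 0)
          + (if z = -((r*α) * (1+r)^s) then 1 else 0))) K, h2K]
      have key2 : ((Multiset.range L).map fun j =>
          (((if z = (p : ZMod (p^2)) * ((r*α) * (1+r)^(2*j+1)) then 1 else 0)
              + (if z = -((p : ZMod (p^2)) * ((r*α) * (1+r)^(2*j+1))) then 1 else 0))
            + ((if z = (p : ZMod (p^2)) * ((r*α) * (1+r)^(2*j+2)) then 1 else 0)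
              + (if z = -((p : ZMod (p^2)) * ((r*α) * (1+r)^(2*j+2))) then 1 else 0)))).sum
          = ∑ s ∈ Finset.range (Mm p - 1),
            ((if z = (p : ZMod (p^2)) * ((r*α) * (1+r)^(s+1)) then 1 else 0)
              + (if z = -((p : ZMod (p^2)) * ((r*α) * (1+r)^(s+1))) then 1 else 0)) := by
        show (∑ j ∈ Finset.range L, _) = _
        rw [sum_pair_reindex (fun s => ((if z = (p : ZMod (p^2)) * ((r*α) * (1+r)^s) then 1 else 0)
          + (if z = -((p : ZMod (p^2)) * ((r*α) * (1+r)^s)) then 1 else 0))) L, h2L]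
      rw [key1, key2]
      exact core hp hp8 hr hgen hrα z
    convert main using 2
end PPSaux

namespace PPSaux

variable {p : ℕ}

lemma map4_sum {X : Type*} [CommRing X] (a b c d : X) (g : X → X) :
    (({a, b, c, d} : Multiset X).map g).sum = g a + g b + g c + g d := by
  simp only [Multiset.insert_eq_cons, Multiset.map_cons, Multiset.sum_cons,
    Multiset.map_singleton, Multiset.sum_singleton]
  ring

lemma sum_sq_zero [NeZero (p^2)] (hp : p.Prime) (hp8 : p % 8 = 7) {r : ZMod (p^2)} (hr : r^2 = 2) :
    ∑ z : ZMod (p^2), z^2 = 0 := by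
  have hu := r_isUnit hp hp8 hr
  have hbij : Function.Bijective (fun z : ZMod (p^2) => r * z) := by
    constructor
    · intro a b h
      exact hu.mul_left_cancel h
    · intro z
      refine ⟨((hu.unit⁻¹ : (ZMod (p^2))ˣ) : ZMod (p^2)) * z, ?_⟩
      show r * (((hu.unit⁻¹ : (ZMod (p^2))ˣ) : ZMod (p^2)) * z) = z
      rw [← mul_assoc]
      nth_rewrite 1 [← hu.unit_spec]
      rw [Units.mul_inv, one_mul]
  have hb := Fintype.sum_bijective _ hbij (fun z => (r*z)^2) (fun z => z^2) (fun z => rfl)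
  have h2 : ∑ z : ZMod (p^2), (r*z)^2 = 2 * ∑ z : ZMod (p^2), z^2 := by
    rw [Finset.mul_sum]
    apply Finset.sum_congr rfl
    intro z _
    rw [mul_pow, hr]
  rw [h2] at hb
  have hb' : 2 * (∑ z : ZMod (p^2), z^2) = ∑ z : ZMod (p^2), z^2 := hb
  linear_combination hb'

lemma pmul_unit_ne_zero (hp : p.Prime) {α : ZMod (p^2)} (hα : IsUnit α) :
    (p : ZMod (p^2)) * α ≠ 0 := by
  intro h
  rw [pmul_eq_zero_iff hp] at h
  exact (isUnit_iff_pi hp α).mp hα h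

lemma pmul_not_unit (hp : p.Prime) (α : ZMod (p^2)) :
    ¬ IsUnit ((p : ZMod (p^2)) * α) := by
  rw [isUnit_iff_not_dvd hp]
  intro h
  exact h (Dvd.intro _ rfl)

lemma sum_A (hp : p.Prime) (hp8 : p % 8 = 7) {α : ZMod (p^2)} (hα : IsUnit α) :
    ∑ z ∈ ({0, α, -α, (p : ZMod (p^2)) * α, -((p : ZMod (p^2)) * α)} : Finset (ZMod (p^2))),
      z^2 = 2 * α^2 := by
  haveI : NeZero (p^2) := ⟨pow_ne_zero 2 hp.ne_zero⟩
  haveI : Fact (1 < p^2) := ⟨by have := p7 hp hp8; nlinarith⟩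
  have h2u := two_isUnit hp hp8
  have h2α : IsUnit (2 * α) := h2u.mul hα
  have hpα0 : (p : ZMod (p^2)) * α ≠ 0 := pmul_unit_ne_zero hp hα
  have hpαnu : ¬ IsUnit ((p : ZMod (p^2)) * α) := pmul_not_unit hp α
  have hne1 : α ≠ -α := by
    intro h
    have h' : 2 * α = 0 := by linear_combination h
    exact h2α.ne_zero h'
  have hne2 : α ≠ (p : ZMod (p^2)) * α := fun h => hpαnu (h ▸ hα)
  have hne3 : α ≠ -((p : ZMod (p^2)) * α) := by
    intro h
    apply hpαnu
    have : (p : ZMod (p^2)) * α = -α := by linear_combination h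
    rw [this]
    exact hα.neg
  have hne4 : -α ≠ (p : ZMod (p^2)) * α := by
    intro h
    exact hpαnu (h ▸ hα.neg)
  have hne5 : -α ≠ -((p : ZMod (p^2)) * α) := by
    intro h
    exact hne2 (neg_inj.mp h)
  have hne6 : (p : ZMod (p^2)) * α ≠ -((p : ZMod (p^2)) * α) := by
    intro h
    have h' : (p : ZMod (p^2)) * (2 * α) = 0 := by linear_combination h
    rw [pmul_eq_zero_iff hp] at h'
    exact (isUnit_iff_pi hp _).mp h2α h'
  have h0 : (0 : ZMod (p^2)) ∉ ({α, -α, (p : ZMod (p^2)) * α, -((p : ZMod (p^2)) * α)} :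
      Finset (ZMod (p^2))) := by
    simp only [Finset.mem_insert, Finset.mem_singleton]
    push_neg
    refine ⟨fun h => hα.ne_zero h.symm, fun h => hα.neg.ne_zero h.symm,
      fun h => hpα0 h.symm, fun h => ?_⟩
    have h' : (p : ZMod (p^2)) * α = 0 := by linear_combination h
    exact hpα0 h'
  have h1 : α ∉ ({-α, (p : ZMod (p^2)) * α, -((p : ZMod (p^2)) * α)} : Finset (ZMod (p^2))) := by
    simp only [Finset.mem_insert, Finset.mem_singleton]
    push_neg
    exact ⟨hne1, hne2, hne3⟩
  have h2 : -α ∉ ({(p : ZMod (p^2)) * α, -((p : ZMod (p^2)) * α)} : Finset (ZMod (p^2))) := by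
    simp only [Finset.mem_insert, Finset.mem_singleton]
    push_neg
    exact ⟨hne4, hne5⟩
  have h3 : (p : ZMod (p^2)) * α ∉ ({-((p : ZMod (p^2)) * α)} : Finset (ZMod (p^2))) := by
    simp only [Finset.mem_singleton]
    exact hne6
  rw [Finset.sum_insert h0, Finset.sum_insert h1, Finset.sum_insert h2, Finset.sum_insert h3,
    Finset.sum_singleton]
  have hp2 : ((p : ZMod (p^2)))^2 = 0 := by
    rw [← Nat.cast_pow, ZMod.natCast_self]
  linear_combination (2 * α^2) * hp2
end PPSaux

namespace PPSaux

variable {p : ℕ}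

lemma Qsum {X : Type*} [CommRing X] [Fintype X]
    (A : Set X) (m : Multiset X) (g : X → X)
    (hA : ∀ z, m.count z = if z ∈ A then 0 else 1) :
    (m.map g).sum = (∑ z : X, g z) - ∑ z ∈ Finset.univ.filter (fun z => z ∈ A), g z := by
  rw [Finset.sum_multiset_map_count]
  have hzero : ∀ x ∈ Finset.univ, x ∉ m.toFinset → m.count x • g x = 0 := by
    intro x _ hx
    rw [Multiset.count_eq_zero_of_notMem (fun hm => hx (Multiset.mem_toFinset.mpr hm)), zero_smul]
  rw [Finset.sum_subset (Finset.subset_univ m.toFinset) hzero]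
  have hterm : ∀ z ∈ Finset.univ, m.count z • g z
      = g z - (if z ∈ A then g z else 0) := by
    intro z _
    rw [hA z]
    by_cases h : z ∈ A
    · simp [h]
    · simp [h]
  rw [Finset.sum_congr rfl hterm, Finset.sum_sub_distrib, ← Finset.sum_filter]

lemma sum_A' [NeZero (p^2)] (hp : p.Prime) (hp8 : p % 8 = 7) {α : ZMod (p^2)} (hα : IsUnit α)
    {inst : DecidablePred (fun z =>
      z ∈ ({0, α, -α, (p : ZMod (p^2)) * α, -((p : ZMod (p^2)) * α)} : Set (ZMod (p^2))))} :
    ∑ z ∈ @Finset.filter _ (fun z =>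
      z ∈ ({0, α, -α, (p : ZMod (p^2)) * α, -((p : ZMod (p^2)) * α)} : Set (ZMod (p^2)))) inst
        Finset.univ, z^2
    = 2 * α^2 := by
  rw [← sum_A hp hp8 hα]
  apply Finset.sum_congr _ (fun _ _ => rfl)
  ext w
  simp [Set.mem_insert_iff]

lemma forward (hp : p.Prime) (hp8 : p % 8 = 7) {r : ZMod (p^2)} (hr : r^2 = 2)
    {α β : ZMod (p^2)} (hα : IsUnit α) (hβ : IsUnit β)
    {S : Finset (ZMod (p^2) × ZMod (p^2))}
    (hS : IsPPS ({0, α, -α, (p : ZMod (p^2)) * α, -((p : ZMod (p^2)) * α)} : Set (ZMod (p^2)))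
          ({0, β, -β, (p : ZMod (p^2)) * β, -((p : ZMod (p^2)) * β)} : Set (ZMod (p^2))) S) :
    2 * α^2 - β^2 = 0 := by
  classical
  haveI : NeZero (p^2) := ⟨pow_ne_zero 2 hp.ne_zero⟩
  obtain ⟨h1, h2⟩ := hS
  have hQ1 := Qsum _ _ (fun z => z^2) h1
  have hQ2 := Qsum _ _ (fun z => z^2) h2
  beta_reduce at hQ1 hQ2
  rw [sum_A' hp hp8 hα, sum_sq_zero hp hp8 hr] at hQ1
  rw [sum_A' hp hp8 hβ, sum_sq_zero hp hp8 hr] at hQ2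
  have hrel : ((S.val.bind fun q => ({q.1 + q.2, -(q.1 + q.2), q.1 - q.2, -(q.1 - q.2)} :
        Multiset (ZMod (p^2)))).map fun z => z^2).sum
      = 2 * ((S.val.bind fun q => ({q.1, -q.1, q.2, -q.2} :
        Multiset (ZMod (p^2)))).map fun z => z^2).sum := by
    rw [Multiset.map_bind, Multiset.map_bind, Multiset.sum_bind, Multiset.sum_bind]
    have e1 : ∀ q : ZMod (p^2) × ZMod (p^2),
        ((({q.1 + q.2, -(q.1 + q.2), q.1 - q.2, -(q.1 - q.2)} : Multiset (ZMod (p^2))).map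
          fun z => z^2)).sum
        = 2 * ((({q.1, -q.1, q.2, -q.2} : Multiset (ZMod (p^2))).map fun z => z^2)).sum := by
      intro q
      rw [map4_sum, map4_sum]
      ring
    rw [Multiset.map_congr rfl (fun q _ => e1 q), Multiset.sum_map_mul_left]
  have E : (2 : ZMod (p^2)) * (2 * α^2 - β^2) = 2 * 0 := by
    linear_combination hrel - hQ2 + 2 * hQ1
  exact (two_isUnit hp hp8).mul_left_cancel E

lemma sq_eq_sq_pm (hp : p.Prime) (hp8 : p % 8 = 7) {x y : ZMod (p^2)}
    (hx : IsUnit x) (h : x^2 = y^2) : x = y ∨ x = -y := by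
  have h0 : (x - y) * (x + y) = 0 := by linear_combination h
  rcases mul_eq_zero_cases hp h0 with h1 | h1 | ⟨h1, h2⟩
  · exact Or.inl (sub_eq_zero.mp h1)
  · exact Or.inr (eq_neg_of_add_eq_zero_left h1)
  · exfalso
    have hdvd : (p : ZMod (p^2)) ∣ 2 * x := by
      have := dvd_add h1 h2
      have e : (x - y) + (x + y) = 2 * x := by ring
      rwa [e] at this
    exact (isUnit_iff_not_dvd hp _).mp ((two_isUnit hp hp8).mul hx) hdvd

end PPSaux


theorem stmt17 (p : ℕ) (hp : Nat.Prime p) (hp8 : p % 8 = 7)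
    (r : ZMod (p ^ 2)) (hr : r ^ 2 = 2)
    (hgen : ∀ x : ZMod (p ^ 2), IsUnit x →
      ∃ i : ℕ, x = (1 + r) ^ i ∨ x = -((1 + r) ^ i))
    (α β : ZMod (p ^ 2))
    (hα : ¬ ((p : ZMod (p ^ 2)) ∣ α)) (hβ : ¬ ((p : ZMod (p ^ 2)) ∣ β)) :
    (∃ S : Finset (ZMod (p ^ 2) × ZMod (p ^ 2)),
      IsPPS ({0, α, -α, (p : ZMod (p ^ 2)) * α, -((p : ZMod (p ^ 2)) * α)} : Set (ZMod (p ^ 2)))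
            ({0, β, -β, (p : ZMod (p ^ 2)) * β, -((p : ZMod (p ^ 2)) * β)} : Set (ZMod (p ^ 2))) S)
    ↔ 2 * α ^ 2 - β ^ 2 = 0 := by
  have hαu : IsUnit α := (PPSaux.isUnit_iff_not_dvd hp α).mpr hα
  have hβu : IsUnit β := (PPSaux.isUnit_iff_not_dvd hp β).mpr hβ
  constructor
  · rintro ⟨S, hS⟩
    exact PPSaux.forward hp hp8 hr hαu hβu hS
  · intro hcond
    have hb2 : β^2 = (r*α)^2 := by linear_combination -hcond - α^2 * hr
    rcases PPSaux.sq_eq_sq_pm hp hp8 hβu hb2 with hb | hb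
    · rw [hb]
      exact PPSaux.backward hp hp8 hr hgen hαu
    · have hset : ({0, β, -β, (p : ZMod (p^2)) * β, -((p : ZMod (p^2)) * β)} : Set (ZMod (p^2)))
          = ({0, r*α, -(r*α), (p : ZMod (p^2)) * (r*α), -((p : ZMod (p^2)) * (r*α))} :
            Set (ZMod (p^2))) := by
        rw [hb]
        ext w
        simp only [Set.mem_insert_iff, Set.mem_singleton_iff, neg_neg, mul_neg]
        tauto
      rw [hset]
      exact PPSaux.backward hp hp8 hr hgen hαu
end

section
/- Let v be a positive integer with gcd(v,6) = 1. If there exists a PS(v), or there exist nonzero α, β ∈ Z_v and an APS(v,α,β), then there exists a maximum (3v,4,1)-optical orthogonal code. -/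
open scoped Classical

/-- The multiset of differences `x - y` over all ordered pairs of distinct elements
of the codeword `b`. -/
def codewordDiffs {n : ℕ} (b : Finset (ZMod n)) : Multiset (ZMod n) :=
  ((b ×ˢ b).filter fun p => p.1 ≠ p.2).val.map fun p => p.1 - p.2

/-- The multiset of differences of a family of codewords. -/
def OOCDiffs {n : ℕ} (B : Finset (Finset (ZMod n))) : Multiset (ZMod n) :=
  B.val.bind codewordDiffs

/-- `B` is a `(n, k, 1)`-optical orthogonal code: a set of `k`-subsets of `ZMod n`
whose multiset of differences contains no repeated element. -/
def IsOOC (n k : ℕ) (B : Finset (Finset (ZMod n))) : Prop :=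
  (∀ b ∈ B, b.card = k) ∧ (OOCDiffs B).Nodup

/-- The leave of an optical orthogonal code: the set of missing differences. -/
def OOCLeave {n : ℕ} (B : Finset (Finset (ZMod n))) : Set (ZMod n) :=
  {z : ZMod n | z ∉ OOCDiffs B}

/-- A maximum `(n, k, 1)`-optical orthogonal code: the leave has size at most `k * (k - 1)`. -/
def IsMaximumOOC (n k : ℕ) (B : Finset (Finset (ZMod n))) : Prop :=
  IsOOC n k B ∧ (OOCLeave B).ncard ≤ k * (k - 1)

lemma count_inst {α : Type*} {i1 i2 : DecidableEq α} (a : α) (s : Multiset α) :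
    @Multiset.count α i1 a s = @Multiset.count α i2 a s := by
  have : i1 = i2 := Subsingleton.elim i1 i2
  rw [this]

lemma zmod3_cases (c : ZMod 3) : c = 0 ∨ c = 1 ∨ c = 2 := by revert c; decide

lemma codewordDiffs_quad {n : ℕ} (a0 a1 a2 a3 : ZMod n)
    (h01 : a0 ≠ a1) (h02 : a0 ≠ a2) (h03 : a0 ≠ a3)
    (h12 : a1 ≠ a2) (h13 : a1 ≠ a3) (h23 : a2 ≠ a3) :
    codewordDiffs ({a0, a1, a2, a3} : Finset (ZMod n)) =
      {a0 - a1, a0 - a2, a0 - a3, a1 - a0, a1 - a2, a1 - a3,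
       a2 - a0, a2 - a1, a2 - a3, a3 - a0, a3 - a1, a3 - a2} := by
  have hval : ({a0, a1, a2, a3} : Finset (ZMod n)).val = a0 ::ₘ a1 ::ₘ a2 ::ₘ {a3} := by
    rw [show ({a0,a1,a2,a3} : Finset (ZMod n)) = insert a0 (insert a1 (insert a2 {a3})) from rfl]
    rw [Finset.insert_val_of_notMem (by simp [h01, h02, h03]),
        Finset.insert_val_of_notMem (by simp [h12, h13]),
        Finset.insert_val_of_notMem (by simp [h23])]
    rfl
  unfold codewordDiffs
  rw [Finset.filter_val, Finset.product_val, hval]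
  simp [Multiset.product, Multiset.cons_bind, Multiset.filter_cons, Multiset.filter_singleton,
    h01, h02, h03, h12, h13, h23, h01.symm, h02.symm, h03.symm, h12.symm, h13.symm, h23.symm]
  refine Multiset.ext.2 fun a => ?_
  simp [Multiset.count_cons, Multiset.count_singleton]
  ac_rfl

lemma main_construction (v : ℕ) (hco : Nat.Coprime 3 v) (α β : ZMod v)
    (S : Finset (ZMod v × ZMod v))
    (hS : IsPPS ({0, α, -α} : Set (ZMod v)) ({0, β, -β} : Set (ZMod v)) S) :
    ∃ B : Finset (Finset (ZMod (3 * v))), IsMaximumOOC (3 * v) 4 B := by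
  classical
  obtain ⟨h1c, h2c⟩ := hS
  have h1 : ∀ z : ZMod v, (S.val.bind fun p =>
      ({p.1, -p.1, p.2, -p.2} : Multiset (ZMod v))).count z
      = if z ∈ ({0, α, -α} : Set (ZMod v)) then 0 else 1 :=
    fun z => by
      refine (count_inst _ _).trans ((h1c z).trans ?_)
      congr 1
  have h2 : ∀ z : ZMod v, (S.val.bind fun p =>
      ({p.1 + p.2, -(p.1 + p.2), p.1 - p.2, -(p.1 - p.2)} : Multiset (ZMod v))).count z
      = if z ∈ ({0, β, -β} : Set (ZMod v)) then 0 else 1 :=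
    fun z => by
      refine (count_inst _ _).trans ((h2c z).trans ?_)
      congr 1
  set e : ZMod (3 * v) ≃+* ZMod 3 × ZMod v := ZMod.chineseRemainder hco with he
  set f : ZMod 3 × ZMod v → ZMod (3 * v) := fun z => e.symm z with hf
  have hfinj : Function.Injective f := fun a b hab => e.symm.injective hab
  have hfsub : ∀ a b, f a - f b = f (a - b) := fun a b => (map_sub e.symm a b).symm
  have hef : ∀ z, e (f z) = z := fun z => e.apply_symm_apply z
  have hfe : ∀ w : ZMod (3 * v), f (e w) = w := fun w => e.symm_apply_apply w
  have h301 : (0 : ZMod 3) - 1 = 2 := by decide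
  have d01 : (0 : ZMod 3) ≠ 1 := by decide
  have d02 : (0 : ZMod 3) ≠ 2 := by decide
  have d12 : (1 : ZMod 3) ≠ 2 := by decide
  -- counting image multisets
  have hcount : ∀ (T : Multiset (ZMod v)) (i : ZMod 3) (w : ZMod (3*v)),
      (T.map fun z => f (i, z)).count w = if (e w).1 = i then T.count (e w).2 else 0 := by
    intro T i w
    have hginj : Function.Injective (fun z : ZMod v => f (i, z)) := by
      intro a b hab
      exact congrArg Prod.snd (hfinj hab)
    split_ifs with hi
    · have hw : w = f (i, (e w).2) := by
        conv_lhs => rw [← hfe w]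
        congr 1
        exact Prod.ext hi rfl
      conv_lhs => rw [hw]
      exact Multiset.count_map_eq_count' _ _ hginj _
    · rw [Multiset.count_eq_zero]
      intro hw
      obtain ⟨z, hz, hzw⟩ := Multiset.mem_map.1 hw
      apply hi
      rw [← hzw, hef]
  -- per-pair facts
  have hpair : ∀ p ∈ S, p.1 + p.2 ≠ 0 ∧ p.1 - p.2 ≠ 0 := by
    intro p hp
    constructor
    · intro h0
      have hmem : (0:ZMod v) ∈ S.val.bind (fun p =>
          ({p.1+p.2, -(p.1+p.2), p.1-p.2, -(p.1-p.2)} : Multiset (ZMod v))) :=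
        Multiset.mem_bind.2 ⟨p, Finset.mem_def.1 hp, by simp [h0]⟩
      have h20 := h2 0
      rw [if_pos (by simp)] at h20
      exact absurd hmem (Multiset.count_eq_zero.1 h20)
    · intro h0
      have hmem : (0:ZMod v) ∈ S.val.bind (fun p =>
          ({p.1+p.2, -(p.1+p.2), p.1-p.2, -(p.1-p.2)} : Multiset (ZMod v))) :=
        Multiset.mem_bind.2 ⟨p, Finset.mem_def.1 hp, by
          refine Multiset.mem_cons.2 (Or.inr ?_)
          refine Multiset.mem_cons.2 (Or.inr ?_)
          exact Multiset.mem_cons.2 (Or.inl h0.symm)⟩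
      have h20 := h2 0
      rw [if_pos (by simp)] at h20
      exact absurd hmem (Multiset.count_eq_zero.1 h20)
  -- the blocks
  set blk : ZMod v × ZMod v → Finset (ZMod (3*v)) := fun p =>
    {f (0, 0), f (0, p.1 + p.2), f (1, p.1), f (1, p.2)} with hblk
  have hcard : ∀ p ∈ S, (blk p).card = 4 := by
    intro p hp
    obtain ⟨hxy, hxmy⟩ := hpair p hp
    have hxny : p.1 ≠ p.2 := sub_ne_zero.1 hxmy
    have m1 : f (1, p.2) ∉ (∅ : Finset (ZMod (3*v))) := by simp
    have m2 : f (1, p.1) ∉ ({f (1, p.2)} : Finset (ZMod (3*v))) := by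
      simp [hfinj.eq_iff, Prod.mk.injEq, hxny]
    have m3 : f (0, p.1 + p.2) ∉ ({f (1, p.1), f (1, p.2)} : Finset (ZMod (3*v))) := by
      simp [hfinj.eq_iff, Prod.mk.injEq, d01]
    have m4 : f (0, 0) ∉ ({f (0, p.1 + p.2), f (1, p.1), f (1, p.2)} : Finset (ZMod (3*v))) := by
      simp [hfinj.eq_iff, Prod.mk.injEq, Prod.ext_iff, d01, Ne.symm hxy]
    show Finset.card (insert (f (0,0)) (insert (f (0, p.1 + p.2)) (insert (f (1, p.1))
      ({f (1, p.2)} : Finset (ZMod (3*v)))))) = 4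
    rw [Finset.card_insert_of_notMem m4, Finset.card_insert_of_notMem m3,
      Finset.card_insert_of_notMem m2, Finset.card_singleton]
  -- the difference multiset of one block
  have hcw : ∀ p ∈ S, codewordDiffs (blk p)
      = (({p.1 + p.2, -(p.1+p.2), p.1 - p.2, -(p.1-p.2)} : Multiset (ZMod v)).map
          fun z => f (0, z))
        + (({p.1, -p.1, p.2, -p.2} : Multiset (ZMod v)).map fun z => f (1, z))
        + (({p.1, -p.1, p.2, -p.2} : Multiset (ZMod v)).map fun z => f (2, z)) := by
    intro p hp
    obtain ⟨hxy, hxmy⟩ := hpair p hp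
    obtain ⟨x, y⟩ := p
    simp only at hxy hxmy ⊢
    have e1 : x + y - x = y := by ring
    have e2 : x + y - y = x := by ring
    have e3 : x - (x + y) = -y := by ring
    have e4 : y - (x + y) = -x := by ring
    have e5 : y - x = -(x - y) := by ring
    rw [show blk (x, y) = ({f (0,0), f (0, x + y), f (1, x), f (1, y)} : Finset (ZMod (3*v)))
      from rfl]
    rw [codewordDiffs_quad _ _ _ _
      (fun h => hxy ((congrArg Prod.snd (hfinj h)).symm))
      (fun h => d01 (congrArg Prod.fst (hfinj h)))
      (fun h => d01 (congrArg Prod.fst (hfinj h)))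
      (fun h => d01 (congrArg Prod.fst (hfinj h)))
      (fun h => d01 (congrArg Prod.fst (hfinj h)))
      (fun h => hxmy (sub_eq_zero_of_eq (congrArg Prod.snd (hfinj h))))]
    simp only [hfsub, Prod.mk_sub_mk, sub_zero, zero_sub, sub_self, h301, e1, e2, e3, e4, e5]
    simp only [Multiset.map_cons, Multiset.map_singleton, Multiset.insert_eq_cons]
    refine Multiset.ext.2 fun a => ?_
    simp [Multiset.count_cons, Multiset.count_singleton]
    ac_rfl
  -- master count of the full bind
  have hmaster : ∀ w : ZMod (3*v),
      (S.val.bind fun p => codewordDiffs (blk p)).count w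
      = (if (e w).1 = 0 then (if (e w).2 ∈ ({0,β,-β} : Set (ZMod v)) then 0 else 1) else 0)
      + (if (e w).1 = 1 then (if (e w).2 ∈ ({0,α,-α} : Set (ZMod v)) then 0 else 1) else 0)
      + (if (e w).1 = 2 then (if (e w).2 ∈ ({0,α,-α} : Set (ZMod v)) then 0 else 1) else 0) := by
    intro w
    rw [Multiset.bind_congr hcw, Multiset.bind_add, Multiset.bind_add]
    rw [← Multiset.map_bind _ _ (fun z => f ((0 : ZMod 3), z)),
        ← Multiset.map_bind _ _ (fun z => f ((1 : ZMod 3), z)),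
        ← Multiset.map_bind _ _ (fun z => f ((2 : ZMod 3), z))]
    rw [Multiset.count_add, Multiset.count_add, hcount, hcount, hcount, h1, h2]
  have hM1 : ∀ w : ZMod (3*v),
      (S.val.bind fun p => codewordDiffs (blk p)).count w ≤ 1 := by
    intro w
    rw [hmaster w]
    rcases zmod3_cases (e w).1 with hc | hc | hc <;>
      simp [hc, d01, d02, d12, d01.symm, d02.symm, d12.symm] <;> split_ifs <;> omega
  -- the code
  refine ⟨S.image blk, ⟨⟨?_, ?_⟩, ?_⟩⟩
  · intro b hb
    obtain ⟨p, hp, rfl⟩ := Finset.mem_image.1 hb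
    exact hcard p hp
  · -- Nodup
    have hle : OOCDiffs (S.image blk) ≤ S.val.bind fun p => codewordDiffs (blk p) := by
      unfold OOCDiffs
      rw [Finset.image_val]
      obtain ⟨u, hu⟩ := Multiset.le_iff_exists_add.1 (Multiset.dedup_le (S.val.map blk))
      calc (Multiset.map blk S.val).dedup.bind codewordDiffs
          ≤ (Multiset.map blk S.val).bind codewordDiffs := by
            conv_rhs => rw [hu, Multiset.add_bind]
            exact Multiset.le_add_right _ _
        _ = S.val.bind fun p => codewordDiffs (blk p) := Multiset.bind_map _ _ _
    refine Multiset.nodup_iff_count_le_one.2 fun w => ?_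
    exact le_trans (Multiset.le_iff_count.1 hle w) (hM1 w)
  · -- leave
    set L : Finset (ZMod 3 × ZMod v) :=
      {(0,0),(0,β),(0,-β),(1,0),(1,α),(1,-α),(2,0),(2,α),(2,-α)} with hL
    have hsub : OOCLeave (S.image blk) ⊆ ↑(L.image fun z => f z) := by
      intro w hw
      simp only [OOCLeave, Set.mem_setOf_eq] at hw
      by_contra hnot
      apply hw
      have heL : e w ∉ L := by
        intro hin
        exact hnot (Finset.mem_coe.2 (Finset.mem_image.2 ⟨e w, hin, hfe w⟩))
      have hone : (S.val.bind fun p => codewordDiffs (blk p)).count w = 1 := by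
        rw [hmaster w]
        rcases zmod3_cases (e w).1 with hc | hc | hc
        · have h2m : (e w).2 ∉ ({0, β, -β} : Set (ZMod v)) := by
            intro hm
            apply heL
            have hew : e w = (0, (e w).2) := Prod.ext hc rfl
            rw [hew]
            simp only [Set.mem_insert_iff, Set.mem_singleton_iff] at hm
            rcases hm with hm | hm | hm <;> rw [hm] <;> simp [hL]
          simp [hc, d01, d02, d12, h2m]
        · have h2m : (e w).2 ∉ ({0, α, -α} : Set (ZMod v)) := by
            intro hm
            apply heL
            have hew : e w = (1, (e w).2) := Prod.ext hc rfl
            rw [hew]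
            simp only [Set.mem_insert_iff, Set.mem_singleton_iff] at hm
            rcases hm with hm | hm | hm <;> rw [hm] <;> simp [hL]
          simp [hc, d01.symm, d12, h2m]
        · have h2m : (e w).2 ∉ ({0, α, -α} : Set (ZMod v)) := by
            intro hm
            apply heL
            have hew : e w = (2, (e w).2) := Prod.ext hc rfl
            rw [hew]
            simp only [Set.mem_insert_iff, Set.mem_singleton_iff] at hm
            rcases hm with hm | hm | hm <;> rw [hm] <;> simp [hL]
          simp [hc, d02.symm, d12.symm, h2m]
      have hmem : w ∈ S.val.bind fun p => codewordDiffs (blk p) := by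
        rw [← Multiset.count_pos, hone]; omega
      obtain ⟨p, hp, hwp⟩ := Multiset.mem_bind.1 hmem
      exact Multiset.mem_bind.2 ⟨blk p,
        Finset.mem_def.1 (Finset.mem_image_of_mem blk (Finset.mem_def.2 hp)), hwp⟩
    have hLcard : L.card ≤ 9 := by
      refine le_trans (Finset.card_insert_le _ _) (Nat.succ_le_succ ?_)
      refine le_trans (Finset.card_insert_le _ _) (Nat.succ_le_succ ?_)
      refine le_trans (Finset.card_insert_le _ _) (Nat.succ_le_succ ?_)
      refine le_trans (Finset.card_insert_le _ _) (Nat.succ_le_succ ?_)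
      refine le_trans (Finset.card_insert_le _ _) (Nat.succ_le_succ ?_)
      refine le_trans (Finset.card_insert_le _ _) (Nat.succ_le_succ ?_)
      refine le_trans (Finset.card_insert_le _ _) (Nat.succ_le_succ ?_)
      refine le_trans (Finset.card_insert_le _ _) (Nat.succ_le_succ ?_)
      simp
    calc (OOCLeave (S.image blk)).ncard
        ≤ (↑(L.image fun z => f z) : Set (ZMod (3*v))).ncard :=
          Set.ncard_le_ncard hsub ((L.image fun z => f z).finite_toSet)
      _ = (L.image fun z => f z).card := Set.ncard_coe_finset _
      _ ≤ L.card := Finset.card_image_le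
      _ ≤ 9 := hLcard
      _ ≤ 4 * (4 - 1) := by norm_num

theorem stmt18 (v : ℕ) (hgcd : Nat.gcd v 6 = 1)
    (h : (∃ S : Finset (ZMod v × ZMod v), IsPS v S) ∨
      (∃ α β : ZMod v, α ≠ 0 ∧ β ≠ 0 ∧
        ∃ S : Finset (ZMod v × ZMod v), IsAPS v α β S)) :
    ∃ B : Finset (Finset (ZMod (3 * v))), IsMaximumOOC (3 * v) 4 B := by
  have hco : Nat.Coprime 3 v := (Nat.Coprime.coprime_dvd_right (by norm_num) hgcd).symm
  rcases h with ⟨S, hS⟩ | ⟨α, β, hα, hβ, S, hS⟩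
  · apply main_construction v hco 0 0 S
    have h0 : ({0, (0:ZMod v), -0} : Set (ZMod v)) = {0} := by simp
    rw [IsPS] at hS
    rw [show (({0,(0:ZMod v),-0} : Set (ZMod v))) = ({0} : Set (ZMod v)) from h0]
    exact hS
  · exact main_construction v hco α β S hS
end
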